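/- arXiv:2002.08576 — 4 statements merged into one kernel-verified Lean document; each statement's English description precedes it below -/
import Mathlib

section
/- For every tangent plane π, if μ_π denotes the number of black points contained in π, then |S| = μ_π·(q^2-q)/2 + (q^4+2q^2+q)/2. In particular, the number of black points in a tangent plane is the same for all tangent planes. -/
open Submodule Set

/-- The points of `PG(3,q)`: the 1-dimensional subspaces of a 4-dimensional
vector space over the field `K` of order `q`. -/
def pgPoint (K : Type) [Field K] : Set (Submodule K (Fin 4 → K)) :=
  {W | Module.finrank K ↥W = 1}

/-- The lines of `PG(3,q)`: the 2-dimensional subspaces. -/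
def pgLine (K : Type) [Field K] : Set (Submodule K (Fin 4 → K)) :=
  {W | Module.finrank K ↥W = 2}

/-- The planes of `PG(3,q)`: the 3-dimensional subspaces. -/
def pgPlane (K : Type) [Field K] : Set (Submodule K (Fin 4 → K)) :=
  {W | Module.finrank K ↥W = 3}

/-- The lines of the family `S` passing through the point `p`. -/
def linesThru (K : Type) [Field K] (S : Set (Submodule K (Fin 4 → K)))
    (p : Submodule K (Fin 4 → K)) : Set (Submodule K (Fin 4 → K)) :=
  {l | l ∈ S ∧ p ≤ l}

/-- The lines of the family `S` contained in the plane `π` (the set `S_π`). -/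
def linesIn (K : Type) [Field K] (S : Set (Submodule K (Fin 4 → K)))
    (π : Submodule K (Fin 4 → K)) : Set (Submodule K (Fin 4 → K)) :=
  {l | l ∈ S ∧ l ≤ π}

/-- The lines of `S_π` belonging to the pencil of lines of the plane `π`
through the point `p`. -/
def pencilS (K : Type) [Field K] (S : Set (Submodule K (Fin 4 → K)))
    (p π : Submodule K (Fin 4 → K)) : Set (Submodule K (Fin 4 → K)) :=
  {l | l ∈ S ∧ p ≤ l ∧ l ≤ π}

/-- Property (P1): every point lies on exactly `q(q+1)/2` or exactly `q^2`
lines of `S`, and both numbers are attained. -/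
def P1 (K : Type) [Field K] (S : Set (Submodule K (Fin 4 → K))) (q : ℕ) : Prop :=
  (∀ p ∈ pgPoint K, (linesThru K S p).ncard = q * (q + 1) / 2 ∨
      (linesThru K S p).ncard = q ^ 2) ∧
  (∃ p ∈ pgPoint K, (linesThru K S p).ncard = q * (q + 1) / 2) ∧
  (∃ p ∈ pgPoint K, (linesThru K S p).ncard = q ^ 2)

/-- Property (P2): every plane contains exactly `q(q+1)/2` or exactly `q^2`
lines of `S`. -/
def P2 (K : Type) [Field K] (S : Set (Submodule K (Fin 4 → K))) (q : ℕ) : Prop :=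
  ∀ π ∈ pgPlane K, (linesIn K S π).ncard = q * (q + 1) / 2 ∨
    (linesIn K S π).ncard = q ^ 2

/-- Property (P2a): if a plane contains `q^2` lines of `S`, then every pencil of
lines in that plane contains `0` or `q` lines of `S`. -/
def P2a (K : Type) [Field K] (S : Set (Submodule K (Fin 4 → K))) (q : ℕ) : Prop :=
  ∀ π ∈ pgPlane K, (linesIn K S π).ncard = q ^ 2 →
    ∀ p ∈ pgPoint K, p ≤ π →
      (pencilS K S p π).ncard = 0 ∨ (pencilS K S p π).ncard = q

/-- Property (P2b): if a plane contains `q(q+1)/2` lines of `S`, then every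
pencil of lines in that plane contains `(q-1)/2`, `(q+1)/2` or `q` lines of `S`. -/
def P2b (K : Type) [Field K] (S : Set (Submodule K (Fin 4 → K))) (q : ℕ) : Prop :=
  ∀ π ∈ pgPlane K, (linesIn K S π).ncard = q * (q + 1) / 2 →
    ∀ p ∈ pgPoint K, p ≤ π →
      (pencilS K S p π).ncard = (q - 1) / 2 ∨
      (pencilS K S p π).ncard = (q + 1) / 2 ∨
      (pencilS K S p π).ncard = q

/-- A point is black if it lies on exactly `q^2` lines of `S`. -/
def IsBlack (K : Type) [Field K] (S : Set (Submodule K (Fin 4 → K))) (q : ℕ)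
    (p : Submodule K (Fin 4 → K)) : Prop :=
  p ∈ pgPoint K ∧ (linesThru K S p).ncard = q ^ 2

/-- A plane is tangent if it contains exactly `q^2` lines of `S`. -/
def IsTangent (K : Type) [Field K] (S : Set (Submodule K (Fin 4 → K))) (q : ℕ)
    (π : Submodule K (Fin 4 → K)) : Prop :=
  π ∈ pgPlane K ∧ (linesIn K S π).ncard = q ^ 2

/-- A plane is secant if it contains exactly `q(q+1)/2` lines of `S`. -/
def IsSecant (K : Type) [Field K] (S : Set (Submodule K (Fin 4 → K))) (q : ℕ)
    (π : Submodule K (Fin 4 → K)) : Prop :=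
  π ∈ pgPlane K ∧ (linesIn K S π).ncard = q * (q + 1) / 2

/-- For a secant plane `π`, the set `α(π)` of points of `π` lying on exactly
`(q-1)/2` lines of `S_π`. -/
def alphaSet (K : Type) [Field K] (S : Set (Submodule K (Fin 4 → K))) (q : ℕ)
    (π : Submodule K (Fin 4 → K)) : Set (Submodule K (Fin 4 → K)) :=
  {p | p ∈ pgPoint K ∧ p ≤ π ∧ (pencilS K S p π).ncard = (q - 1) / 2}

/-- For a secant plane `π`, the set `β(π)` of points of `π` lying on exactly
`(q+1)/2` lines of `S_π`. -/
def betaSet (K : Type) [Field K] (S : Set (Submodule K (Fin 4 → K))) (q : ℕ)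
    (π : Submodule K (Fin 4 → K)) : Set (Submodule K (Fin 4 → K)) :=
  {p | p ∈ pgPoint K ∧ p ≤ π ∧ (pencilS K S p π).ncard = (q + 1) / 2}

/-- For a secant plane `π`, the set `γ(π)` of points of `π` lying on exactly
`q` lines of `S_π`. -/
def gammaSet (K : Type) [Field K] (S : Set (Submodule K (Fin 4 → K))) (q : ℕ)
    (π : Submodule K (Fin 4 → K)) : Set (Submodule K (Fin 4 → K)) :=
  {p | p ∈ pgPoint K ∧ p ≤ π ∧ (pencilS K S p π).ncard = q}

section Aux

variable {K : Type} [Field K] [Fintype K]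

lemma submodule_finite : Finite (Submodule K (Fin 4 → K)) :=
  Finite.of_injective (fun W => (W : Set (Fin 4 → K))) SetLike.coe_injective

lemma point_count (W : Submodule K (Fin 4 → K)) :
    {p : Submodule K (Fin 4 → K) | Module.finrank K p = 1 ∧ p ≤ W}.ncard
        * (Fintype.card K - 1) + 1 = Fintype.card K ^ Module.finrank K W := by
  classical
  haveI := @submodule_finite K _ _
  set Pset : Set (Submodule K (Fin 4 → K)) :=
    {p : Submodule K (Fin 4 → K) | Module.finrank K p = 1 ∧ p ≤ W} with hPset
  have hfin : Pset.Finite := Set.toFinite _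
  set P : Finset (Submodule K (Fin 4 → K)) := hfin.toFinset with hP
  set A : Finset (Fin 4 → K) := Finset.univ.filter (fun v => v ∈ W ∧ v ≠ 0) with hA
  have hmap : ∀ v ∈ A, Submodule.span K {v} ∈ P := by
    intro v hv
    rw [hA, Finset.mem_filter] at hv
    rw [hP, Set.Finite.mem_toFinset, hPset]
    exact ⟨finrank_span_singleton hv.2.2, span_le.2 (Set.singleton_subset_iff.2 hv.2.1)⟩
  have hcount := Finset.card_eq_sum_card_fiberwise hmap
  have hfiber : ∀ p ∈ P, (A.filter (fun v => Submodule.span K {v} = p)).card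
      = Fintype.card K - 1 := by
    intro p hp
    rw [hP, Set.Finite.mem_toFinset, hPset] at hp
    have heq : (A.filter (fun v => Submodule.span K {v} = p))
        = (Finset.univ.filter (fun v => v ∈ p)).erase 0 := by
      ext v
      simp only [hA, Finset.filter_filter, Finset.mem_filter, Finset.mem_erase,
        Finset.mem_univ, true_and]
      constructor
      · rintro ⟨⟨hvW, hv0⟩, hsp⟩
        exact ⟨hv0, hsp ▸ Submodule.mem_span_singleton_self v⟩
      · rintro ⟨hv0, hvp⟩
        have hle : Submodule.span K {v} ≤ p := span_le.2 (Set.singleton_subset_iff.2 hvp)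
        have : Submodule.span K {v} = p :=
          Submodule.eq_of_le_of_finrank_eq hle (by rw [finrank_span_singleton hv0, hp.1])
        exact ⟨⟨hp.2 hvp, hv0⟩, this⟩
    rw [heq, Finset.card_erase_of_mem (by simp [Submodule.zero_mem])]
    have h2 : (Finset.univ.filter (fun v => v ∈ p)).card = Fintype.card p := by
      rw [Fintype.card_subtype]
    rw [h2, Module.card_eq_pow_finrank (K := K), hp.1, pow_one]
  have hsum : A.card = P.card * (Fintype.card K - 1) := by
    rw [hcount, Finset.sum_congr rfl hfiber, Finset.sum_const, smul_eq_mul]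
  have hAcard : A.card + 1 = Fintype.card K ^ Module.finrank K W := by
    have heq : A = (Finset.univ.filter (fun v => v ∈ W)).erase 0 := by
      ext v
      simp only [hA, Finset.mem_filter, Finset.mem_erase, Finset.mem_univ, true_and]
      tauto
    have h0 : (0 : Fin 4 → K) ∈ Finset.univ.filter (fun v => v ∈ W) := by
      simp [Submodule.zero_mem]
    have h2 : (Finset.univ.filter (fun v => v ∈ W)).card = Fintype.card W := by
      rw [Fintype.card_subtype]
    rw [heq, Finset.card_erase_of_mem h0, h2, Module.card_eq_pow_finrank (K := K)]
    have h1 : 0 < Fintype.card K ^ Module.finrank K W := pow_pos Fintype.card_pos _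
    omega
  have hncard : Pset.ncard = P.card := Set.ncard_eq_toFinset_card _ hfin
  rw [hncard, ← hsum, hAcard]

lemma inf_rank_one (l π : Submodule K (Fin 4 → K)) (hl : Module.finrank K l = 2)
    (hπ : Module.finrank K π = 3) (hn : ¬ l ≤ π) : Module.finrank K ↥(l ⊓ π) = 1 := by
  have hdim := Submodule.finrank_sup_add_finrank_inf_eq l π
  have hle : Module.finrank K ↥(l ⊔ π) ≤ 4 := by
    have := Submodule.finrank_le (l ⊔ π)
    simpa [Module.finrank_fin_fun] using this
  have hlt : π < l ⊔ π := by
    refine lt_of_le_of_ne le_sup_right ?_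
    intro h
    exact hn (h ▸ le_sup_left)
  have := Submodule.finrank_lt_finrank_of_lt hlt
  omega

lemma inf_point_set (l π : Submodule K (Fin 4 → K)) (hl : Module.finrank K l = 2)
    (hπ : Module.finrank K π = 3) (hn : ¬ l ≤ π) :
    ∀ p : Submodule K (Fin 4 → K), (Module.finrank K p = 1 ∧ p ≤ l ∧ p ≤ π) ↔ p = l ⊓ π := by
  have h1 := inf_rank_one l π hl hπ hn
  intro p
  constructor
  · rintro ⟨hp1, hpl, hpπ⟩
    exact Submodule.eq_of_le_of_finrank_eq (le_inf hpl hpπ) (by rw [hp1, h1])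
  · rintro rfl
    exact ⟨h1, inf_le_left, inf_le_right⟩

lemma arith_final (k μ r X : ℕ)
    (hN : μ + r = (2*k+1)^2 + (2*k+1) + 1)
    (hE : X + (2*k+1)^2 * ((2*k+1)+1) = μ * (2*k+1)^2 + r * ((2*k+1)*(k+1))) :
    X + (2*k+1)^2 = μ * (((2*k+1)^2 - (2*k+1))/2)
      + ((2*k+1)^4 + 2*(2*k+1)^2 + (2*k+1))/2 := by
  have e1 : ((2*k+1)^2 - (2*k+1))/2 = (2*k+1)*k := by
    have h : (2*k+1)^2 = (2*k+1) + 2*((2*k+1)*k) := by ring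
    omega
  have e2 : ((2*k+1)^4 + 2*(2*k+1)^2 + (2*k+1))/2
      = (2*k+1)*(k+1)*(4*k^2+2*k+1) + (2*k+1)^2 := by
    have h : (2*k+1)^4 + 2*(2*k+1)^2 + (2*k+1)
        = 2*((2*k+1)*(k+1)*(4*k^2+2*k+1) + (2*k+1)^2) := by ring
    omega
  rw [e1, e2]
  zify at hN hE ⊢
  linear_combination hE + (2*(k:ℤ)^2+3*k+1) * hN

end Aux

/-- For every tangent plane `π`, with `μ_π` the number of black
points of `π`, `|S| = μ_π(q^2-q)/2 + (q^4+2q^2+q)/2`; in particular the number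
of black points is the same in all tangent planes. -/



theorem stmt_15 (K : Type) [Field K] [Fintype K] (q : ℕ) (hq : Fintype.card K = q)
    (hq_odd : Odd q) (S : Set (Submodule K (Fin 4 → K))) (hS : S ⊆ pgLine K)
    (h1 : P1 K S q) (h2 : P2 K S q) (h2a : P2a K S q) (h2b : P2b K S q) :
    (∀ π, IsTangent K S q π →
      S.ncard = {p | IsBlack K S q p ∧ p ≤ π}.ncard * ((q ^ 2 - q) / 2) +
        (q ^ 4 + 2 * q ^ 2 + q) / 2) ∧
    (∀ π π', IsTangent K S q π → IsTangent K S q π' →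
      {p | IsBlack K S q p ∧ p ≤ π}.ncard =
        {p | IsBlack K S q p ∧ p ≤ π'}.ncard) := by
  classical
  haveI : Finite (Submodule K (Fin 4 → K)) := submodule_finite
  obtain ⟨k, hk⟩ := hq_odd
  rw [Nat.two_mul] at hk
  have hk' : q = 2 * k + 1 := by omega
  subst hk'
  have hcard2 : 2 ≤ Fintype.card K := Fintype.one_lt_card
  have hk1 : 1 ≤ k := by omega
  have main : ∀ π, IsTangent K S (2 * k + 1) π →
      S.ncard = {p | IsBlack K S (2 * k + 1) p ∧ p ≤ π}.ncard
          * (((2 * k + 1) ^ 2 - (2 * k + 1)) / 2) +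
        ((2 * k + 1) ^ 4 + 2 * (2 * k + 1) ^ 2 + (2 * k + 1)) / 2 := by
    intro π hT
    obtain ⟨hπ3, hπq2⟩ := hT
    have hπ3' : Module.finrank K ↥π = 3 := hπ3
    -- the finset of points of π
    set Pts : Finset (Submodule K (Fin 4 → K)) :=
      (Set.toFinite {p : Submodule K (Fin 4 → K) |
        Module.finrank K ↥p = 1 ∧ p ≤ π}).toFinset with hPtsdef
    have hmemP : ∀ p, p ∈ Pts ↔ (Module.finrank K ↥p = 1 ∧ p ≤ π) := by
      intro p; simp [hPtsdef]
    -- the finset of lines of S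
    set SF : Finset (Submodule K (Fin 4 → K)) := (Set.toFinite S).toFinset with hSFdef
    have hmemS : ∀ l, l ∈ SF ↔ l ∈ S := by
      intro l; rw [hSFdef, Set.Finite.mem_toFinset]
    set Lin : Finset (Submodule K (Fin 4 → K)) := SF.filter (fun l => l ≤ π) with hLindef
    set Lout : Finset (Submodule K (Fin 4 → K)) := SF.filter (fun l => ¬ l ≤ π) with hLoutdef
    have hS_split : Lin.card + Lout.card = SF.card :=
      Finset.card_filter_add_card_filter_not _
    have hSncard : S.ncard = SF.card := Set.ncard_eq_toFinset_card _ _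
    -- number of lines in π
    have hLin : Lin.card = (2 * k + 1) ^ 2 := by
      rw [← hπq2]
      have : linesIn K S π = ↑Lin := by
        ext l; simp [linesIn, hLindef, hmemS]
      rw [this, Set.ncard_coe_finset]
    -- number of points of π
    have hPtscard : Pts.card = (2 * k + 1) ^ 2 + (2 * k + 1) + 1 := by
      have hpc := point_count (K := K) π
      rw [hπ3', hq] at hpc
      have hconv : {p : Submodule K (Fin 4 → K) |
          Module.finrank K ↥p = 1 ∧ p ≤ π}.ncard = Pts.card :=
        Set.ncard_eq_toFinset_card _ _
      rw [hconv] at hpc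
      have hx : (2 * k + 1) - 1 = 2 * k := by omega
      rw [hx] at hpc
      have hr : ((2 * k + 1) ^ 2 + (2 * k + 1) + 1) * (2 * k) + 1 = (2 * k + 1) ^ 3 := by ring
      have h2k : 0 < 2 * k := by omega
      have := hpc.trans hr.symm
      exact Nat.eq_of_mul_eq_mul_right h2k (by omega)
    -- number of points on a line
    have hA2 : ∀ l ∈ Lin, (Pts.filter (fun p => p ≤ l)).card = (2 * k + 1) + 1 := by
      intro l hl
      rw [hLindef, Finset.mem_filter] at hl
      have hl2 : Module.finrank K ↥l = 2 := hS ((hmemS l).1 hl.1)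
      have hset : (Pts.filter (fun p => p ≤ l))
          = (Set.toFinite {p : Submodule K (Fin 4 → K) |
              Module.finrank K ↥p = 1 ∧ p ≤ l}).toFinset := by
        ext p
        simp only [Finset.mem_filter, hmemP, Set.Finite.mem_toFinset, Set.mem_setOf_eq]
        exact ⟨fun h => ⟨h.1.1, h.2⟩, fun h => ⟨⟨h.1, h.2.trans hl.2⟩, h.2⟩⟩
      have hpc := point_count (K := K) l
      rw [hl2, hq] at hpc
      have hconv : {p : Submodule K (Fin 4 → K) |
          Module.finrank K ↥p = 1 ∧ p ≤ l}.ncard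
          = (Set.toFinite {p : Submodule K (Fin 4 → K) |
              Module.finrank K ↥p = 1 ∧ p ≤ l}).toFinset.card :=
        Set.ncard_eq_toFinset_card _ _
      rw [hset, ← hconv]
      have hx : (2 * k + 1) - 1 = 2 * k := by omega
      rw [hx] at hpc
      have hr : ((2 * k + 1) + 1) * (2 * k) + 1 = (2 * k + 1) ^ 2 := by ring
      have h2k : 0 < 2 * k := by omega
      exact Nat.eq_of_mul_eq_mul_right h2k (by omega)
    -- pencils as finsets
    have hA1 : ∀ p, (Lin.filter (fun l => p ≤ l)).card = (pencilS K S p π).ncard := by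
      intro p
      have : pencilS K S p π = ↑(Lin.filter (fun l => p ≤ l)) := by
        ext l; simp only [pencilS, Set.mem_setOf_eq, Finset.coe_filter, hLindef,
          Finset.mem_filter, hmemS]
        tauto
      rw [this, Set.ncard_coe_finset]
    -- double count 1: sum of pencil counts
    have hsum_pencil : ∑ p ∈ Pts, (pencilS K S p π).ncard
        = (2 * k + 1) ^ 2 * ((2 * k + 1) + 1) := by
      have hstep : ∑ p ∈ Pts, (Lin.filter (fun l => p ≤ l)).card
          = ∑ l ∈ Lin, (Pts.filter (fun p => p ≤ l)).card := by
        simp only [Finset.card_filter]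
        exact Finset.sum_comm
      calc ∑ p ∈ Pts, (pencilS K S p π).ncard
          = ∑ p ∈ Pts, (Lin.filter (fun l => p ≤ l)).card := by
            exact Finset.sum_congr rfl (fun p _ => (hA1 p).symm)
        _ = ∑ l ∈ Lin, (Pts.filter (fun p => p ≤ l)).card := hstep
        _ = ∑ l ∈ Lin, ((2 * k + 1) + 1) := Finset.sum_congr rfl hA2
        _ = (2 * k + 1) ^ 2 * ((2 * k + 1) + 1) := by
            rw [Finset.sum_const, smul_eq_mul, hLin]
    -- double count 2: lines not in π, fibered over their intersection point
    have hmapout : ∀ l ∈ Lout, l ⊓ π ∈ Pts := by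
      intro l hl
      rw [hLoutdef, Finset.mem_filter] at hl
      have hl2 : Module.finrank K ↥l = 2 := hS ((hmemS l).1 hl.1)
      exact (hmemP _).2 ⟨inf_rank_one l π hl2 hπ3' hl.2, inf_le_right⟩
    have hLoutsum : Lout.card = ∑ p ∈ Pts, (Lout.filter (fun l => l ⊓ π = p)).card :=
      Finset.card_eq_sum_card_fiberwise hmapout
    have hfiber_eq : ∀ p ∈ Pts, (Lout.filter (fun l => l ⊓ π = p))
        = (Lout.filter (fun l => p ≤ l)) := by
      intro p hp
      rw [hmemP] at hp
      ext l
      simp only [Finset.mem_filter, hLoutdef, hmemS]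
      constructor
      · rintro ⟨hl, rfl⟩
        exact ⟨hl, inf_le_left⟩
      · rintro ⟨⟨hlS, hlπ⟩, hpl⟩
        have hl2 : Module.finrank K ↥l = 2 := hS hlS
        exact ⟨⟨hlS, hlπ⟩,
          ((inf_point_set l π hl2 hπ3' hlπ p).1 ⟨hp.1, hpl, hp.2⟩).symm⟩
    -- lines of S through p split into pencil lines and outside lines
    have hthru : ∀ p, (Lout.filter (fun l => p ≤ l)).card + (pencilS K S p π).ncard
        = (linesThru K S p).ncard := by
      intro p
      have h1' : linesThru K S p = ↑(SF.filter (fun l => p ≤ l)) := by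
        ext l; simp [linesThru, hmemS]
      rw [h1', Set.ncard_coe_finset, ← hA1 p]
      have e1 : Lout.filter (fun l => p ≤ l)
          = (SF.filter (fun l => p ≤ l)).filter (fun l => ¬ l ≤ π) := by
        ext l
        simp only [Finset.mem_filter, hLoutdef]
        tauto
      have e2 : Lin.filter (fun l => p ≤ l)
          = (SF.filter (fun l => p ≤ l)).filter (fun l => l ≤ π) := by
        ext l
        simp only [Finset.mem_filter, hLindef]
        tauto
      rw [e1, e2, add_comm]
      exact Finset.card_filter_add_card_filter_not _
    -- black points of π
    set Blk : Finset (Submodule K (Fin 4 → K)) :=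
      Pts.filter (fun p => (linesThru K S p).ncard = (2 * k + 1) ^ 2) with hBlkdef
    have hmu : {p | IsBlack K S (2 * k + 1) p ∧ p ≤ π}.ncard = Blk.card := by
      have : {p | IsBlack K S (2 * k + 1) p ∧ p ≤ π} = ↑Blk := by
        ext p
        simp only [Set.mem_setOf_eq, hBlkdef, Finset.coe_filter, hmemP, IsBlack, pgPoint]
        tauto
      rw [this, Set.ncard_coe_finset]
    have hBlkle : Blk.card ≤ Pts.card := Finset.card_filter_le _ _
    have hhalf : (2 * k + 1) * ((2 * k + 1) + 1) / 2 = (2 * k + 1) * (k + 1) := by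
      have h : (2 * k + 1) * ((2 * k + 1) + 1) = 2 * ((2 * k + 1) * (k + 1)) := by ring
      omega
    -- sum of numbers of lines of S through the points of π
    have hsum_t : ∑ p ∈ Pts, (linesThru K S p).ncard
        = Blk.card * (2 * k + 1) ^ 2
          + (Pts.card - Blk.card) * ((2 * k + 1) * (k + 1)) := by
      have hsplit := Finset.sum_filter_add_sum_filter_not Pts
        (fun p => (linesThru K S p).ncard = (2 * k + 1) ^ 2)
        (fun p => (linesThru K S p).ncard)
      have hB : ∑ p ∈ Blk, (linesThru K S p).ncard = Blk.card * (2 * k + 1) ^ 2 := by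
        rw [Finset.sum_congr rfl (fun p hp => (Finset.mem_filter.1 hp).2),
          Finset.sum_const, smul_eq_mul]
      have hcards := Finset.card_filter_add_card_filter_not (s := Pts)
        (p := fun p => (linesThru K S p).ncard = (2 * k + 1) ^ 2)
      rw [← hBlkdef] at hcards hsplit
      have hNB : ∑ p ∈ Pts.filter (fun p => ¬ (linesThru K S p).ncard = (2 * k + 1) ^ 2),
          (linesThru K S p).ncard = (Pts.card - Blk.card) * ((2 * k + 1) * (k + 1)) := by
        have hval : ∀ p ∈ Pts.filter (fun p => ¬ (linesThru K S p).ncard = (2 * k + 1) ^ 2),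
            (linesThru K S p).ncard = (2 * k + 1) * (k + 1) := by
          intro p hp
          rw [Finset.mem_filter] at hp
          have hpt : p ∈ pgPoint K := ((hmemP p).1 hp.1).1
          rcases h1.1 p hpt with h | h
          · rw [h, hhalf]
          · exact absurd h hp.2
        rw [Finset.sum_congr rfl hval, Finset.sum_const, smul_eq_mul]
        congr 1
        omega
      omega
    -- combined double counting
    have hcomb : ∑ p ∈ Pts, (linesThru K S p).ncard
        = Lout.card + (2 * k + 1) ^ 2 * ((2 * k + 1) + 1) := by
      have h1c : ∑ p ∈ Pts, (Finset.filter (fun l => l ⊓ π = p) Lout).card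
          = ∑ p ∈ Pts, (Finset.filter (fun l => p ≤ l) Lout).card :=
        Finset.sum_congr rfl (fun p hp => by rw [hfiber_eq p hp])
      calc ∑ p ∈ Pts, (linesThru K S p).ncard
          = ∑ p ∈ Pts, ((Finset.filter (fun l => p ≤ l) Lout).card
              + (pencilS K S p π).ncard) :=
            Finset.sum_congr rfl (fun p _ => (hthru p).symm)
        _ = ∑ p ∈ Pts, (Finset.filter (fun l => p ≤ l) Lout).card
              + ∑ p ∈ Pts, (pencilS K S p π).ncard := Finset.sum_add_distrib
        _ = Lout.card + (2 * k + 1) ^ 2 * ((2 * k + 1) + 1) := by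
            rw [← h1c, ← hLoutsum, hsum_pencil]
    rw [hmu, hSncard, ← hS_split, hLin]
    have harith := arith_final k Blk.card (Pts.card - Blk.card) Lout.card
      (by omega) (by omega)
    omega
  refine ⟨main, ?_⟩
  intro π π' hT hT'
  have e1 := main π hT
  have e2 := main π' hT'
  have hc : ((2 * k + 1) ^ 2 - (2 * k + 1)) / 2 = (2 * k + 1) * k := by
    have h : (2 * k + 1) ^ 2 = (2 * k + 1) + 2 * ((2 * k + 1) * k) := by ring
    omega
  rw [hc] at e1 e2
  have hcpos : 0 < (2 * k + 1) * k := by positivity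
  exact Nat.eq_of_mul_eq_mul_right hcpos (by omega)
end

section
/- If π is a tangent plane and π' is a secant plane, then the number of black points contained in π equals the number of black points contained in π' plus q. -/
open Submodule Set

section AuxStmt16

variable {K : Type} [Field K] [Fintype K]

private instance finiteSubmoduleAux : Finite (Submodule K (Fin 4 → K)) :=
  Finite.of_injective ((↑) : Submodule K (Fin 4 → K) → Set (Fin 4 → K))
    SetLike.coe_injective

/-- Number of points in a subspace `W`, multiplied by `q - 1`. -/
private lemma aux_ncard_points_le (q : ℕ) (hq : Fintype.card K = q)
    (W : Submodule K (Fin 4 → K)) :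
    {p | p ∈ pgPoint K ∧ p ≤ W}.ncard * (q - 1)
      = q ^ (Module.finrank K ↥W) - 1 := by
  classical
  have hcard : ∀ U : Submodule K (Fin 4 → K),
      Nat.card ↥U = q ^ Module.finrank K ↥U := by
    intro U
    rw [Nat.card_eq_fintype_card, Module.card_eq_pow_finrank (K := K), hq]
  have hzero : ∀ U : Submodule K (Fin 4 → K),
      ((U : Set (Fin 4 → K)) \ {0}).ncard = q ^ Module.finrank K ↥U - 1 := by
    intro U
    rw [Set.ncard_diff_singleton_of_mem U.zero_mem]
    congr 1
    rw [← hcard U, ← Nat.card_coe_set_eq]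
    rfl
  set P : Set (Submodule K (Fin 4 → K)) := {p | p ∈ pgPoint K ∧ p ≤ W} with hP
  set T : Set (Fin 4 → K) := (W : Set (Fin 4 → K)) \ {0} with hTdef
  have hPfin : P.Finite := Set.toFinite _
  have hTfin : T.Finite := Set.toFinite _
  have hmem : ∀ v ∈ hTfin.toFinset, Submodule.span K {v} ∈ hPfin.toFinset := by
    intro v hv
    rw [Set.Finite.mem_toFinset] at hv ⊢
    obtain ⟨hvW, hv0⟩ := hv
    rw [Set.mem_singleton_iff] at hv0
    refine ⟨finrank_span_singleton hv0, ?_⟩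
    rw [Submodule.span_le, Set.singleton_subset_iff]
    exact hvW
  have hfib : ∀ p ∈ hPfin.toFinset,
      (hTfin.toFinset.filter (fun v => Submodule.span K {v} = p)).card = q - 1 := by
    intro p hp
    rw [Set.Finite.mem_toFinset] at hp
    obtain ⟨hp1, hpW⟩ := hp
    have hset : (hTfin.toFinset.filter (fun v => Submodule.span K {v} = p))
        = (Set.toFinite ((p : Set (Fin 4 → K)) \ {0})).toFinset := by
      ext v
      simp only [Finset.mem_filter, Set.Finite.mem_toFinset, hTdef, Set.mem_diff,
        Set.mem_singleton_iff, SetLike.mem_coe]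
      constructor
      · rintro ⟨⟨hvW, hv0⟩, rfl⟩
        exact ⟨Submodule.mem_span_singleton_self v, hv0⟩
      · rintro ⟨hvp, hv0⟩
        refine ⟨⟨hpW hvp, hv0⟩, ?_⟩
        apply Submodule.eq_of_le_of_finrank_le
        · rw [Submodule.span_le, Set.singleton_subset_iff]
          exact hvp
        · rw [hp1, finrank_span_singleton hv0]
    rw [hset, ← Set.ncard_eq_toFinset_card _, hzero p, hp1, pow_one]
  have hT : T.ncard = hPfin.toFinset.card * (q - 1) := by
    rw [Set.ncard_eq_toFinset_card _ hTfin,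
      Finset.card_eq_sum_card_fiberwise hmem, Finset.sum_congr rfl hfib,
      Finset.sum_const, smul_eq_mul]
  rw [← Set.ncard_eq_toFinset_card _ hPfin] at hT
  rw [← hT, hTdef, hzero W]

private lemma aux_point_eq {p p' : Submodule K (Fin 4 → K)}
    (hp : p ∈ pgPoint K) (hp' : p' ∈ pgPoint K) (h : p ≤ p') : p = p' :=
  Submodule.eq_of_le_of_finrank_le h (by rw [hp, hp'])

/-- A line not contained in a plane meets it in a point. -/
private lemma aux_inf_point {l π : Submodule K (Fin 4 → K)}
    (hl : l ∈ pgLine K) (hπ : π ∈ pgPlane K) (hn : ¬ l ≤ π) :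
    l ⊓ π ∈ pgPoint K := by
  have hfr : Module.finrank K (Fin 4 → K) = 4 := Module.finrank_fin_fun K
  have h1 := Submodule.finrank_sup_add_finrank_inf_eq l π
  have h2 : Module.finrank K ↥(l ⊔ π) ≤ 4 := by
    have := Submodule.finrank_le (l ⊔ π)
    rwa [hfr] at this
  have h3 : π < l ⊔ π := by
    refine lt_of_le_of_ne le_sup_right (fun h => hn ?_)
    rw [h]
    exact le_sup_left
  have h4 : Module.finrank K ↥π < Module.finrank K ↥(l ⊔ π) :=
    Submodule.finrank_lt_finrank_of_lt h3
  rw [hπ] at h4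
  rw [hl, hπ] at h1
  show Module.finrank K ↥(l ⊓ π) = 1
  omega
set_option linter.unusedSectionVars false

/-- A line has exactly `q + 1` points. -/
private lemma aux_points_on_line (q : ℕ) (hq : Fintype.card K = q) (hq2 : 2 ≤ q)
    {l : Submodule K (Fin 4 → K)} (hl : l ∈ pgLine K) :
    {p | p ∈ pgPoint K ∧ p ≤ l}.ncard = q + 1 := by
  have h := aux_ncard_points_le q hq l
  rw [show Module.finrank K ↥l = 2 from hl] at h
  have h2 : q ^ 2 - 1 = (q + 1) * (q - 1) := by
    obtain ⟨r, rfl⟩ := Nat.exists_eq_add_of_le hq2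
    have e1 : 2 + r - 1 = r + 1 := by omega
    rw [e1]
    have e2 : (2 + r) ^ 2 = (2 + r + 1) * (r + 1) + 1 := by ring
    omega
  rw [h2] at h
  exact Nat.eq_of_mul_eq_mul_right (by omega) h

/-- Master count: summing `|linesThru p|` over the points of a plane. -/
private lemma aux_sum_linesThru (q : ℕ) (hq : Fintype.card K = q) (hq2 : 2 ≤ q)
    (S : Set (Submodule K (Fin 4 → K))) (hS : S ⊆ pgLine K)
    {π : Submodule K (Fin 4 → K)} (hπ : π ∈ pgPlane K) :
    ∑ p ∈ (Set.toFinite {p | p ∈ pgPoint K ∧ p ≤ π}).toFinset,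
        (linesThru K S p).ncard
      = S.ncard + q * (linesIn K S π).ncard := by
  classical
  set sP := (Set.toFinite {p | p ∈ pgPoint K ∧ p ≤ π}).toFinset with hsP
  set sL := (Set.toFinite (linesIn K S π)).toFinset with hsL
  set sD := (Set.toFinite (S \ linesIn K S π)).toFinset with hsD
  -- split each linesThru into pencil + rest
  have hsplit : ∀ p ∈ sP, (linesThru K S p).ncard
      = (pencilS K S p π).ncard + ((linesThru K S p) \ (pencilS K S p π)).ncard := by
    intro p _
    have hsub : pencilS K S p π ⊆ linesThru K S p := fun l hl => ⟨hl.1, hl.2.1⟩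
    rw [← Set.ncard_diff_add_ncard_of_subset hsub (Set.toFinite _)]
    omega
  rw [Finset.sum_congr rfl hsplit, Finset.sum_add_distrib]
  -- pencil sum
  have hpencil : ∀ p ∈ sP, (pencilS K S p π).ncard
      = (sL.filter (fun l => p ≤ l)).card := by
    intro p _
    rw [Set.ncard_eq_toFinset_card _ (Set.toFinite _)]
    congr 1
    ext l
    simp only [Set.Finite.mem_toFinset, Finset.mem_filter, hsL, pencilS, linesIn,
      Set.mem_setOf_eq]
    tauto
  have hline : ∀ l ∈ sL, (sP.filter (fun p => p ≤ l)).card = q + 1 := by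
    intro l hl
    rw [Set.Finite.mem_toFinset] at hl
    have hlπ : l ≤ π := hl.2
    have hcnt := aux_points_on_line q hq hq2 (hS hl.1)
    rw [Set.ncard_eq_toFinset_card _ (Set.toFinite _)] at hcnt
    rw [← hcnt]
    congr 1
    ext p
    simp only [Finset.mem_filter, Set.Finite.mem_toFinset, hsP, Set.mem_setOf_eq]
    exact ⟨fun h => ⟨h.1.1, h.2⟩, fun h => ⟨⟨h.1, h.2.trans hlπ⟩, h.2⟩⟩
  have hA : ∑ p ∈ sP, (pencilS K S p π).ncard = (q + 1) * (linesIn K S π).ncard := by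
    rw [Finset.sum_congr rfl hpencil]
    have : ∀ p ∈ sP, (sL.filter (fun l => p ≤ l)).card
        = ∑ l ∈ sL, if p ≤ l then 1 else 0 := by
      intro p _; rw [Finset.card_filter]
    rw [Finset.sum_congr rfl this, Finset.sum_comm]
    have : ∀ l ∈ sL, (∑ p ∈ sP, if p ≤ l then 1 else 0) = q + 1 := by
      intro l hl
      rw [← Finset.card_filter]
      exact hline l hl
    rw [Finset.sum_congr rfl this, Finset.sum_const, smul_eq_mul, mul_comm,
      Set.ncard_eq_toFinset_card _ (Set.toFinite _)]
  -- rest sum: fibers of l ↦ l ⊓ π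
  have hmem : ∀ l ∈ sD, l ⊓ π ∈ sP := by
    intro l hl
    rw [Set.Finite.mem_toFinset] at hl ⊢
    obtain ⟨hlS, hlπ⟩ := hl
    have hnle : ¬ l ≤ π := fun h => hlπ ⟨hlS, h⟩
    exact ⟨aux_inf_point (hS hlS) hπ hnle, inf_le_right⟩
  have hfib : ∀ p ∈ sP, (sD.filter (fun l => l ⊓ π = p)).card
      = ((linesThru K S p) \ (pencilS K S p π)).ncard := by
    intro p hp
    rw [Set.Finite.mem_toFinset] at hp
    obtain ⟨hpP, hpπ⟩ := hp
    rw [Set.ncard_eq_toFinset_card _ (Set.toFinite _)]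
    congr 1
    ext l
    simp only [Finset.mem_filter, Set.Finite.mem_toFinset, hsD, Set.mem_diff,
      linesThru, linesIn, pencilS, Set.mem_setOf_eq]
    constructor
    · rintro ⟨⟨hlS, hlπ⟩, rfl⟩
      have hnle : ¬ l ≤ π := fun h => hlπ ⟨hlS, h⟩
      exact ⟨⟨hlS, inf_le_left⟩, fun h => hnle h.2.2⟩
    · rintro ⟨⟨hlS, hpl⟩, hnot⟩
      have hnle : ¬ l ≤ π := fun h => hnot ⟨hlS, hpl, h⟩
      have hpt := aux_inf_point (hS hlS) hπ hnle
      have : p = l ⊓ π := aux_point_eq hpP hpt (le_inf hpl hpπ)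
      exact ⟨⟨hlS, fun h => hnle h.2⟩, this.symm⟩
  have hB : ∑ p ∈ sP, ((linesThru K S p) \ (pencilS K S p π)).ncard
      = S.ncard - (linesIn K S π).ncard := by
    rw [← Finset.sum_congr rfl hfib, ← Finset.card_eq_sum_card_fiberwise hmem, hsD,
      ← Set.ncard_eq_toFinset_card _ (Set.toFinite _)]
    exact Set.ncard_diff (fun l hl => hl.1) (Set.toFinite _)
  have hle : (linesIn K S π).ncard ≤ S.ncard :=
    Set.ncard_le_ncard (fun l hl => hl.1) (Set.toFinite _)
  rw [hA, hB]
  have hmul : (q + 1) * (linesIn K S π).ncard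
      = q * (linesIn K S π).ncard + (linesIn K S π).ncard := by ring
  omega

end AuxStmt16

/-- If `π` is a tangent plane and `π'` a secant plane, then the
number of black points in `π` equals the number of black points in `π'`
plus `q`. -/
theorem stmt_16 (K : Type) [Field K] [Fintype K] (q : ℕ) (hq : Fintype.card K = q)
    (hq_odd : Odd q) (S : Set (Submodule K (Fin 4 → K))) (hS : S ⊆ pgLine K)
    (h1 : P1 K S q) (h2 : P2 K S q) (h2a : P2a K S q) (h2b : P2b K S q) :
    ∀ π π', IsTangent K S q π → IsSecant K S q π' →
      {p | IsBlack K S q p ∧ p ≤ π}.ncard =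
        {p | IsBlack K S q p ∧ p ≤ π'}.ncard + q := by
  classical
  intro π π' hT hSec
  obtain ⟨hπ, hSπ⟩ := hT
  obtain ⟨hπ', hSπ'⟩ := hSec
  have hq2 : 2 ≤ q := hq ▸ Fintype.one_lt_card
  have hq3 : 3 ≤ q := by
    rcases hq_odd with ⟨k, hk⟩
    omega
  set m := q * (q + 1) / 2 with hm
  have h2m : 2 * m = q * (q + 1) :=
    Nat.mul_div_cancel' (Nat.even_mul_succ_self q).two_dvd
  have main : ∀ σ ∈ pgPlane K, ∃ w,
      {p | IsBlack K S q p ∧ p ≤ σ}.ncard * q ^ 2 + w * m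
        = S.ncard + q * (linesIn K S σ).ncard
      ∧ {p | IsBlack K S q p ∧ p ≤ σ}.ncard + w
        = {p | p ∈ pgPoint K ∧ p ≤ σ}.ncard := by
    intro σ hσ
    set sP := (Set.toFinite {p | p ∈ pgPoint K ∧ p ≤ σ}).toFinset with hsP
    have hsum := aux_sum_linesThru q hq hq2 S hS hσ
    rw [← Finset.sum_filter_add_sum_filter_not sP (fun p => IsBlack K S q p)] at hsum
    have hblack : ∀ p ∈ sP.filter (fun p => IsBlack K S q p),
        (linesThru K S p).ncard = q ^ 2 := fun p hp => (Finset.mem_filter.mp hp).2.2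
    have hwhite : ∀ p ∈ sP.filter (fun p => ¬ IsBlack K S q p),
        (linesThru K S p).ncard = m := by
      intro p hp
      obtain ⟨hp1, hp2⟩ := Finset.mem_filter.mp hp
      rw [Set.Finite.mem_toFinset] at hp1
      rcases h1.1 p hp1.1 with h | h
      · exact h
      · exact absurd ⟨hp1.1, h⟩ hp2
    rw [Finset.sum_congr rfl hblack, Finset.sum_congr rfl hwhite,
      Finset.sum_const, Finset.sum_const, smul_eq_mul, smul_eq_mul] at hsum
    have hBcard : (sP.filter (fun p => IsBlack K S q p)).card
        = {p | IsBlack K S q p ∧ p ≤ σ}.ncard := by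
      rw [Set.ncard_eq_toFinset_card _ (Set.toFinite _)]
      congr 1
      ext p
      simp only [Finset.mem_filter, Set.Finite.mem_toFinset, Set.mem_setOf_eq, hsP]
      exact ⟨fun h => ⟨h.2, h.1.2⟩, fun h => ⟨⟨h.1.1, h.2⟩, h.1⟩⟩
    have hPcard : sP.card = {p | p ∈ pgPoint K ∧ p ≤ σ}.ncard :=
      (Set.ncard_eq_toFinset_card _ _).symm
    refine ⟨(sP.filter (fun p => ¬ IsBlack K S q p)).card, ?_, ?_⟩
    · rw [← hBcard]
      exact hsum
    · rw [← hBcard, ← hPcard]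
      exact Finset.card_filter_add_card_filter_not
        (s := sP) (p := fun p => IsBlack K S q p)
  obtain ⟨w, e1, f1⟩ := main π hπ
  obtain ⟨w', e2, f2⟩ := main π' hπ'
  rw [hSπ] at e1
  rw [hSπ'] at e2
  have hN : {p | p ∈ pgPoint K ∧ p ≤ π}.ncard
      = {p | p ∈ pgPoint K ∧ p ≤ π'}.ncard := by
    have a1 := aux_ncard_points_le q hq π
    have a2 := aux_ncard_points_le q hq π'
    rw [show Module.finrank K ↥π = 3 from hπ] at a1
    rw [show Module.finrank K ↥π' = 3 from hπ'] at a2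
    exact Nat.eq_of_mul_eq_mul_right (by omega) (a1.trans a2.symm)
  set b := {p | IsBlack K S q p ∧ p ≤ π}.ncard
  set b' := {p | IsBlack K S q p ∧ p ≤ π'}.ncard
  have E1 : (b : ℤ) * q ^ 2 + w * m = S.ncard + q * q ^ 2 := by exact_mod_cast e1
  have E2 : (b' : ℤ) * q ^ 2 + w' * m = S.ncard + q * m := by exact_mod_cast e2
  have E3 : (b : ℤ) + w = b' + w' := by
    have := f1.trans (hN.trans f2.symm)
    exact_mod_cast this
  have HM : (2 : ℤ) * m = q * (q + 1) := by exact_mod_cast h2m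
  have key : ((b : ℤ) - b' - q) * (2 * q ^ 2 - 2 * m) = 0 := by
    linear_combination 2 * E1 - 2 * E2 - 2 * (m : ℤ) * E3
  have hfac : (2 * q ^ 2 - 2 * m : ℤ) = q * (q - 1) := by linear_combination -HM
  rw [hfac] at key
  have hq3' : (3 : ℤ) ≤ (q : ℤ) := by exact_mod_cast hq3
  have hpos : (0 : ℤ) < q * (q - 1) := by nlinarith
  rcases mul_eq_zero.mp key with h | h
  · have : (b : ℤ) = b' + q := by linarith
    exact_mod_cast this
  · exact absurd h hpos.ne'
end

section
/- (i) Every line of PG(3,q) contains exactly 0, 1, 2 or q+1 black points. (ii) If a line of PG(3,q) contains exactly two black points, then it is a line of S. -/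
open Submodule Set

section Aux

open Module

variable {K : Type} [Field K] [Fintype K]


instance : Finite (Submodule K (Fin 4 → K)) :=
  Finite.of_injective (fun W => (W : Set (Fin 4 → K))) SetLike.coe_injective

/-- Number of 1-dimensional subspaces of a 2-dimensional space over a finite field. -/
lemma count_points_dim_two {M : Type} [AddCommGroup M] [Module K M] [Finite M]
    (h2 : Module.finrank K M = 2) :
    {p : Submodule K M | Module.finrank K ↥p = 1}.ncard = Fintype.card K + 1 := by
  classical
  haveI : Fintype M := Fintype.ofFinite M
  haveI : Finite (Submodule K M) :=
    Finite.of_injective (fun W => (W : Set M)) SetLike.coe_injective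
  set q := Fintype.card K with hqdef
  have hq1 : 1 < q := Fintype.one_lt_card
  have hM : Fintype.card M = q ^ 2 := by rw [card_eq_pow_finrank (K := K), h2]
  set P : Set (Submodule K M) := {p | Module.finrank K ↥p = 1} with hP
  have hPfin : P.Finite := Set.toFinite _
  have key : (Finset.univ.filter (fun v : M => v ≠ 0)).card
      = ∑ p ∈ hPfin.toFinset,
        ((Finset.univ.filter (fun v : M => v ≠ 0)).filter
          (fun v => Submodule.span K {v} = p)).card := by
    apply Finset.card_eq_sum_card_fiberwise
    intro v hv
    simp only [Finset.mem_coe, Finset.mem_filter, Finset.mem_univ, true_and] at hv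
    simp only [Finset.mem_coe, Set.Finite.mem_toFinset, hP, Set.mem_setOf_eq]
    exact finrank_span_singleton hv
  have fib : ∀ p ∈ hPfin.toFinset,
      ((Finset.univ.filter (fun v : M => v ≠ 0)).filter
        (fun v => Submodule.span K {v} = p)).card = q - 1 := by
    intro p hp
    simp only [Set.Finite.mem_toFinset, hP, Set.mem_setOf_eq] at hp
    have hset : ((Finset.univ.filter (fun v : M => v ≠ 0)).filter
        (fun v => Submodule.span K {v} = p))
        = Finset.univ.filter (fun v : M => v ∈ p ∧ v ≠ 0) := by
      ext v
      simp only [Finset.mem_filter, Finset.mem_univ, true_and]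
      constructor
      · rintro ⟨hv0, hsp⟩
        exact ⟨hsp ▸ Submodule.mem_span_singleton_self v, hv0⟩
      · rintro ⟨hvp, hv0⟩
        refine ⟨hv0, ?_⟩
        apply Submodule.eq_of_le_of_finrank_le
        · rwa [Submodule.span_le, Set.singleton_subset_iff]
        · rw [hp, finrank_span_singleton hv0]
    rw [hset]
    have hcardp : Fintype.card ↥p = q := by
      rw [card_eq_pow_finrank (K := K), hp, pow_one]
    have hc2 : (Finset.univ.filter (fun v : M => v ∈ p ∧ v ≠ 0)).card
        = Fintype.card {v : M // v ∈ p ∧ v ≠ 0} := (Fintype.card_subtype _).symm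
    rw [hc2]
    have e : {v : M // v ∈ p ∧ v ≠ 0} ≃ {x : ↥p // x ≠ 0} :=
      { toFun := fun v => ⟨⟨v.1, v.2.1⟩, by
          simp only [ne_eq, Submodule.mk_eq_zero]; exact v.2.2⟩
        invFun := fun x => ⟨x.1.1, x.1.2, by
          intro h; exact x.2 (Subtype.ext h)⟩
        left_inv := fun v => rfl
        right_inv := fun x => rfl }
    rw [Fintype.card_congr e]
    have hcompl := Fintype.card_subtype_compl (fun x : ↥p => x = 0)
    rw [Fintype.card_subtype_eq (0 : ↥p)] at hcompl
    simpa [hcardp] using hcompl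
  rw [Finset.sum_congr rfl fib, Finset.sum_const, smul_eq_mul] at key
  have hfilter : (Finset.univ.filter (fun v : M => v ≠ 0)).card = q ^ 2 - 1 := by
    rw [Finset.filter_ne', Finset.card_erase_of_mem (Finset.mem_univ 0),
      Finset.card_univ, hM]
  rw [hfilter] at key
  have hcard : P.ncard = hPfin.toFinset.card := Set.ncard_eq_toFinset_card P hPfin
  rw [hcard]
  have hmul : (q + 1) * (q - 1) = q ^ 2 - 1 := by
    have := Nat.sq_sub_sq q 1
    simpa using this.symm
  have hN : hPfin.toFinset.card * (q - 1) = (q + 1) * (q - 1) := by rw [hmul]; exact key.symm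
  exact Nat.eq_of_mul_eq_mul_right (by omega) hN

lemma finrank_V4 : Module.finrank K (Fin 4 → K) = 4 := Module.finrank_fin_fun K

/-- The points contained in a subspace `W` of dimension 2 number `q+1`. -/
lemma points_le_card {W : Submodule K (Fin 4 → K)} (hW : Module.finrank K ↥W = 2) :
    {p : Submodule K (Fin 4 → K) | Module.finrank K ↥p = 1 ∧ p ≤ W}.ncard
      = Fintype.card K + 1 := by
  classical
  have himg : {p : Submodule K (Fin 4 → K) | Module.finrank K ↥p = 1 ∧ p ≤ W}
      = (fun P : Submodule K ↥W => Submodule.map W.subtype P) ''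
        {P : Submodule K ↥W | Module.finrank K ↥P = 1} := by
    ext p
    constructor
    · rintro ⟨hp1, hpW⟩
      refine ⟨Submodule.comap W.subtype p, ?_, ?_⟩
      · have hmc : Submodule.map W.subtype (Submodule.comap W.subtype p) = p := by
          rw [Submodule.map_comap_subtype, inf_eq_right.mpr hpW]
        simp only [Set.mem_setOf_eq]
        rw [← Submodule.finrank_map_subtype_eq W (Submodule.comap W.subtype p), hmc]
        exact hp1
      · show Submodule.map W.subtype (Submodule.comap W.subtype p) = p
        rw [Submodule.map_comap_subtype, inf_eq_right.mpr hpW]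
    · rintro ⟨P, hP1, rfl⟩
      exact ⟨by rw [Submodule.finrank_map_subtype_eq]; exact hP1, Submodule.map_subtype_le W P⟩
  rw [himg, Set.ncard_image_of_injective _
    (Submodule.map_injective_of_injective (Submodule.injective_subtype W))]
  exact count_points_dim_two hW

lemma finrank_comap_mkQ {l : Submodule K (Fin 4 → K)} (W : Submodule K ((Fin 4 → K) ⧸ l)) :
    Module.finrank K ↥(Submodule.comap l.mkQ W)
      = Module.finrank K ↥W + Module.finrank K ↥l := by
  classical
  set π := Submodule.comap l.mkQ W with hπ
  have hlπ : l ≤ π := by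
    intro x hx
    simp only [hπ, Submodule.mem_comap, Submodule.mkQ_apply]
    rw [Submodule.Quotient.mk_eq_zero l |>.mpr hx]
    exact W.zero_mem
  set f : ↥π →ₗ[K] (Fin 4 → K) ⧸ l := l.mkQ.comp π.subtype with hf
  have hker : LinearMap.ker f = Submodule.comap π.subtype l := by
    rw [hf, LinearMap.ker_comp, Submodule.ker_mkQ]
  have hrange : LinearMap.range f = W := by
    rw [hf, LinearMap.range_comp, Submodule.range_subtype]
    exact Submodule.map_comap_eq_self (by rw [Submodule.range_mkQ]; exact le_top)
  have h1 := LinearMap.finrank_range_add_finrank_ker f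
  rw [hker, hrange] at h1
  have h2 : Module.finrank K ↥(Submodule.comap π.subtype l) = Module.finrank K ↥l := by
    have hmc : Submodule.map π.subtype (Submodule.comap π.subtype l) = l := by
      rw [Submodule.map_comap_subtype, inf_eq_right.mpr hlπ]
    rw [← Submodule.finrank_map_subtype_eq π (Submodule.comap π.subtype l), hmc]
  rw [h2] at h1
  omega

/-- The planes containing a line `l` number `q+1`. -/
lemma planes_through_card {l : Submodule K (Fin 4 → K)} (hl : Module.finrank K ↥l = 2) :
    {π : Submodule K (Fin 4 → K) | Module.finrank K ↥π = 3 ∧ l ≤ π}.ncard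
      = Fintype.card K + 1 := by
  classical
  have hQ : Module.finrank K ((Fin 4 → K) ⧸ l) = 2 := by
    have := Submodule.finrank_quotient_add_finrank l
    rw [hl, finrank_V4] at this
    omega
  have himg : {π : Submodule K (Fin 4 → K) | Module.finrank K ↥π = 3 ∧ l ≤ π}
      = (fun W : Submodule K ((Fin 4 → K) ⧸ l) => Submodule.comap l.mkQ W) ''
        {W : Submodule K ((Fin 4 → K) ⧸ l) | Module.finrank K ↥W = 1} := by
    ext π
    constructor
    · rintro ⟨hπ3, hlπ⟩
      refine ⟨Submodule.map l.mkQ π, ?_, ?_⟩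
      · have hcm : Submodule.comap l.mkQ (Submodule.map l.mkQ π) = π := by
          rw [Submodule.comap_map_mkQ, sup_eq_right.mpr hlπ]
        have := finrank_comap_mkQ (l := l) (Submodule.map l.mkQ π)
        rw [hcm, hπ3, hl] at this
        simpa using this.symm
      · show Submodule.comap l.mkQ (Submodule.map l.mkQ π) = π
        rw [Submodule.comap_map_mkQ, sup_eq_right.mpr hlπ]
    · rintro ⟨W, hW1, rfl⟩
      constructor
      · rw [finrank_comap_mkQ, hW1, hl]
      · intro x hx
        simp only [Submodule.mem_comap, Submodule.mkQ_apply]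
        rw [Submodule.Quotient.mk_eq_zero l |>.mpr hx]
        exact W.zero_mem
  have hinj : Function.Injective
      (fun W : Submodule K ((Fin 4 → K) ⧸ l) => Submodule.comap l.mkQ W) :=
    fun W₁ W₂ h => by
      have := congrArg (Submodule.map l.mkQ) h
      rwa [Submodule.map_comap_eq_self (by rw [Submodule.range_mkQ]; exact le_top),
        Submodule.map_comap_eq_self (by rw [Submodule.range_mkQ]; exact le_top)] at this
  rw [himg, Set.ncard_image_of_injective _ hinj]
  exact count_points_dim_two hQ

/-- Two distinct lines in a common plane meet in a point. -/
lemma inf_lines_in_plane {l m π : Submodule K (Fin 4 → K)}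
    (hl : Module.finrank K ↥l = 2) (hm : Module.finrank K ↥m = 2)
    (hπ : Module.finrank K ↥π = 3) (hlm : l ≠ m) (hlπ : l ≤ π) (hmπ : m ≤ π) :
    Module.finrank K ↥(l ⊓ m) = 1 := by
  have hsum := Submodule.finrank_sup_add_finrank_inf_eq l m
  have hsup_le : Module.finrank K ↥(l ⊔ m) ≤ 3 := by
    rw [← hπ]; exact Submodule.finrank_mono (sup_le hlπ hmπ)
  have hlt : l < l ⊔ m := by
    rcases lt_or_eq_of_le (le_sup_left : l ≤ l ⊔ m) with h | h
    · exact h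
    · exfalso; apply hlm
      have hml : m ≤ l := by rw [h]; exact le_sup_right
      exact (Submodule.eq_of_le_of_finrank_le hml (by omega)).symm
  have : 2 < Module.finrank K ↥(l ⊔ m) := hl ▸ Submodule.finrank_lt_finrank_of_lt hlt
  omega

/-- Two distinct lines through a common point span a plane, and meet exactly in it. -/
lemma sup_lines_through_point {x l m : Submodule K (Fin 4 → K)}
    (hx : Module.finrank K ↥x = 1) (hl : Module.finrank K ↥l = 2)
    (hm : Module.finrank K ↥m = 2) (hlm : l ≠ m) (hxl : x ≤ l) (hxm : x ≤ m) :
    Module.finrank K ↥(l ⊔ m) = 3 := by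
  have hsum := Submodule.finrank_sup_add_finrank_inf_eq l m
  have hinf_le : Module.finrank K ↥(l ⊓ m) ≤ 2 := by
    rw [← hl]; exact Submodule.finrank_mono inf_le_left
  have hinf_lt : l ⊓ m < l := by
    rcases lt_or_eq_of_le (inf_le_left : l ⊓ m ≤ l) with h | h
    · exact h
    · exfalso; apply hlm
      have : l ≤ m := h ▸ inf_le_right
      exact Submodule.eq_of_le_of_finrank_le this (by omega)
  have h2 : Module.finrank K ↥(l ⊓ m) < 2 := hl ▸ Submodule.finrank_lt_finrank_of_lt hinf_lt
  have h1 : 1 ≤ Module.finrank K ↥(l ⊓ m) := by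
    rw [← hx]; exact Submodule.finrank_mono (le_inf hxl hxm)
  omega

lemma inf_lines_eq_point {x l m : Submodule K (Fin 4 → K)}
    (hx : Module.finrank K ↥x = 1) (hl : Module.finrank K ↥l = 2)
    (hm : Module.finrank K ↥m = 2) (hlm : l ≠ m) (hxl : x ≤ l) (hxm : x ≤ m) :
    l ⊓ m = x := by
  have hsum := Submodule.finrank_sup_add_finrank_inf_eq l m
  have h3 := sup_lines_through_point hx hl hm hlm hxl hxm
  exact (Submodule.eq_of_le_of_finrank_le (le_inf hxl hxm) (by omega)).symm

/-- Points of `PG(3,q)` on a line. -/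
def ptsOf (K : Type) [Field K] (l : Submodule K (Fin 4 → K)) : Set (Submodule K (Fin 4 → K)) :=
  {p | p ∈ pgPoint K ∧ p ≤ l}

/-- Planes of `PG(3,q)` through a line. -/
def plsOf (K : Type) [Field K] (l : Submodule K (Fin 4 → K)) : Set (Submodule K (Fin 4 → K)) :=
  {π | π ∈ pgPlane K ∧ l ≤ π}

lemma ptsOf_ncard {l : Submodule K (Fin 4 → K)} (hl : l ∈ pgLine K) :
    (ptsOf K l).ncard = Fintype.card K + 1 := points_le_card hl

lemma plsOf_ncard {l : Submodule K (Fin 4 → K)} (hl : l ∈ pgLine K) :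
    (plsOf K l).ncard = Fintype.card K + 1 := planes_through_card hl

/-- Generic fiberwise counting for sets in a finite type. -/
lemma ncard_fiber_sum {X : Type} [Finite X] (A B : Set X) (f : X → X)
    (hf : ∀ a ∈ A, f a ∈ B) :
    A.ncard = ∑ b ∈ B.toFinite.toFinset, {a | a ∈ A ∧ f a = b}.ncard := by
  classical
  rw [Set.ncard_eq_toFinset_card A A.toFinite]
  rw [Finset.card_eq_sum_card_fiberwise (f := f) (t := B.toFinite.toFinset)
    (fun a ha => by
      rw [Finset.mem_coe, Set.Finite.mem_toFinset] at ha ⊢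
      exact hf a ha)]
  refine Finset.sum_congr rfl fun b _ => ?_
  rw [Set.ncard_eq_toFinset_card _ (Set.toFinite _)]
  congr 1
  ext a
  simp [Set.Finite.mem_toFinset]

lemma sum_pencil_points_notin (S : Set (Submodule K (Fin 4 → K))) (hS : S ⊆ pgLine K)
    {l π : Submodule K (Fin 4 → K)} (hl : l ∈ pgLine K) (hπ : π ∈ pgPlane K)
    (hlπ : l ≤ π) (hlS : l ∉ S) :
    (linesIn K S π).ncard
      = ∑ p ∈ (ptsOf K l).toFinite.toFinset, (pencilS K S p π).ncard := by
  have hf : ∀ m ∈ linesIn K S π, m ⊓ l ∈ ptsOf K l := by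
    rintro m ⟨hmS, hmπ⟩
    have hml : m ≠ l := fun h => hlS (h ▸ hmS)
    exact ⟨inf_lines_in_plane (hS hmS) hl hπ hml hmπ hlπ, inf_le_right⟩
  rw [ncard_fiber_sum (linesIn K S π) (ptsOf K l) (· ⊓ l) hf]
  refine Finset.sum_congr rfl fun p hp => ?_
  rw [Set.Finite.mem_toFinset] at hp
  obtain ⟨hp1, hpl⟩ := hp
  congr 1
  ext m
  constructor
  · rintro ⟨⟨hmS, hmπ⟩, hinf⟩
    exact ⟨hmS, hinf ▸ inf_le_left, hmπ⟩
  · rintro ⟨hmS, hpm, hmπ⟩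
    have hml : m ≠ l := fun h => hlS (h ▸ hmS)
    refine ⟨⟨hmS, hmπ⟩, ?_⟩
    have h1 : Module.finrank K ↥(m ⊓ l) = 1 :=
      inf_lines_in_plane (hS hmS) hl hπ hml hmπ hlπ
    exact (Submodule.eq_of_le_of_finrank_le (le_inf hpm hpl) (by rw [h1, hp1])).symm

lemma sum_pencil_points_in (S : Set (Submodule K (Fin 4 → K))) (hS : S ⊆ pgLine K)
    {l π : Submodule K (Fin 4 → K)} (hl : l ∈ pgLine K) (hπ : π ∈ pgPlane K)
    (hlπ : l ≤ π) (hlS : l ∈ S) :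
    ∑ p ∈ (ptsOf K l).toFinite.toFinset, (pencilS K S p π).ncard
      = (linesIn K S π).ncard + Fintype.card K := by
  set A : Set (Submodule K (Fin 4 → K)) := {m | m ∈ linesIn K S π ∧ m ≠ l} with hA
  have hf : ∀ m ∈ A, m ⊓ l ∈ ptsOf K l := by
    rintro m ⟨⟨hmS, hmπ⟩, hml⟩
    exact ⟨inf_lines_in_plane (hS hmS) hl hπ hml hmπ hlπ, inf_le_right⟩
  have hfib := ncard_fiber_sum A (ptsOf K l) (· ⊓ l) hf
  have hpencil : ∀ p ∈ (ptsOf K l).toFinite.toFinset,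
      (pencilS K S p π).ncard = {a | a ∈ A ∧ a ⊓ l = p}.ncard + 1 := by
    intro p hp
    rw [Set.Finite.mem_toFinset] at hp
    obtain ⟨hp1, hpl⟩ := hp
    have hset : pencilS K S p π = insert l {a | a ∈ A ∧ a ⊓ l = p} := by
      ext m
      constructor
      · rintro ⟨hmS, hpm, hmπ⟩
        by_cases hml : m = l
        · exact Or.inl hml
        · refine Or.inr ⟨⟨⟨hmS, hmπ⟩, hml⟩, ?_⟩
          have h1 : Module.finrank K ↥(m ⊓ l) = 1 :=
            inf_lines_in_plane (hS hmS) hl hπ hml hmπ hlπ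
          exact (Submodule.eq_of_le_of_finrank_le (le_inf hpm hpl)
            (by rw [h1, hp1])).symm
      · rintro (rfl | ⟨⟨⟨hmS, hmπ⟩, _⟩, hinf⟩)
        · exact ⟨hlS, hpl, hlπ⟩
        · exact ⟨hmS, hinf ▸ inf_le_left, hmπ⟩
    rw [hset, Set.ncard_insert_of_notMem (fun h => h.1.2 rfl) (Set.toFinite _)]
  rw [Finset.sum_congr rfl hpencil, Finset.sum_add_distrib, Finset.sum_const,
    smul_eq_mul, mul_one, ← hfib]
  have hAcard : A.ncard + 1 = (linesIn K S π).ncard := by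
    have : A = linesIn K S π \ {l} := by ext m; simp [hA, Set.mem_diff]
    rw [this]
    exact Set.ncard_diff_singleton_add_one ⟨hlS, hlπ⟩ (Set.toFinite _)
  have hpts : (ptsOf K l).toFinite.toFinset.card = Fintype.card K + 1 := by
    rw [← Set.ncard_eq_toFinset_card]; exact ptsOf_ncard hl
  rw [hpts]
  omega

lemma sum_pencil_planes_notin (S : Set (Submodule K (Fin 4 → K))) (hS : S ⊆ pgLine K)
    {x l : Submodule K (Fin 4 → K)} (hx : x ∈ pgPoint K) (hl : l ∈ pgLine K)
    (hxl : x ≤ l) (hlS : l ∉ S) :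
    (linesThru K S x).ncard
      = ∑ π ∈ (plsOf K l).toFinite.toFinset, (pencilS K S x π).ncard := by
  have hf : ∀ m ∈ linesThru K S x, l ⊔ m ∈ plsOf K l := by
    rintro m ⟨hmS, hxm⟩
    have hml : l ≠ m := fun h => hlS (h ▸ hmS)
    exact ⟨sup_lines_through_point hx hl (hS hmS) hml hxl hxm, le_sup_left⟩
  rw [ncard_fiber_sum (linesThru K S x) (plsOf K l) (l ⊔ ·) hf]
  refine Finset.sum_congr rfl fun π hπ => ?_
  rw [Set.Finite.mem_toFinset] at hπ
  obtain ⟨hπ3, hlπ⟩ := hπ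
  congr 1
  ext m
  constructor
  · rintro ⟨⟨hmS, hxm⟩, hsup⟩
    exact ⟨hmS, hxm, hsup ▸ le_sup_right⟩
  · rintro ⟨hmS, hxm, hmπ⟩
    have hml : l ≠ m := fun h => hlS (h ▸ hmS)
    refine ⟨⟨hmS, hxm⟩, ?_⟩
    have h3 : Module.finrank K ↥(l ⊔ m) = 3 :=
      sup_lines_through_point hx hl (hS hmS) hml hxl hxm
    exact Submodule.eq_of_le_of_finrank_le (sup_le hlπ hmπ) (by rw [h3, hπ3])

lemma sum_pencil_planes_in (S : Set (Submodule K (Fin 4 → K))) (hS : S ⊆ pgLine K)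
    {x l : Submodule K (Fin 4 → K)} (hx : x ∈ pgPoint K) (hl : l ∈ pgLine K)
    (hxl : x ≤ l) (hlS : l ∈ S) :
    ∑ π ∈ (plsOf K l).toFinite.toFinset, (pencilS K S x π).ncard
      = (linesThru K S x).ncard + Fintype.card K := by
  set A : Set (Submodule K (Fin 4 → K)) := {m | m ∈ linesThru K S x ∧ m ≠ l} with hA
  have hf : ∀ m ∈ A, l ⊔ m ∈ plsOf K l := by
    rintro m ⟨⟨hmS, hxm⟩, hml⟩
    exact ⟨sup_lines_through_point hx hl (hS hmS) (Ne.symm hml) hxl hxm, le_sup_left⟩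
  have hfib := ncard_fiber_sum A (plsOf K l) (l ⊔ ·) hf
  have hpencil : ∀ π ∈ (plsOf K l).toFinite.toFinset,
      (pencilS K S x π).ncard = {a | a ∈ A ∧ l ⊔ a = π}.ncard + 1 := by
    intro π hπ
    rw [Set.Finite.mem_toFinset] at hπ
    obtain ⟨hπ3, hlπ⟩ := hπ
    have hset : pencilS K S x π = insert l {a | a ∈ A ∧ l ⊔ a = π} := by
      ext m
      constructor
      · rintro ⟨hmS, hxm, hmπ⟩
        by_cases hml : m = l
        · exact Or.inl hml
        · refine Or.inr ⟨⟨⟨hmS, hxm⟩, hml⟩, ?_⟩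
          have h3 : Module.finrank K ↥(l ⊔ m) = 3 :=
            sup_lines_through_point hx hl (hS hmS) (Ne.symm hml) hxl hxm
          exact Submodule.eq_of_le_of_finrank_le (sup_le hlπ hmπ) (by rw [h3, hπ3])
      · rintro (rfl | ⟨⟨⟨hmS, hxm⟩, _⟩, hsup⟩)
        · exact ⟨hlS, hxl, hlπ⟩
        · exact ⟨hmS, hxm, hsup ▸ le_sup_right⟩
    rw [hset, Set.ncard_insert_of_notMem (fun h => h.1.2 rfl) (Set.toFinite _)]
  rw [Finset.sum_congr rfl hpencil, Finset.sum_add_distrib, Finset.sum_const,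
    smul_eq_mul, mul_one, ← hfib]
  have hAcard : A.ncard + 1 = (linesThru K S x).ncard := by
    have : A = linesThru K S x \ {l} := by ext m; simp [hA, Set.mem_diff]
    rw [this]
    exact Set.ncard_diff_singleton_add_one ⟨hlS, hxl⟩ (Set.toFinite _)
  have hpls : (plsOf K l).toFinite.toFinset.card = Fintype.card K + 1 := by
    rw [← Set.ncard_eq_toFinset_card]; exact plsOf_ncard hl
  rw [hpls]
  omega

lemma all_eq_of_sum_eq_card_mul {α : Type} {s : Finset α} {g : α → ℕ} {c : ℕ}
    (hle : ∀ i ∈ s, g i ≤ c) (hsum : ∑ i ∈ s, g i = s.card * c) :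
    ∀ i ∈ s, g i = c := by
  by_contra h
  push_neg at h
  obtain ⟨i, hi, hne⟩ := h
  have hlt : ∑ j ∈ s, g j < ∑ _j ∈ s, c :=
    Finset.sum_lt_sum hle ⟨i, hi, lt_of_le_of_ne (hle i hi) hne⟩
  rw [Finset.sum_const, smul_eq_mul] at hlt
  omega

lemma sum_ge_two_plus {α : Type} [DecidableEq α] {s : Finset α} {g : α → ℕ} {x y : α}
    (hx : x ∈ s) (hy : y ∈ s) (hxy : x ≠ y) {c : ℕ} (hc : ∀ p ∈ s, c ≤ g p) :
    g x + g y + (s.card - 2) * c ≤ ∑ p ∈ s, g p := by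
  have hy' : y ∈ s.erase x := Finset.mem_erase.mpr ⟨Ne.symm hxy, hy⟩
  rw [← Finset.add_sum_erase s g hx, ← Finset.add_sum_erase _ g hy']
  have hb : ((s.erase x).erase y).card • c ≤ ∑ p ∈ (s.erase x).erase y, g p :=
    Finset.card_nsmul_le_sum _ _ _ (fun p hp =>
      hc p (Finset.mem_of_mem_erase (Finset.mem_of_mem_erase hp)))
  rw [smul_eq_mul] at hb
  have hcard : ((s.erase x).erase y).card = s.card - 2 := by
    rw [Finset.card_erase_of_mem hy', Finset.card_erase_of_mem hx]; omega
  rw [hcard] at hb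
  omega

lemma sum_ge_three_plus {α : Type} [DecidableEq α] {s : Finset α} {g : α → ℕ} {x y z : α}
    (hx : x ∈ s) (hy : y ∈ s) (hz : z ∈ s) (hxy : x ≠ y) (hxz : x ≠ z) (hyz : y ≠ z)
    {c : ℕ} (hc : ∀ p ∈ s, c ≤ g p) :
    g x + g y + g z + (s.card - 3) * c ≤ ∑ p ∈ s, g p := by
  have hy' : y ∈ s.erase x := Finset.mem_erase.mpr ⟨Ne.symm hxy, hy⟩
  have hz' : z ∈ (s.erase x).erase y := Finset.mem_erase.mpr
    ⟨Ne.symm hyz, Finset.mem_erase.mpr ⟨Ne.symm hxz, hz⟩⟩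
  rw [← Finset.add_sum_erase s g hx, ← Finset.add_sum_erase _ g hy',
    ← Finset.add_sum_erase _ g hz']
  have hb : (((s.erase x).erase y).erase z).card • c
      ≤ ∑ p ∈ ((s.erase x).erase y).erase z, g p :=
    Finset.card_nsmul_le_sum _ _ _ (fun p hp =>
      hc p (Finset.mem_of_mem_erase (Finset.mem_of_mem_erase (Finset.mem_of_mem_erase hp))))
  rw [smul_eq_mul] at hb
  have hcard : (((s.erase x).erase y).erase z).card = s.card - 3 := by
    rw [Finset.card_erase_of_mem hz', Finset.card_erase_of_mem hy',
      Finset.card_erase_of_mem hx]; omega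
  rw [hcard] at hb
  omega

section Main

variable {S : Set (Submodule K (Fin 4 → K))} {q : ℕ}

/-- The pencil of `S`-lines at any incident point-plane pair has at most `q` lines. -/
lemma pencil_le_q (hq : Fintype.card K = q) (h2 : P2 K S q) (h2a : P2a K S q)
    (h2b : P2b K S q) {p π : Submodule K (Fin 4 → K)} (hπ : π ∈ pgPlane K)
    (hp : p ∈ pgPoint K) (hpπ : p ≤ π) : (pencilS K S p π).ncard ≤ q := by
  have hq1 : 1 ≤ q := by
    have := Fintype.one_lt_card (α := K); omega
  rcases h2 π hπ with hsec | htan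
  · rcases h2b π hπ hsec p hp hpπ with h | h | h <;> omega
  · rcases h2a π hπ htan p hp hpπ with h | h <;> omega

/-- Key lemma: if `x` is black and `m ∈ S` passes through `x`, then every plane
through `m` has a full pencil of `q` lines at `x`. -/
lemma black_full (hq : Fintype.card K = q) (hS : S ⊆ pgLine K) (h2 : P2 K S q)
    (h2a : P2a K S q) (h2b : P2b K S q) {x m π : Submodule K (Fin 4 → K)}
    (hx : IsBlack K S q x) (hm : m ∈ S) (hxm : x ≤ m) (hπ : π ∈ pgPlane K)
    (hmπ : m ≤ π) : (pencilS K S x π).ncard = q := by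
  subst hq
  have hsum := sum_pencil_planes_in S hS hx.1 (hS hm) hxm hm
  rw [hx.2] at hsum
  have hcard : (plsOf K m).toFinite.toFinset.card = Fintype.card K + 1 := by
    rw [← Set.ncard_eq_toFinset_card]; exact plsOf_ncard (hS hm)
  have hall : ∀ σ ∈ (plsOf K m).toFinite.toFinset,
      (pencilS K S x σ).ncard = Fintype.card K := by
    apply all_eq_of_sum_eq_card_mul
    · intro σ hσ
      rw [Set.Finite.mem_toFinset] at hσ
      exact pencil_le_q rfl h2 h2a h2b hσ.1 hx.1 (le_trans hxm hσ.2)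
    · rw [hsum, hcard]; ring
  exact hall π (by rw [Set.Finite.mem_toFinset]; exact ⟨hπ, hmπ⟩)

/-- A black point has pencil `0` or `q` in every plane through it. -/
lemma black_pencil (hq : Fintype.card K = q) (hS : S ⊆ pgLine K) (h2 : P2 K S q)
    (h2a : P2a K S q) (h2b : P2b K S q) {x π : Submodule K (Fin 4 → K)}
    (hx : IsBlack K S q x) (hπ : π ∈ pgPlane K) :
    (pencilS K S x π).ncard = 0 ∨ (pencilS K S x π).ncard = q := by
  by_cases h0 : (pencilS K S x π).ncard = 0
  · exact Or.inl h0
  · obtain ⟨m, hmS, hxm, hmπ⟩ := Set.nonempty_of_ncard_ne_zero h0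
    exact Or.inr (black_full hq hS h2 h2a h2b hx hmS hxm hπ hmπ)

/-- A black point has a full pencil in every secant plane through it. -/
lemma black_secant (hq : Fintype.card K = q) (hq_odd : Odd q) (hS : S ⊆ pgLine K)
    (h2 : P2 K S q) (h2a : P2a K S q) (h2b : P2b K S q)
    {x π : Submodule K (Fin 4 → K)} (hx : IsBlack K S q x) (hsec : IsSecant K S q π)
    (hxπ : x ≤ π) : (pencilS K S x π).ncard = q := by
  have hq3 : 3 ≤ q := by
    have h2' : 2 ≤ q := hq ▸ Fintype.one_lt_card
    have := Nat.odd_iff.mp hq_odd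
    omega
  have hvals := h2b π hsec.1 hsec.2 x hx.1 hxπ
  have h0q := black_pencil hq hS h2 h2a h2b hx hsec.1
  rcases hvals with h | h | h <;> rcases h0q with h' | h' <;> omega

/-- A secant plane cannot contain two black points of a line `l ∉ S` inside it. -/
lemma no_secant_two (hq : Fintype.card K = q) (hq_odd : Odd q) (hS : S ⊆ pgLine K)
    (h2 : P2 K S q) (h2a : P2a K S q) (h2b : P2b K S q)
    {l x y π : Submodule K (Fin 4 → K)} (hl : l ∈ pgLine K) (hlS : l ∉ S)
    (hx : IsBlack K S q x) (hy : IsBlack K S q y) (hxy : x ≠ y)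
    (hxl : x ≤ l) (hyl : y ≤ l) (hsec : IsSecant K S q π) (hlπ : l ≤ π) : False := by
  classical
  obtain ⟨k, hk, hk1⟩ : ∃ k, q = 2 * k + 1 ∧ 1 ≤ k := by
    have h2' : 2 ≤ q := hq ▸ Fintype.one_lt_card
    have := Nat.odd_iff.mp hq_odd
    exact ⟨q / 2, by omega, by omega⟩
  set s := (ptsOf K l).toFinite.toFinset with hs
  have hscard : s.card = q + 1 := by
    rw [hs, ← Set.ncard_eq_toFinset_card, ptsOf_ncard hl, hq]
  have hxs : x ∈ s := by rw [hs, Set.Finite.mem_toFinset]; exact ⟨hx.1, hxl⟩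
  have hys : y ∈ s := by rw [hs, Set.Finite.mem_toFinset]; exact ⟨hy.1, hyl⟩
  have hsum : (linesIn K S π).ncard = ∑ p ∈ s, (pencilS K S p π).ncard :=
    sum_pencil_points_notin S hS hl hsec.1 hlπ hlS
  have hgx : (pencilS K S x π).ncard = q :=
    black_secant hq hq_odd hS h2 h2a h2b hx hsec (le_trans hxl hlπ)
  have hgy : (pencilS K S y π).ncard = q :=
    black_secant hq hq_odd hS h2 h2a h2b hy hsec (le_trans hyl hlπ)
  have hlow : ∀ p ∈ s, k ≤ (pencilS K S p π).ncard := by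
    intro p hp
    rw [hs, Set.Finite.mem_toFinset] at hp
    rcases h2b π hsec.1 hsec.2 p hp.1 (le_trans hp.2 hlπ) with h | h | h <;> omega
  have hbound := sum_ge_two_plus hxs hys hxy hlow
  rw [hgx, hgy, hscard, ← hsum, hsec.2] at hbound
  have hdiv : q * (q + 1) / 2 = (2 * k + 1) * (k + 1) := by
    have hmul : q * (q + 1) = (2 * k + 1) * (k + 1) * 2 := by rw [hk]; ring
    rw [hmul, Nat.mul_div_cancel _ two_pos]
  rw [hdiv, hk] at hbound
  have he : 2 * k + 1 + 1 - 2 = 2 * k := by omega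
  rw [he] at hbound
  nlinarith [hbound, hk1]

/-- A secant plane cannot contain three black points of a line `l ∈ S` inside it. -/
lemma no_secant_three (hq : Fintype.card K = q) (hq_odd : Odd q) (hS : S ⊆ pgLine K)
    (h2 : P2 K S q) (h2a : P2a K S q) (h2b : P2b K S q)
    {l x y z π : Submodule K (Fin 4 → K)} (hl : l ∈ pgLine K) (hlS : l ∈ S)
    (hx : IsBlack K S q x) (hy : IsBlack K S q y) (hz : IsBlack K S q z)
    (hxy : x ≠ y) (hxz : x ≠ z) (hyz : y ≠ z)
    (hxl : x ≤ l) (hyl : y ≤ l) (hzl : z ≤ l)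
    (hsec : IsSecant K S q π) (hlπ : l ≤ π) : False := by
  classical
  obtain ⟨k, hk, hk1⟩ : ∃ k, q = 2 * k + 1 ∧ 1 ≤ k := by
    have h2' : 2 ≤ q := hq ▸ Fintype.one_lt_card
    have := Nat.odd_iff.mp hq_odd
    exact ⟨q / 2, by omega, by omega⟩
  set s := (ptsOf K l).toFinite.toFinset with hs
  have hscard : s.card = q + 1 := by
    rw [hs, ← Set.ncard_eq_toFinset_card, ptsOf_ncard hl, hq]
  have hxs : x ∈ s := by rw [hs, Set.Finite.mem_toFinset]; exact ⟨hx.1, hxl⟩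
  have hys : y ∈ s := by rw [hs, Set.Finite.mem_toFinset]; exact ⟨hy.1, hyl⟩
  have hzs : z ∈ s := by rw [hs, Set.Finite.mem_toFinset]; exact ⟨hz.1, hzl⟩
  have hsum : ∑ p ∈ s, (pencilS K S p π).ncard = (linesIn K S π).ncard + Fintype.card K :=
    sum_pencil_points_in S hS hl hsec.1 hlπ hlS
  have hgx : (pencilS K S x π).ncard = q :=
    black_secant hq hq_odd hS h2 h2a h2b hx hsec (le_trans hxl hlπ)
  have hgy : (pencilS K S y π).ncard = q :=
    black_secant hq hq_odd hS h2 h2a h2b hy hsec (le_trans hyl hlπ)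
  have hgz : (pencilS K S z π).ncard = q :=
    black_secant hq hq_odd hS h2 h2a h2b hz hsec (le_trans hzl hlπ)
  have hlow : ∀ p ∈ s, k ≤ (pencilS K S p π).ncard := by
    intro p hp
    rw [hs, Set.Finite.mem_toFinset] at hp
    rcases h2b π hsec.1 hsec.2 p hp.1 (le_trans hp.2 hlπ) with h | h | h <;> omega
  have hbound := sum_ge_three_plus hxs hys hzs hxy hxz hyz hlow
  rw [hgx, hgy, hgz, hscard, hsum, hsec.2, hq] at hbound
  have hdiv : q * (q + 1) / 2 = (2 * k + 1) * (k + 1) := by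
    have hmul : q * (q + 1) = (2 * k + 1) * (k + 1) * 2 := by rw [hk]; ring
    rw [hmul, Nat.mul_div_cancel _ two_pos]
  rw [hdiv, hk] at hbound
  obtain ⟨j, rfl⟩ : ∃ j, k = j + 1 := ⟨k - 1, by omega⟩
  have he : 2 * (j + 1) + 1 + 1 - 3 = 2 * j + 1 := by omega
  rw [he] at hbound
  nlinarith [hbound]

/-- If every plane through a line is tangent, then all `q+1` points of the line
are black. -/
lemma all_tangent_all_black (hq : Fintype.card K = q) (hq_odd : Odd q)
    (hS : S ⊆ pgLine K) (h1 : P1 K S q)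
    {l : Submodule K (Fin 4 → K)} (hl : l ∈ pgLine K)
    (htan : ∀ π ∈ pgPlane K, l ≤ π → (linesIn K S π).ncard = q ^ 2) :
    {p | IsBlack K S q p ∧ p ≤ l}.ncard = q + 1 := by
  classical
  obtain ⟨k, hk, hk1⟩ : ∃ k, q = 2 * k + 1 ∧ 1 ≤ k := by
    have h2' : 2 ≤ q := hq ▸ Fintype.one_lt_card
    have := Nat.odd_iff.mp hq_odd
    exact ⟨q / 2, by omega, by omega⟩
  set s := (ptsOf K l).toFinite.toFinset with hs
  set t := (plsOf K l).toFinite.toFinset with ht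
  have hscard : s.card = q + 1 := by
    rw [hs, ← Set.ncard_eq_toFinset_card, ptsOf_ncard hl, hq]
  have htcard : t.card = q + 1 := by
    rw [ht, ← Set.ncard_eq_toFinset_card, plsOf_ncard hl, hq]
  have hcomm := Finset.sum_comm (s := s) (t := t)
    (f := fun p π => (pencilS K S p π).ncard)
  have htot : ∑ p ∈ s, (linesThru K S p).ncard = (q + 1) * q ^ 2 := by
    by_cases hlS : l ∈ S
    · have ha : ∀ p ∈ s, ∑ π ∈ t, (pencilS K S p π).ncard
          = (linesThru K S p).ncard + q := by
        intro p hp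
        rw [hs, Set.Finite.mem_toFinset] at hp
        rw [← hq]
        exact sum_pencil_planes_in S hS hp.1 hl hp.2 hlS
      have hb : ∀ π ∈ t, ∑ p ∈ s, (pencilS K S p π).ncard = q ^ 2 + q := by
        intro π hπ
        rw [ht, Set.Finite.mem_toFinset] at hπ
        rw [sum_pencil_points_in S hS hl hπ.1 hπ.2 hlS, htan π hπ.1 hπ.2, hq]
      have hA : ∑ p ∈ s, ((linesThru K S p).ncard + q) = (q + 1) * (q ^ 2 + q) := by
        rw [← Finset.sum_congr rfl ha, hcomm, Finset.sum_congr rfl hb,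
          Finset.sum_const, smul_eq_mul, htcard]
      rw [Finset.sum_add_distrib, Finset.sum_const, smul_eq_mul, hscard] at hA
      nlinarith [hA]
    · have ha : ∀ p ∈ s, (linesThru K S p).ncard
          = ∑ π ∈ t, (pencilS K S p π).ncard := by
        intro p hp
        rw [hs, Set.Finite.mem_toFinset] at hp
        exact sum_pencil_planes_notin S hS hp.1 hl hp.2 hlS
      have hb : ∀ π ∈ t, ∑ p ∈ s, (pencilS K S p π).ncard = q ^ 2 := by
        intro π hπ
        rw [ht, Set.Finite.mem_toFinset] at hπ
        rw [← sum_pencil_points_notin S hS hl hπ.1 hπ.2 hlS]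
        exact htan π hπ.1 hπ.2
      rw [Finset.sum_congr rfl ha, hcomm, Finset.sum_congr rfl hb,
        Finset.sum_const, smul_eq_mul, htcard]
  set Bf := s.filter (fun p => (linesThru K S p).ncard = q ^ 2) with hBf
  set Wf := s.filter (fun p => ¬ (linesThru K S p).ncard = q ^ 2) with hWf
  have hsplit : Bf.card + Wf.card = q + 1 := by
    rw [hBf, hWf, Finset.card_filter_add_card_filter_not, hscard]
  have hBsum : ∑ p ∈ Bf, (linesThru K S p).ncard = Bf.card * q ^ 2 :=
    Finset.sum_const_nat (fun p hp => (Finset.mem_filter.mp hp).2)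
  have hWsum : ∑ p ∈ Wf, (linesThru K S p).ncard = Wf.card * (q * (q + 1) / 2) := by
    apply Finset.sum_const_nat
    intro p hp
    rw [hWf, Finset.mem_filter, hs, Set.Finite.mem_toFinset] at hp
    rcases h1.1 p hp.1.1 with h | h
    · exact h
    · exact absurd h hp.2
  have hsum2 : Bf.card * q ^ 2 + Wf.card * (q * (q + 1) / 2) = (q + 1) * q ^ 2 := by
    rw [← hBsum, ← hWsum, hBf, hWf, Finset.sum_filter_add_sum_filter_not, htot]
  have hW0 : Wf.card = 0 := by
    by_contra hW
    have hdiv : q * (q + 1) / 2 = (2 * k + 1) * (k + 1) := by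
      have hmul : q * (q + 1) = (2 * k + 1) * (k + 1) * 2 := by rw [hk]; ring
      rw [hmul, Nat.mul_div_cancel _ two_pos]
    have hlt : q * (q + 1) / 2 < q ^ 2 := by
      rw [hdiv, hk]; nlinarith [hk1]
    have : Bf.card * q ^ 2 + Wf.card * (q * (q + 1) / 2)
        < Bf.card * q ^ 2 + Wf.card * q ^ 2 := by
      have := Nat.pos_of_ne_zero hW
      exact Nat.add_lt_add_left (Nat.mul_lt_mul_of_pos_left hlt this) _
    rw [hsum2] at this
    have : (q + 1) * q ^ 2 < (q + 1) * q ^ 2 := by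
      calc (q + 1) * q ^ 2 < Bf.card * q ^ 2 + Wf.card * q ^ 2 := this
        _ = (Bf.card + Wf.card) * q ^ 2 := by ring
        _ = (q + 1) * q ^ 2 := by rw [hsplit]
    omega
  have hfin : {p | IsBlack K S q p ∧ p ≤ l}.toFinite.toFinset = Bf := by
    ext p
    rw [Set.Finite.mem_toFinset, hBf, Finset.mem_filter, hs, Set.Finite.mem_toFinset]
    constructor
    · rintro ⟨⟨hpt, hn⟩, hpl⟩
      exact ⟨⟨hpt, hpl⟩, hn⟩
    · rintro ⟨⟨hpt, hpl⟩, hn⟩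
      exact ⟨⟨hpt, hn⟩, hpl⟩
  rw [Set.ncard_eq_toFinset_card _ (Set.toFinite _), hfin]
  omega

end Main

end Aux

/-- (i) every line of `PG(3,q)` contains `0`, `1`, `2` or `q+1`
black points; (ii) a line containing exactly two black points belongs to `S`. -/
theorem stmt_17 (K : Type) [Field K] [Fintype K] (q : ℕ) (hq : Fintype.card K = q)
    (hq_odd : Odd q) (S : Set (Submodule K (Fin 4 → K))) (hS : S ⊆ pgLine K)
    (h1 : P1 K S q) (h2 : P2 K S q) (h2a : P2a K S q) (h2b : P2b K S q) :
    (∀ l ∈ pgLine K,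
      {p | IsBlack K S q p ∧ p ≤ l}.ncard = 0 ∨
      {p | IsBlack K S q p ∧ p ≤ l}.ncard = 1 ∨
      {p | IsBlack K S q p ∧ p ≤ l}.ncard = 2 ∨
      {p | IsBlack K S q p ∧ p ≤ l}.ncard = q + 1) ∧
    (∀ l ∈ pgLine K, {p | IsBlack K S q p ∧ p ≤ l}.ncard = 2 → l ∈ S) := by
  classical
  have hq3 : 3 ≤ q := by
    have h2' : 2 ≤ q := hq ▸ Fintype.one_lt_card
    have := Nat.odd_iff.mp hq_odd
    omega
  have main2 : ∀ l ∈ pgLine K, l ∉ S → ∀ x y : Submodule K (Fin 4 → K),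
      IsBlack K S q x → IsBlack K S q y → x ≠ y → x ≤ l → y ≤ l →
      {p | IsBlack K S q p ∧ p ≤ l}.ncard = q + 1 := by
    intro l hl hlS x y hx hy hxy hxl hyl
    apply all_tangent_all_black hq hq_odd hS h1 hl
    intro π hπ hlπ
    rcases h2 π hπ with hsec | htan
    · exact (no_secant_two hq hq_odd hS h2 h2a h2b hl hlS hx hy hxy hxl hyl
        ⟨hπ, hsec⟩ hlπ).elim
    · exact htan
  refine ⟨?_, ?_⟩
  · intro l hl
    by_cases hsmall : {p | IsBlack K S q p ∧ p ≤ l}.ncard ≤ 2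
    · omega
    · push_neg at hsmall
      obtain ⟨T, hTB, hT3⟩ := Set.exists_subset_card_eq hsmall
      obtain ⟨x, y, z, hxy, hxz, hyz, rfl⟩ := Set.ncard_eq_three.mp hT3
      have hxB : IsBlack K S q x ∧ x ≤ l := hTB (by simp)
      have hyB : IsBlack K S q y ∧ y ≤ l := hTB (by simp)
      have hzB : IsBlack K S q z ∧ z ≤ l := hTB (by simp)
      right; right; right
      by_cases hlS : l ∈ S
      · apply all_tangent_all_black hq hq_odd hS h1 hl
        intro π hπ hlπ
        rcases h2 π hπ with hsec | htan
        · exact (no_secant_three hq hq_odd hS h2 h2a h2b hl hlS hxB.1 hyB.1 hzB.1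
            hxy hxz hyz hxB.2 hyB.2 hzB.2 ⟨hπ, hsec⟩ hlπ).elim
        · exact htan
      · exact main2 l hl hlS x y hxB.1 hyB.1 hxy hxB.2 hyB.2
  · intro l hl hc2
    by_contra hlS
    obtain ⟨x, y, hxy, hBxy⟩ := Set.ncard_eq_two.mp hc2
    have hxB : IsBlack K S q x ∧ x ≤ l := by
      have : x ∈ {p | IsBlack K S q p ∧ p ≤ l} := by rw [hBxy]; simp
      exact this
    have hyB : IsBlack K S q y ∧ y ≤ l := by
      have : y ∈ {p | IsBlack K S q p ∧ p ≤ l} := by rw [hBxy]; simp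
      exact this
    have hall := main2 l hl hlS x y hxB.1 hyB.1 hxy hxB.2 hyB.2
    omega
end

section
/- For every tangent plane π, the set of black points contained in π is either the point set of a single line of π or the union of the point sets of two distinct (necessarily intersecting) lines of π. -/
open Submodule Set

namespace Aux19

open Module

open scoped Classical
set_option linter.unusedSectionVars false
set_option linter.unnecessarySimpa false

variable {K : Type} [Field K] [Fintype K]

noncomputable instance : Fintype (Submodule K (Fin 4 → K)) :=
  Fintype.ofInjective (fun W => (W : Set (Fin 4 → K))) SetLike.coe_injective

lemma finrank_V : Module.finrank K (Fin 4 → K) = 4 := by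
  rw [Module.finrank_pi]; simp

lemma finrank_le4 (W : Submodule K (Fin 4 → K)) : finrank K W ≤ 4 := by
  have := Submodule.finrank_le W
  rwa [finrank_V] at this

/-- the set of points contained in a submodule -/
def pts (W : Submodule K (Fin 4 → K)) : Set (Submodule K (Fin 4 → K)) :=
  {p | p ∈ pgPoint K ∧ p ≤ W}

lemma card_submodule (W : Submodule K (Fin 4 → K)) :
    Nat.card W = Fintype.card K ^ finrank K W := by
  have : Fintype W := Fintype.ofFinite W
  rw [Nat.card_eq_fintype_card]
  exact card_eq_pow_finrank

lemma ncard_coe_sub (W : Submodule K (Fin 4 → K)) :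
    ((W : Set (Fin 4 → K)) \ {0}).ncard = Fintype.card K ^ finrank K W - 1 := by
  rw [Set.ncard_diff (by simpa using W.zero_mem) (Set.toFinite _)]
  have h1 : ((W : Set (Fin 4 → K))).ncard = Nat.card W := by
    rw [← Nat.card_coe_set_eq]
    rfl
  rw [h1, card_submodule, Set.ncard_singleton]

/-- Fundamental count: (#points of W) * (q-1) = q^dim W - 1. -/
lemma pts_mul (W : Submodule K (Fin 4 → K)) :
    (pts W).ncard * (Fintype.card K - 1) = Fintype.card K ^ finrank K W - 1 := by
  classical
  set q := Fintype.card K with hq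
  -- counting nonzero vectors of W fiberwise over the span map
  have key : ((W : Set (Fin 4 → K)) \ {0}).toFinset.card =
      ∑ p ∈ (pts W).toFinset, (((W : Set (Fin 4 → K)) \ {0}).toFinset.filter
        (fun v => (K ∙ v) = p)).card := by
    apply Finset.card_eq_sum_card_fiberwise
    intro v hv
    rw [Finset.mem_coe, Set.mem_toFinset] at hv
    obtain ⟨hvW, hv0⟩ := hv
    rw [Finset.mem_coe, Set.mem_toFinset]
    refine ⟨finrank_span_singleton (by simpa using hv0), ?_⟩
    rw [Submodule.span_singleton_le_iff_mem]; exact hvW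
  have fib : ∀ p ∈ (pts W).toFinset,
      (((W : Set (Fin 4 → K)) \ {0}).toFinset.filter (fun v => (K ∙ v) = p)).card = q - 1 := by
    intro p hp
    rw [Set.mem_toFinset] at hp
    obtain ⟨hp1, hpW⟩ := hp
    have hset : (((W : Set (Fin 4 → K)) \ {0}).toFinset.filter (fun v => (K ∙ v) = p)) =
        ((p : Set (Fin 4 → K)) \ {0}).toFinset := by
      ext v
      simp only [Finset.mem_filter, Set.mem_toFinset, Set.mem_diff, Set.mem_singleton_iff,
        SetLike.mem_coe]
      constructor
      · rintro ⟨⟨hvW, hv0⟩, hsp⟩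
        exact ⟨by rw [← hsp]; exact Submodule.mem_span_singleton_self v, hv0⟩
      · rintro ⟨hvp, hv0⟩
        have h1 : (K ∙ v) ≤ p := by rwa [Submodule.span_singleton_le_iff_mem]
        have h2 : (K ∙ v) = p := by
          apply Submodule.eq_of_le_of_finrank_le h1
          rw [hp1, finrank_span_singleton (by simpa using hv0)]
        exact ⟨⟨hpW hvp, hv0⟩, h2⟩
    rw [hset]
    have := ncard_coe_sub (K := K) p
    rw [hp1, pow_one] at this
    rw [← Set.ncard_eq_toFinset_card']
    exact this
  rw [Finset.sum_congr rfl fib, Finset.sum_const, smul_eq_mul] at key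
  rw [← Set.ncard_eq_toFinset_card', ← Set.ncard_eq_toFinset_card'] at key
  rw [ncard_coe_sub] at key
  rw [← key]

end Aux19

-- continuation fragment (will be appended to a.lean for testing)
namespace Aux19
open Module
open scoped Classical
set_option linter.unusedSectionVars false

variable {K : Type} [Field K] [Fintype K]

lemma qge2 : 2 ≤ Fintype.card K := Fintype.one_lt_card

lemma pts_count {W : Submodule K (Fin 4 → K)} {d n : ℕ} (hW : finrank K ↥W = d)
    (hn : n * (Fintype.card K - 1) = Fintype.card K ^ d - 1) : (pts W).ncard = n := by
  have h := pts_mul W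
  rw [hW, ← hn] at h
  have h2 : 2 ≤ Fintype.card K := qge2
  exact Nat.eq_of_mul_eq_mul_right (by omega) h

lemma pts_point {p : Submodule K (Fin 4 → K)} (hp : p ∈ pgPoint K) : (pts p).ncard = 1 := by
  apply pts_count hp; simp

lemma pts_line {l : Submodule K (Fin 4 → K)} (hl : l ∈ pgLine K) :
    (pts l).ncard = Fintype.card K + 1 := by
  apply pts_count hl
  obtain ⟨k, hk⟩ : ∃ k, Fintype.card K = k + 1 := ⟨Fintype.card K - 1, by have := qge2 (K := K); omega⟩
  rw [hk]
  simp only [Nat.add_sub_cancel]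
  have : (k + 1) ^ 2 = (k + 1 + 1) * k + 1 := by ring
  omega

lemma pts_plane {σ : Submodule K (Fin 4 → K)} (hσ : σ ∈ pgPlane K) :
    (pts σ).ncard = Fintype.card K ^ 2 + Fintype.card K + 1 := by
  apply pts_count hσ
  obtain ⟨k, hk⟩ : ∃ k, Fintype.card K = k + 1 := ⟨Fintype.card K - 1, by have := qge2 (K := K); omega⟩
  rw [hk]
  simp only [Nat.add_sub_cancel]
  have : (k + 1) ^ 3 = ((k + 1) ^ 2 + (k + 1) + 1) * k + 1 := by ring
  omega

lemma pts_total :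
    (pts (⊤ : Submodule K (Fin 4 → K))).ncard
      = Fintype.card K ^ 3 + Fintype.card K ^ 2 + Fintype.card K + 1 := by
  apply pts_count (d := 4) (by rw [finrank_top]; exact finrank_V)
  obtain ⟨k, hk⟩ : ∃ k, Fintype.card K = k + 1 := ⟨Fintype.card K - 1, by have := qge2 (K := K); omega⟩
  rw [hk]
  simp only [Nat.add_sub_cancel]
  have : (k + 1) ^ 4 = ((k + 1) ^ 3 + (k + 1) ^ 2 + (k + 1) + 1) * k + 1 := by ring
  omega

/-! rank utilities -/

lemma eq_of_le_rank {A B : Submodule K (Fin 4 → K)} (h : A ≤ B)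
    (hr : finrank K ↥B ≤ finrank K ↥A) : A = B :=
  Submodule.eq_of_le_of_finrank_le h hr

lemma point_le_point {p p' : Submodule K (Fin 4 → K)} (hp : p ∈ pgPoint K)
    (hp' : p' ∈ pgPoint K) (h : p ≤ p') : p = p' :=
  eq_of_le_rank h (by rw [hp, hp'])

lemma point_inf_bot {p p' : Submodule K (Fin 4 → K)} (hp : p ∈ pgPoint K)
    (hp' : p' ∈ pgPoint K) (hne : p ≠ p') : p ⊓ p' = ⊥ := by
  by_contra hbot
  have h1 : finrank K ↥(p ⊓ p') ≤ 1 := by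
    have := Submodule.finrank_mono (inf_le_left : p ⊓ p' ≤ p)
    rwa [hp] at this
  have h0 : finrank K ↥(p ⊓ p') ≠ 0 := by
    intro h
    exact hbot (Submodule.finrank_eq_zero.mp h)
  have heq : p ⊓ p' = p := eq_of_le_rank inf_le_left (by rw [hp]; omega)
  have : p ≤ p' := by rw [← heq]; exact inf_le_right
  exact hne (point_le_point hp hp' this)

lemma sup_points_line {p p' : Submodule K (Fin 4 → K)} (hp : p ∈ pgPoint K)
    (hp' : p' ∈ pgPoint K) (hne : p ≠ p') : (p ⊔ p') ∈ pgLine K := by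
  have h := Submodule.finrank_sup_add_finrank_inf_eq p p'
  rw [point_inf_bot hp hp' hne, hp, hp', finrank_bot] at h
  simpa [pgLine] using by omega

lemma point_not_le_inf_bot {p l : Submodule K (Fin 4 → K)} (hp : p ∈ pgPoint K)
    (hnl : ¬ p ≤ l) : p ⊓ l = ⊥ := by
  by_contra hbot
  have h1 : finrank K ↥(p ⊓ l) ≤ 1 := by
    have := Submodule.finrank_mono (inf_le_left : p ⊓ l ≤ p)
    rwa [hp] at this
  have h0 : finrank K ↥(p ⊓ l) ≠ 0 := fun h => hbot (Submodule.finrank_eq_zero.mp h)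
  have heq : p ⊓ l = p := eq_of_le_rank inf_le_left (by rw [hp]; omega)
  exact hnl (by rw [← heq]; exact inf_le_right)

lemma sup_line_point_plane {l p : Submodule K (Fin 4 → K)} (hl : l ∈ pgLine K)
    (hp : p ∈ pgPoint K) (hnl : ¬ p ≤ l) : (p ⊔ l) ∈ pgPlane K := by
  have h := Submodule.finrank_sup_add_finrank_inf_eq p l
  rw [point_not_le_inf_bot hp hnl, hp, hl, finrank_bot] at h
  simpa [pgPlane] using by omega

lemma line_inf_point {l m x : Submodule K (Fin 4 → K)} (hl : l ∈ pgLine K)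
    (hm : m ∈ pgLine K) (hne : l ≠ m) (hx : x ∈ pgPoint K) (hxl : x ≤ l) (hxm : x ≤ m) :
    l ⊓ m = x := by
  have hinf : x ≤ l ⊓ m := le_inf hxl hxm
  have h2 : finrank K ↥(l ⊓ m) ≤ 2 := by
    have := Submodule.finrank_mono (inf_le_left : l ⊓ m ≤ l)
    rwa [hl] at this
  rcases Nat.lt_or_ge (finrank K ↥(l ⊓ m)) 2 with h | h
  · exact (eq_of_le_rank hinf (by rw [hx]; omega)).symm
  · exfalso
    have heq : l ⊓ m = l := eq_of_le_rank inf_le_left (by rw [hl]; omega)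
    have : l ≤ m := by rw [← heq]; exact inf_le_right
    exact hne (eq_of_le_rank this (by rw [hl, hm]))

lemma lines_common_point_plane {l m x : Submodule K (Fin 4 → K)} (hl : l ∈ pgLine K)
    (hm : m ∈ pgLine K) (hne : l ≠ m) (hx : x ∈ pgPoint K) (hxl : x ≤ l) (hxm : x ≤ m) :
    (l ⊔ m) ∈ pgPlane K := by
  have h := Submodule.finrank_sup_add_finrank_inf_eq l m
  rw [line_inf_point hl hm hne hx hxl hxm, hl, hm, hx] at h
  simpa [pgPlane] using by omega

lemma planes_inf_line {σ σ' : Submodule K (Fin 4 → K)} (hσ : σ ∈ pgPlane K)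
    (hσ' : σ' ∈ pgPlane K) (hne : σ ≠ σ') : (σ ⊓ σ') ∈ pgLine K := by
  have hsup : finrank K ↥(σ ⊔ σ') = 4 := by
    have hle : finrank K ↥(σ ⊔ σ') ≤ 4 := finrank_le4 _
    have hge : 3 ≤ finrank K ↥(σ ⊔ σ') := by
      have := Submodule.finrank_mono (le_sup_left : σ ≤ σ ⊔ σ')
      rwa [hσ] at this
    rcases Nat.lt_or_ge (finrank K ↥(σ ⊔ σ')) 4 with h | h
    · exfalso
      have h1 : σ = σ ⊔ σ' := eq_of_le_rank le_sup_left (by rw [hσ]; omega)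
      have h2 : σ' = σ ⊔ σ' := eq_of_le_rank le_sup_right (by rw [hσ']; omega)
      exact hne (h1.trans h2.symm)
    · omega
  have h := Submodule.finrank_sup_add_finrank_inf_eq σ σ'
  rw [hsup, hσ, hσ'] at h
  simpa [pgLine] using by omega

lemma lines_in_plane_meet {l m σ : Submodule K (Fin 4 → K)} (hl : l ∈ pgLine K)
    (hm : m ∈ pgLine K) (hne : l ≠ m) (hσ : σ ∈ pgPlane K) (hlσ : l ≤ σ) (hmσ : m ≤ σ) :
    (l ⊓ m) ∈ pgPoint K := by
  have hsup : finrank K ↥(l ⊔ m) ≤ 3 := by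
    have := Submodule.finrank_mono (sup_le hlσ hmσ)
    rwa [hσ] at this
  have h := Submodule.finrank_sup_add_finrank_inf_eq l m
  rw [hl, hm] at h
  have h2 : finrank K ↥(l ⊓ m) ≤ 2 := by
    have := Submodule.finrank_mono (inf_le_left : l ⊓ m ≤ l)
    rwa [hl] at this
  rcases Nat.lt_or_ge (finrank K ↥(l ⊓ m)) 2 with hc | hc
  · have : finrank K ↥(l ⊓ m) = 1 := by omega
    exact this
  · exfalso
    have heq : l ⊓ m = l := eq_of_le_rank inf_le_left (by rw [hl]; omega)
    have : l ≤ m := by rw [← heq]; exact inf_le_right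
    exact hne (eq_of_le_rank this (by rw [hl, hm]))

lemma line_le_plane_inf {l σ σ' : Submodule K (Fin 4 → K)} (hσ : σ ∈ pgPlane K)
    (hσ' : σ' ∈ pgPlane K) (hne : σ ≠ σ') (hl : l ∈ pgLine K) (h1 : l ≤ σ) (h2 : l ≤ σ') :
    l = σ ⊓ σ' := by
  have := planes_inf_line hσ hσ' hne
  exact eq_of_le_rank (le_inf h1 h2) (by rw [hl, this])

/-- existence of a second point on a line -/
lemma exists_second_point {l x : Submodule K (Fin 4 → K)} (hl : l ∈ pgLine K)
    (hx : x ∈ pgPoint K) : ∃ p, p ∈ pgPoint K ∧ p ≤ l ∧ p ≠ x := by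
  have hcard := pts_line hl
  have h2 : 2 ≤ (pts l).ncard := by have := qge2 (K := K); omega
  have hfin : (pts l).Finite := Set.toFinite _
  by_contra hcon
  push_neg at hcon
  have hsub : pts l ⊆ {x} := by
    intro p hp
    rcases eq_or_ne p x with h | h
    · simp [h]
    · exact absurd (hcon p hp.1 hp.2) (by simpa using h)
  have := Set.ncard_le_ncard hsub (Set.finite_singleton x)
  rw [Set.ncard_singleton] at this
  omega

end Aux19

namespace Aux19
open Module
open scoped Classical
set_option linter.unusedSectionVars false
set_option maxHeartbeats 800000

variable {K : Type} [Field K] [Fintype K]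

lemma ncard_diff_pts {A : Set (Submodule K (Fin 4 → K))} {B : Set (Submodule K (Fin 4 → K))}
    (h : B ⊆ A) : (A \ B).ncard = A.ncard - B.ncard :=
  Set.ncard_diff h (Set.toFinite _)

lemma thru_count {x U : Submodule K (Fin 4 → K)} (hx : x ∈ pgPoint K) (hxU : x ≤ U) :
    {l | l ∈ pgLine K ∧ x ≤ l ∧ l ≤ U}.ncard * Fintype.card K = (pts U).ncard - 1 := by
  classical
  have key : (pts U \ {x}).toFinset.card =
      ∑ l ∈ {l | l ∈ pgLine K ∧ x ≤ l ∧ l ≤ U}.toFinset,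
        ((pts U \ {x}).toFinset.filter (fun p => x ⊔ p = l)).card := by
    apply Finset.card_eq_sum_card_fiberwise
    intro p hp
    rw [Finset.mem_coe, Set.mem_toFinset] at hp ⊢
    obtain ⟨⟨hp1, hpU⟩, hpx⟩ := hp
    have hne : x ≠ p := fun h => hpx (by simp [h.symm])
    exact ⟨sup_points_line hx hp1 hne, le_sup_left, sup_le hxU hpU⟩
  have fib : ∀ l ∈ {l | l ∈ pgLine K ∧ x ≤ l ∧ l ≤ U}.toFinset,
      ((pts U \ {x}).toFinset.filter (fun p => x ⊔ p = l)).card = Fintype.card K := by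
    intro l hl
    rw [Set.mem_toFinset] at hl
    obtain ⟨hl2, hxl, hlU⟩ := hl
    have hset : ((pts U \ {x}).toFinset.filter (fun p => x ⊔ p = l)) =
        (pts l \ {x}).toFinset := by
      ext p
      simp only [Finset.mem_filter, Set.mem_toFinset, Set.mem_diff, Set.mem_singleton_iff]
      constructor
      · rintro ⟨⟨⟨hp1, _⟩, hpx⟩, hsup⟩
        exact ⟨⟨hp1, by rw [← hsup]; exact le_sup_right⟩, hpx⟩
      · rintro ⟨⟨hp1, hpl⟩, hpx⟩
        have hne : x ≠ p := fun h => hpx (by simp [h.symm])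
        refine ⟨⟨⟨hp1, le_trans hpl hlU⟩, hpx⟩, ?_⟩
        apply eq_of_le_rank (sup_le hxl hpl)
        rw [hl2, sup_points_line hx hp1 hne]
    rw [hset, ← Set.ncard_eq_toFinset_card', ncard_diff_pts (by simp [pts, hx, hxl]),
      pts_line hl2, Set.ncard_singleton]
    omega
  rw [Finset.sum_congr rfl fib, Finset.sum_const, smul_eq_mul,
    ← Set.ncard_eq_toFinset_card', ← Set.ncard_eq_toFinset_card',
    ncard_diff_pts (by simp [pts, hx, hxU]), Set.ncard_singleton] at key
  omega

lemma lines_thru_plane {x σ : Submodule K (Fin 4 → K)} (hx : x ∈ pgPoint K)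
    (hσ : σ ∈ pgPlane K) (hxσ : x ≤ σ) :
    {l | l ∈ pgLine K ∧ x ≤ l ∧ l ≤ σ}.ncard = Fintype.card K + 1 := by
  have h := thru_count hx hxσ
  rw [pts_plane hσ] at h
  have h2 : 2 ≤ Fintype.card K := qge2
  have : (Fintype.card K + 1) * Fintype.card K = Fintype.card K ^ 2 + Fintype.card K + 1 - 1 := by
    have e0 : Fintype.card K ^ 2 = Fintype.card K * Fintype.card K := by ring
    have e1 : (Fintype.card K + 1) * Fintype.card K
        = Fintype.card K * Fintype.card K + Fintype.card K := by ring
    omega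
  exact Nat.eq_of_mul_eq_mul_right (by omega) (h.trans this.symm)

lemma lines_thru_pt {x : Submodule K (Fin 4 → K)} (hx : x ∈ pgPoint K) :
    {l | l ∈ pgLine K ∧ x ≤ l}.ncard = Fintype.card K ^ 2 + Fintype.card K + 1 := by
  have h := thru_count hx (le_top : x ≤ ⊤)
  rw [pts_total] at h
  have hset : {l | l ∈ pgLine K ∧ x ≤ l ∧ l ≤ (⊤ : Submodule K (Fin 4 → K))} =
      {l | l ∈ pgLine K ∧ x ≤ l} := by
    ext l; simp
  rw [hset] at h
  have h2 : 2 ≤ Fintype.card K := qge2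
  have heq : (Fintype.card K ^ 2 + Fintype.card K + 1) * Fintype.card K =
      Fintype.card K ^ 3 + Fintype.card K ^ 2 + Fintype.card K + 1 - 1 := by
    have e1 : Fintype.card K ^ 2 * Fintype.card K = Fintype.card K ^ 3 := by ring
    have e2 : Fintype.card K * Fintype.card K = Fintype.card K ^ 2 := by ring
    have e3 : (Fintype.card K ^ 2 + Fintype.card K + 1) * Fintype.card K =
        Fintype.card K ^ 2 * Fintype.card K + Fintype.card K * Fintype.card K
          + Fintype.card K := by ring
    omega
  exact Nat.eq_of_mul_eq_mul_right (by omega) (h.trans heq.symm)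

lemma planes_thru_line {l : Submodule K (Fin 4 → K)} (hl : l ∈ pgLine K) :
    {σ | σ ∈ pgPlane K ∧ l ≤ σ}.ncard = Fintype.card K + 1 := by
  classical
  have key : ((pts (⊤ : Submodule K (Fin 4 → K))) \ (pts l)).toFinset.card =
      ∑ σ ∈ {σ | σ ∈ pgPlane K ∧ l ≤ σ}.toFinset,
        (((pts (⊤ : Submodule K (Fin 4 → K))) \ (pts l)).toFinset.filter
          (fun p => p ⊔ l = σ)).card := by
    apply Finset.card_eq_sum_card_fiberwise
    intro p hp
    rw [Finset.mem_coe, Set.mem_toFinset] at hp ⊢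
    obtain ⟨⟨hp1, _⟩, hpl⟩ := hp
    have hnle : ¬ p ≤ l := fun h => hpl ⟨hp1, h⟩
    exact ⟨sup_line_point_plane hl hp1 hnle, le_sup_right⟩
  have fib : ∀ σ ∈ {σ | σ ∈ pgPlane K ∧ l ≤ σ}.toFinset,
      (((pts (⊤ : Submodule K (Fin 4 → K))) \ (pts l)).toFinset.filter
        (fun p => p ⊔ l = σ)).card = Fintype.card K ^ 2 := by
    intro σ hσ
    rw [Set.mem_toFinset] at hσ
    obtain ⟨hσ3, hlσ⟩ := hσ
    have hset : (((pts (⊤ : Submodule K (Fin 4 → K))) \ (pts l)).toFinset.filter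
        (fun p => p ⊔ l = σ)) = (pts σ \ pts l).toFinset := by
      ext p
      simp only [Finset.mem_filter, Set.mem_toFinset, Set.mem_diff]
      constructor
      · rintro ⟨⟨⟨hp1, _⟩, hpl⟩, hsup⟩
        exact ⟨⟨hp1, by rw [← hsup]; exact le_sup_left⟩, hpl⟩
      · rintro ⟨⟨hp1, hpσ⟩, hpl⟩
        have hnle : ¬ p ≤ l := fun h => hpl ⟨hp1, h⟩
        refine ⟨⟨⟨hp1, le_top⟩, hpl⟩, ?_⟩
        apply eq_of_le_rank (sup_le hpσ hlσ)
        rw [hσ3, sup_line_point_plane hl hp1 hnle]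
    have hsub : pts l ⊆ pts σ := fun p hp => ⟨hp.1, le_trans hp.2 hlσ⟩
    rw [hset, ← Set.ncard_eq_toFinset_card', ncard_diff_pts hsub, pts_plane hσ3, pts_line hl]
    omega
  rw [Finset.sum_congr rfl fib, Finset.sum_const, smul_eq_mul,
    ← Set.ncard_eq_toFinset_card', ← Set.ncard_eq_toFinset_card',
    ncard_diff_pts (by intro p hp; exact ⟨hp.1, le_top⟩), pts_total, pts_line hl] at key
  have h2 : 2 ≤ Fintype.card K := qge2
  have heq : Fintype.card K ^ 3 + Fintype.card K ^ 2 + Fintype.card K + 1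
      - (Fintype.card K + 1) = (Fintype.card K + 1) * Fintype.card K ^ 2 := by
    have e1 : (Fintype.card K + 1) * Fintype.card K ^ 2 =
        Fintype.card K ^ 3 + Fintype.card K ^ 2 := by ring
    omega
  rw [heq] at key
  have hq2 : 0 < Fintype.card K ^ 2 := by positivity
  exact Nat.eq_of_mul_eq_mul_right hq2 key.symm

lemma dcount {α β : Type} [DecidableEq α] [DecidableEq β] (A : Finset α) (B : Finset β)
    (R : α → β → Prop) [∀ a b, Decidable (R a b)] :
    ∑ a ∈ A, (B.filter (fun b => R a b)).card = ∑ b ∈ B, (A.filter (fun a => R a b)).card := by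
  simp_rw [Finset.card_filter]
  rw [Finset.sum_comm]

lemma planes_thru_pt {x : Submodule K (Fin 4 → K)} (hx : x ∈ pgPoint K) :
    {σ | σ ∈ pgPlane K ∧ x ≤ σ}.ncard = Fintype.card K ^ 2 + Fintype.card K + 1 := by
  classical
  have h := dcount {σ | σ ∈ pgPlane K ∧ x ≤ σ}.toFinset {l | l ∈ pgLine K ∧ x ≤ l}.toFinset
    (fun σ l => l ≤ σ)
  have lhs : ∀ σ ∈ {σ | σ ∈ pgPlane K ∧ x ≤ σ}.toFinset,
      ({l | l ∈ pgLine K ∧ x ≤ l}.toFinset.filter (fun l => l ≤ σ)).card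
        = Fintype.card K + 1 := by
    intro σ hσ
    rw [Set.mem_toFinset] at hσ
    have hset : {l | l ∈ pgLine K ∧ x ≤ l}.toFinset.filter (fun l => l ≤ σ)
        = {l | l ∈ pgLine K ∧ x ≤ l ∧ l ≤ σ}.toFinset := by
      ext l
      simp only [Finset.mem_filter, Set.mem_toFinset, Set.mem_setOf_eq]
      tauto
    rw [hset, ← Set.ncard_eq_toFinset_card', lines_thru_plane hx hσ.1 hσ.2]
  have rhs : ∀ l ∈ {l | l ∈ pgLine K ∧ x ≤ l}.toFinset,
      ({σ | σ ∈ pgPlane K ∧ x ≤ σ}.toFinset.filter (fun σ => l ≤ σ)).card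
        = Fintype.card K + 1 := by
    intro l hl
    rw [Set.mem_toFinset] at hl
    have hset : {σ | σ ∈ pgPlane K ∧ x ≤ σ}.toFinset.filter (fun σ => l ≤ σ)
        = {σ | σ ∈ pgPlane K ∧ l ≤ σ}.toFinset := by
      ext σ
      simp only [Finset.mem_filter, Set.mem_toFinset, Set.mem_setOf_eq]
      constructor
      · rintro ⟨⟨h1, _⟩, h3⟩; exact ⟨h1, h3⟩
      · rintro ⟨h1, h3⟩; exact ⟨⟨h1, le_trans hl.2 h3⟩, h3⟩
    rw [hset, ← Set.ncard_eq_toFinset_card', planes_thru_line hl.1]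
  rw [Finset.sum_congr rfl lhs, Finset.sum_congr rfl rhs, Finset.sum_const, Finset.sum_const,
    smul_eq_mul, smul_eq_mul, ← Set.ncard_eq_toFinset_card', ← Set.ncard_eq_toFinset_card',
    lines_thru_pt hx] at h
  have h2 : 2 ≤ Fintype.card K := qge2
  exact Nat.eq_of_mul_eq_mul_right (by omega) h

end Aux19

namespace Aux19
open Module
open scoped Classical
set_option linter.unusedSectionVars false
set_option maxHeartbeats 1000000

variable {K : Type} [Field K] [Fintype K] {S : Set (Submodule K (Fin 4 → K))}

/-- B1: summing pencils over the planes through a point. -/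
lemma sum_pencil_pt (hS : S ⊆ pgLine K) {x : Submodule K (Fin 4 → K)} (hx : x ∈ pgPoint K) :
    ∑ σ ∈ {σ | σ ∈ pgPlane K ∧ x ≤ σ}.toFinset, (pencilS K S x σ).ncard
      = (Fintype.card K + 1) * (linesThru K S x).ncard := by
  classical
  have h := dcount {σ | σ ∈ pgPlane K ∧ x ≤ σ}.toFinset (linesThru K S x).toFinset
    (fun σ m => m ≤ σ)
  have lhs : ∀ σ ∈ {σ | σ ∈ pgPlane K ∧ x ≤ σ}.toFinset,
      ((linesThru K S x).toFinset.filter (fun m => m ≤ σ)).card = (pencilS K S x σ).ncard := by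
    intro σ _
    rw [Set.ncard_eq_toFinset_card']
    congr 1
    ext m
    simp only [Finset.mem_filter, Set.mem_toFinset]; simp only [linesThru, pencilS, Set.mem_setOf_eq]
    tauto
  have rhs : ∀ m ∈ (linesThru K S x).toFinset,
      ({σ | σ ∈ pgPlane K ∧ x ≤ σ}.toFinset.filter (fun σ => m ≤ σ)).card
        = Fintype.card K + 1 := by
    intro m hm
    rw [Set.mem_toFinset] at hm
    have hset : {σ | σ ∈ pgPlane K ∧ x ≤ σ}.toFinset.filter (fun σ => m ≤ σ)
        = {σ | σ ∈ pgPlane K ∧ m ≤ σ}.toFinset := by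
      ext σ
      simp only [Finset.mem_filter, Set.mem_toFinset, Set.mem_setOf_eq]
      constructor
      · rintro ⟨⟨h1, _⟩, h3⟩; exact ⟨h1, h3⟩
      · rintro ⟨h1, h3⟩; exact ⟨⟨h1, le_trans hm.2 h3⟩, h3⟩
    rw [hset, ← Set.ncard_eq_toFinset_card', planes_thru_line (hS hm.1)]
  rw [Finset.sum_congr rfl lhs] at h
  rw [h, Finset.sum_congr rfl rhs, Finset.sum_const, smul_eq_mul,
    ← Set.ncard_eq_toFinset_card', mul_comm]

/-- B2 (case ℓ ∉ S): summing pencils over the planes through a line, at a point of it. -/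
lemma sum_pencil_line_notS (hS : S ⊆ pgLine K) {ℓ x : Submodule K (Fin 4 → K)}
    (hl : ℓ ∈ pgLine K) (hlS : ℓ ∉ S) (hx : x ∈ pgPoint K) (hxl : x ≤ ℓ) :
    ∑ σ ∈ {σ | σ ∈ pgPlane K ∧ ℓ ≤ σ}.toFinset, (pencilS K S x σ).ncard
      = (linesThru K S x).ncard := by
  classical
  have h := dcount {σ | σ ∈ pgPlane K ∧ ℓ ≤ σ}.toFinset (linesThru K S x).toFinset
    (fun σ m => m ≤ σ)
  have lhs : ∀ σ ∈ {σ | σ ∈ pgPlane K ∧ ℓ ≤ σ}.toFinset,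
      ((linesThru K S x).toFinset.filter (fun m => m ≤ σ)).card = (pencilS K S x σ).ncard := by
    intro σ _
    rw [Set.ncard_eq_toFinset_card']
    congr 1
    ext m
    simp only [Finset.mem_filter, Set.mem_toFinset]; simp only [linesThru, pencilS, Set.mem_setOf_eq]
    tauto
  have rhs : ∀ m ∈ (linesThru K S x).toFinset,
      ({σ | σ ∈ pgPlane K ∧ ℓ ≤ σ}.toFinset.filter (fun σ => m ≤ σ)).card = 1 := by
    intro m hm
    rw [Set.mem_toFinset] at hm
    have hne : ℓ ≠ m := fun h => hlS (h ▸ hm.1)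
    have hplane : (ℓ ⊔ m) ∈ pgPlane K :=
      lines_common_point_plane hl (hS hm.1) hne hx hxl hm.2
    have hset : {σ | σ ∈ pgPlane K ∧ ℓ ≤ σ}.toFinset.filter (fun σ => m ≤ σ) = {ℓ ⊔ m} := by
      ext σ
      simp only [Finset.mem_filter, Set.mem_toFinset, Set.mem_setOf_eq, Finset.mem_singleton]
      constructor
      · rintro ⟨⟨h1, h2⟩, h3⟩
        exact (eq_of_le_rank (sup_le h2 h3) (by rw [h1, hplane])).symm
      · rintro rfl
        exact ⟨⟨hplane, le_sup_left⟩, le_sup_right⟩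
    rw [hset, Finset.card_singleton]
  rw [Finset.sum_congr rfl lhs] at h
  rw [h, Finset.sum_congr rfl rhs, Finset.sum_const, smul_eq_mul, mul_one,
    ← Set.ncard_eq_toFinset_card']

/-- B2 (case ℓ ∈ S). -/
lemma sum_pencil_line_S (hS : S ⊆ pgLine K) {ℓ x : Submodule K (Fin 4 → K)}
    (hlS : ℓ ∈ S) (hx : x ∈ pgPoint K) (hxl : x ≤ ℓ) :
    ∑ σ ∈ {σ | σ ∈ pgPlane K ∧ ℓ ≤ σ}.toFinset, (pencilS K S x σ).ncard
      = (linesThru K S x).ncard + Fintype.card K := by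
  classical
  have hl : ℓ ∈ pgLine K := hS hlS
  have h := dcount {σ | σ ∈ pgPlane K ∧ ℓ ≤ σ}.toFinset (linesThru K S x).toFinset
    (fun σ m => m ≤ σ)
  have lhs : ∀ σ ∈ {σ | σ ∈ pgPlane K ∧ ℓ ≤ σ}.toFinset,
      ((linesThru K S x).toFinset.filter (fun m => m ≤ σ)).card = (pencilS K S x σ).ncard := by
    intro σ _
    rw [Set.ncard_eq_toFinset_card']
    congr 1
    ext m
    simp only [Finset.mem_filter, Set.mem_toFinset]; simp only [linesThru, pencilS, Set.mem_setOf_eq]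
    tauto
  have hmem : ℓ ∈ (linesThru K S x).toFinset := by
    rw [Set.mem_toFinset]; exact ⟨hlS, hxl⟩
  have rhs : ∀ m ∈ (linesThru K S x).toFinset.erase ℓ,
      ({σ | σ ∈ pgPlane K ∧ ℓ ≤ σ}.toFinset.filter (fun σ => m ≤ σ)).card = 1 := by
    intro m hm'
    have hne : ℓ ≠ m := (Finset.ne_of_mem_erase hm').symm
    have hm := Finset.mem_of_mem_erase hm'
    rw [Set.mem_toFinset] at hm
    have hplane : (ℓ ⊔ m) ∈ pgPlane K :=
      lines_common_point_plane hl (hS hm.1) hne hx hxl hm.2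
    have hset : {σ | σ ∈ pgPlane K ∧ ℓ ≤ σ}.toFinset.filter (fun σ => m ≤ σ) = {ℓ ⊔ m} := by
      ext σ
      simp only [Finset.mem_filter, Set.mem_toFinset, Set.mem_setOf_eq, Finset.mem_singleton]
      constructor
      · rintro ⟨⟨h1, h2⟩, h3⟩
        exact (eq_of_le_rank (sup_le h2 h3) (by rw [h1, hplane])).symm
      · rintro rfl
        exact ⟨⟨hplane, le_sup_left⟩, le_sup_right⟩
    rw [hset, Finset.card_singleton]
  have hself : ({σ | σ ∈ pgPlane K ∧ ℓ ≤ σ}.toFinset.filter (fun σ => ℓ ≤ σ)).card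
      = Fintype.card K + 1 := by
    have hset : {σ | σ ∈ pgPlane K ∧ ℓ ≤ σ}.toFinset.filter (fun σ => ℓ ≤ σ)
        = {σ | σ ∈ pgPlane K ∧ ℓ ≤ σ}.toFinset := by
      apply Finset.filter_true_of_mem
      intro σ hσ
      rw [Set.mem_toFinset] at hσ
      exact hσ.2
    rw [hset, ← Set.ncard_eq_toFinset_card', planes_thru_line hl]
  rw [Finset.sum_congr rfl lhs] at h
  rw [h, ← Finset.add_sum_erase _ _ hmem, hself, Finset.sum_congr rfl rhs, Finset.sum_const,
    smul_eq_mul, mul_one, Finset.card_erase_of_mem hmem, ← Set.ncard_eq_toFinset_card']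
  have hpos : 0 < (linesThru K S x).ncard := by
    rw [Set.ncard_eq_toFinset_card']
    exact Finset.card_pos.mpr ⟨ℓ, hmem⟩
  omega

end Aux19

namespace Aux19
open Module
open scoped Classical
set_option linter.unusedSectionVars false
set_option linter.unusedVariables false
set_option maxHeartbeats 1000000

variable {K : Type} [Field K] [Fintype K] {S : Set (Submodule K (Fin 4 → K))}

/-- B3 (case ℓ ∉ S): summing pencils over the points of a line in a fixed plane. -/
lemma sum_pts_pencil_notS (hS : S ⊆ pgLine K) {σ ℓ : Submodule K (Fin 4 → K)}
    (hσ : σ ∈ pgPlane K) (hl : ℓ ∈ pgLine K) (hlσ : ℓ ≤ σ) (hlS : ℓ ∉ S) :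
    ∑ x ∈ (pts ℓ).toFinset, (pencilS K S x σ).ncard = (linesIn K S σ).ncard := by
  classical
  have h := dcount (pts ℓ).toFinset (linesIn K S σ).toFinset (fun x m => x ≤ m)
  have lhs : ∀ x ∈ (pts ℓ).toFinset,
      ((linesIn K S σ).toFinset.filter (fun m => x ≤ m)).card = (pencilS K S x σ).ncard := by
    intro x _
    rw [Set.ncard_eq_toFinset_card']
    congr 1
    ext m
    simp only [Finset.mem_filter, Set.mem_toFinset]; simp only [linesIn, pencilS, Set.mem_setOf_eq]
    tauto
  have rhs : ∀ m ∈ (linesIn K S σ).toFinset,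
      ((pts ℓ).toFinset.filter (fun x => x ≤ m)).card = 1 := by
    intro m hm
    rw [Set.mem_toFinset] at hm
    have hne : ℓ ≠ m := fun h => hlS (h ▸ hm.1)
    have hpt : (ℓ ⊓ m) ∈ pgPoint K :=
      lines_in_plane_meet hl (hS hm.1) hne hσ hlσ hm.2
    have hset : (pts ℓ).toFinset.filter (fun x => x ≤ m) = {ℓ ⊓ m} := by
      ext x
      simp only [Finset.mem_filter, Set.mem_toFinset, Finset.mem_singleton]; simp only [pts,
        Set.mem_setOf_eq]
      constructor
      · rintro ⟨⟨h1, h2⟩, h3⟩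
        exact point_le_point h1 hpt (le_inf h2 h3)
      · rintro rfl
        exact ⟨⟨hpt, inf_le_left⟩, inf_le_right⟩
    rw [hset, Finset.card_singleton]
  rw [Finset.sum_congr rfl lhs] at h
  rw [h, Finset.sum_congr rfl rhs, Finset.sum_const, smul_eq_mul, mul_one,
    ← Set.ncard_eq_toFinset_card']

/-- B3 (case ℓ ∈ S). -/
lemma sum_pts_pencil_S (hS : S ⊆ pgLine K) {σ ℓ : Submodule K (Fin 4 → K)}
    (hσ : σ ∈ pgPlane K) (hlσ : ℓ ≤ σ) (hlS : ℓ ∈ S) :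
    ∑ x ∈ (pts ℓ).toFinset, (pencilS K S x σ).ncard
      = (linesIn K S σ).ncard + Fintype.card K := by
  classical
  have hl : ℓ ∈ pgLine K := hS hlS
  have h := dcount (pts ℓ).toFinset (linesIn K S σ).toFinset (fun x m => x ≤ m)
  have lhs : ∀ x ∈ (pts ℓ).toFinset,
      ((linesIn K S σ).toFinset.filter (fun m => x ≤ m)).card = (pencilS K S x σ).ncard := by
    intro x _
    rw [Set.ncard_eq_toFinset_card']
    congr 1
    ext m
    simp only [Finset.mem_filter, Set.mem_toFinset]; simp only [linesIn, pencilS, Set.mem_setOf_eq]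
    tauto
  have hmem : ℓ ∈ (linesIn K S σ).toFinset := by
    rw [Set.mem_toFinset]; exact ⟨hlS, hlσ⟩
  have rhs : ∀ m ∈ (linesIn K S σ).toFinset.erase ℓ,
      ((pts ℓ).toFinset.filter (fun x => x ≤ m)).card = 1 := by
    intro m hm'
    have hne : ℓ ≠ m := (Finset.ne_of_mem_erase hm').symm
    have hm := Finset.mem_of_mem_erase hm'
    rw [Set.mem_toFinset] at hm
    have hpt : (ℓ ⊓ m) ∈ pgPoint K :=
      lines_in_plane_meet hl (hS hm.1) hne hσ hlσ hm.2
    have hset : (pts ℓ).toFinset.filter (fun x => x ≤ m) = {ℓ ⊓ m} := by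
      ext x
      simp only [Finset.mem_filter, Set.mem_toFinset, Finset.mem_singleton]; simp only [pts,
        Set.mem_setOf_eq]
      constructor
      · rintro ⟨⟨h1, h2⟩, h3⟩
        exact point_le_point h1 hpt (le_inf h2 h3)
      · rintro rfl
        exact ⟨⟨hpt, inf_le_left⟩, inf_le_right⟩
    rw [hset, Finset.card_singleton]
  have hself : ((pts ℓ).toFinset.filter (fun x => x ≤ ℓ)).card = Fintype.card K + 1 := by
    have hset : (pts ℓ).toFinset.filter (fun x => x ≤ ℓ) = (pts ℓ).toFinset := by
      apply Finset.filter_true_of_mem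
      intro x hx
      rw [Set.mem_toFinset] at hx
      exact hx.2
    rw [hset, ← Set.ncard_eq_toFinset_card', pts_line hl]
  rw [Finset.sum_congr rfl lhs] at h
  rw [h, ← Finset.add_sum_erase _ _ hmem, hself, Finset.sum_congr rfl rhs, Finset.sum_const,
    smul_eq_mul, mul_one, Finset.card_erase_of_mem hmem, ← Set.ncard_eq_toFinset_card']
  have hpos : 0 < (linesIn K S σ).ncard := by
    rw [Set.ncard_eq_toFinset_card']
    exact Finset.card_pos.mpr ⟨ℓ, hmem⟩
  omega

/-- B4: summing pencils over all points of a plane. -/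
lemma sum_plane_pencil (hS : S ⊆ pgLine K) {σ : Submodule K (Fin 4 → K)}
    (hσ : σ ∈ pgPlane K) :
    ∑ x ∈ (pts σ).toFinset, (pencilS K S x σ).ncard
      = (Fintype.card K + 1) * (linesIn K S σ).ncard := by
  classical
  have h := dcount (pts σ).toFinset (linesIn K S σ).toFinset (fun x m => x ≤ m)
  have lhs : ∀ x ∈ (pts σ).toFinset,
      ((linesIn K S σ).toFinset.filter (fun m => x ≤ m)).card = (pencilS K S x σ).ncard := by
    intro x _
    rw [Set.ncard_eq_toFinset_card']
    congr 1
    ext m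
    simp only [Finset.mem_filter, Set.mem_toFinset]; simp only [linesIn, pencilS, Set.mem_setOf_eq]
    tauto
  have rhs : ∀ m ∈ (linesIn K S σ).toFinset,
      ((pts σ).toFinset.filter (fun x => x ≤ m)).card = Fintype.card K + 1 := by
    intro m hm
    rw [Set.mem_toFinset] at hm
    have hset : (pts σ).toFinset.filter (fun x => x ≤ m) = (pts m).toFinset := by
      ext x
      simp only [Finset.mem_filter, Set.mem_toFinset]; simp only [pts, Set.mem_setOf_eq]
      constructor
      · rintro ⟨⟨h1, _⟩, h3⟩; exact ⟨h1, h3⟩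
      · rintro ⟨h1, h3⟩; exact ⟨⟨h1, le_trans h3 hm.2⟩, h3⟩
    rw [hset, ← Set.ncard_eq_toFinset_card', pts_line (hS hm.1)]
  rw [Finset.sum_congr rfl lhs] at h
  rw [h, Finset.sum_congr rfl rhs, Finset.sum_const, smul_eq_mul,
    ← Set.ncard_eq_toFinset_card', mul_comm]

end Aux19

namespace Aux19
open Module
open scoped Classical
set_option linter.unusedSectionVars false
set_option linter.unusedVariables false
set_option maxHeartbeats 1000000

variable {K : Type} [Field K] [Fintype K] {S : Set (Submodule K (Fin 4 → K))} {q : ℕ}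

/-- number of lines inside a plane -/
lemma lines_in_plane_count {σ : Submodule K (Fin 4 → K)} (hσ : σ ∈ pgPlane K) :
    {l | l ∈ pgLine K ∧ l ≤ σ}.ncard = Fintype.card K ^ 2 + Fintype.card K + 1 := by
  classical
  have h := dcount (pts σ).toFinset {l | l ∈ pgLine K ∧ l ≤ σ}.toFinset (fun x l => x ≤ l)
  have lhs : ∀ x ∈ (pts σ).toFinset,
      ({l | l ∈ pgLine K ∧ l ≤ σ}.toFinset.filter (fun l => x ≤ l)).card
        = Fintype.card K + 1 := by
    intro x hx
    rw [Set.mem_toFinset] at hx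
    have hset : {l | l ∈ pgLine K ∧ l ≤ σ}.toFinset.filter (fun l => x ≤ l)
        = {l | l ∈ pgLine K ∧ x ≤ l ∧ l ≤ σ}.toFinset := by
      ext l
      simp only [Finset.mem_filter, Set.mem_toFinset, Set.mem_setOf_eq]
      tauto
    rw [hset, ← Set.ncard_eq_toFinset_card', lines_thru_plane hx.1 hσ hx.2]
  have rhs : ∀ l ∈ {l | l ∈ pgLine K ∧ l ≤ σ}.toFinset,
      ((pts σ).toFinset.filter (fun x => x ≤ l)).card = Fintype.card K + 1 := by
    intro l hl
    rw [Set.mem_toFinset] at hl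
    have hset : (pts σ).toFinset.filter (fun x => x ≤ l) = (pts l).toFinset := by
      ext x
      simp only [Finset.mem_filter, Set.mem_toFinset]; simp only [pts, Set.mem_setOf_eq]
      constructor
      · rintro ⟨⟨h1, _⟩, h3⟩; exact ⟨h1, h3⟩
      · rintro ⟨h1, h3⟩; exact ⟨⟨h1, le_trans h3 hl.2⟩, h3⟩
    rw [hset, ← Set.ncard_eq_toFinset_card', pts_line hl.1]
  rw [Finset.sum_congr rfl lhs, Finset.sum_congr rfl rhs, Finset.sum_const, Finset.sum_const,
    smul_eq_mul, smul_eq_mul, ← Set.ncard_eq_toFinset_card', ← Set.ncard_eq_toFinset_card',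
    pts_plane hσ] at h
  have h2 : 2 ≤ Fintype.card K := qge2
  exact (Nat.eq_of_mul_eq_mul_right (by omega) h).symm

lemma q_odd_facts (hq : Fintype.card K = q) (hq_odd : Odd q) :
    ∃ r, q = 2 * r + 1 ∧ 1 ≤ r := by
  obtain ⟨m, hm⟩ := hq_odd
  have h2 : 2 ≤ q := hq ▸ qge2
  exact ⟨m, by omega, by omega⟩

lemma half_mul (r : ℕ) : (2 * r + 1) * (2 * r + 1 + 1) / 2 = (2 * r + 1) * (r + 1) := by
  have : (2 * r + 1) * (2 * r + 1 + 1) = 2 * ((2 * r + 1) * (r + 1)) := by ring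
  rw [this, Nat.mul_div_cancel_left _ (by norm_num)]

/-- every pencil has at most q lines of S -/
lemma pencil_le_q (hq : Fintype.card K = q) (hq_odd : Odd q)
    (h2 : P2 K S q) (h2a : P2a K S q) (h2b : P2b K S q)
    {x σ : Submodule K (Fin 4 → K)} (hσ : σ ∈ pgPlane K) (hx : x ∈ pgPoint K) (hxσ : x ≤ σ) :
    (pencilS K S x σ).ncard ≤ q := by
  obtain ⟨r, hr, hr1⟩ := q_odd_facts hq hq_odd
  rcases h2 σ hσ with h | h
  · rcases h2b σ hσ h x hx hxσ with h' | h' | h' <;> omega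
  · rcases h2a σ hσ h x hx hxσ with h' | h' <;> omega

/-- pencil + non-S pencil = q + 1 -/
lemma pencil_partition (hq : Fintype.card K = q) (hS : S ⊆ pgLine K)
    {x σ : Submodule K (Fin 4 → K)} (hσ : σ ∈ pgPlane K) (hx : x ∈ pgPoint K) (hxσ : x ≤ σ) :
    (pencilS K S x σ).ncard + {l | l ∈ pgLine K ∧ x ≤ l ∧ l ≤ σ ∧ l ∉ S}.ncard = q + 1 := by
  have hunion : {l | l ∈ pgLine K ∧ x ≤ l ∧ l ≤ σ}
      = pencilS K S x σ ∪ {l | l ∈ pgLine K ∧ x ≤ l ∧ l ≤ σ ∧ l ∉ S} := by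
    ext l
    simp only [Set.mem_union, pencilS, Set.mem_setOf_eq]
    constructor
    · rintro ⟨h1, h2', h3⟩
      by_cases h : l ∈ S
      · exact Or.inl ⟨h, h2', h3⟩
      · exact Or.inr ⟨h1, h2', h3, h⟩
    · rintro (⟨h1, h2', h3⟩ | ⟨h1, h2', h3, _⟩)
      · exact ⟨hS h1, h2', h3⟩
      · exact ⟨h1, h2', h3⟩
  have hdisj : Disjoint (pencilS K S x σ) {l | l ∈ pgLine K ∧ x ≤ l ∧ l ≤ σ ∧ l ∉ S} := by
    rw [Set.disjoint_iff]
    rintro l ⟨⟨h1, _, _⟩, ⟨_, _, _, h4⟩⟩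
    exact absurd h1 h4
  have := lines_thru_plane hx hσ hxσ
  rw [hunion, Set.ncard_union_eq hdisj (Set.toFinite _) (Set.toFinite _), hq] at this
  exact this

/-- In a tangent plane there is exactly one point with empty pencil. -/
lemma tangent_special_point (hq : Fintype.card K = q) (hq_odd : Odd q) (hS : S ⊆ pgLine K)
    (h2a : P2a K S q) {π : Submodule K (Fin 4 → K)} (hT : IsTangent K S q π) :
    ∃! p₀, p₀ ∈ pgPoint K ∧ p₀ ≤ π ∧ (pencilS K S p₀ π).ncard = 0 := by
  classical
  obtain ⟨hπ, hq2⟩ := hT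
  obtain ⟨r, hr, hr1⟩ := q_odd_facts hq hq_odd
  have hsum := sum_plane_pencil hS hπ
  rw [hq2, hq] at hsum
  set A := (pts π).toFinset with hA
  have hAcard : A.card = q ^ 2 + q + 1 := by
    rw [hA, ← Set.ncard_eq_toFinset_card', pts_plane hπ, hq]
  have hdichot : ∀ x ∈ A, (pencilS K S x π).ncard = 0 ∨ (pencilS K S x π).ncard = q := by
    intro x hx
    rw [hA, Set.mem_toFinset] at hx
    exact h2a π hπ hq2 x hx.1 hx.2
  set Z := A.filter (fun x => (pencilS K S x π).ncard = 0) with hZ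
  have hsplit : ∑ x ∈ A, (pencilS K S x π).ncard
      = ∑ x ∈ Z, (pencilS K S x π).ncard
        + ∑ x ∈ A.filter (fun x => ¬ (pencilS K S x π).ncard = 0), (pencilS K S x π).ncard := by
    rw [hZ]
    exact (Finset.sum_filter_add_sum_filter_not A _ _).symm
  have hZ0 : ∑ x ∈ Z, (pencilS K S x π).ncard = 0 := by
    apply Finset.sum_eq_zero
    intro x hx
    exact (Finset.mem_filter.mp hx).2
  have hNq : ∑ x ∈ A.filter (fun x => ¬ (pencilS K S x π).ncard = 0), (pencilS K S x π).ncard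
      = q * (A.filter (fun x => ¬ (pencilS K S x π).ncard = 0)).card := by
    rw [Finset.sum_congr rfl (fun x hx => ?_), Finset.sum_const, smul_eq_mul, mul_comm]
    have hx' := Finset.mem_filter.mp hx
    rcases hdichot x hx'.1 with h | h
    · exact absurd h hx'.2
    · exact h
  have hcards : (A.filter (fun x => ¬ (pencilS K S x π).ncard = 0)).card
      + Z.card = q ^ 2 + q + 1 := by
    rw [hZ, ← hAcard]
    rw [add_comm]
    exact Finset.card_filter_add_card_filter_not _
  have hNcard : q * (A.filter (fun x => ¬ (pencilS K S x π).ncard = 0)).card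
      = (q + 1) * q ^ 2 := by
    rw [hsplit, hZ0, hNq, zero_add] at hsum
    exact hsum
  have hqpos : 0 < q := by omega
  have hNval : (A.filter (fun x => ¬ (pencilS K S x π).ncard = 0)).card = (q + 1) * q := by
    apply Nat.eq_of_mul_eq_mul_left hqpos
    rw [hNcard]; ring
  have hZcard : Z.card = 1 := by
    have e1 : (q + 1) * q = q ^ 2 + q := by ring
    omega
  obtain ⟨p₀, hp₀⟩ := Finset.card_eq_one.mp hZcard
  refine ⟨p₀, ?_, ?_⟩
  · have : p₀ ∈ Z := by rw [hp₀]; exact Finset.mem_singleton_self _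
    rw [hZ, Finset.mem_filter, hA, Set.mem_toFinset] at this
    exact ⟨this.1.1, this.1.2, this.2⟩
  · intro y hy
    have : y ∈ Z := by
      rw [hZ, Finset.mem_filter, hA, Set.mem_toFinset]
      exact ⟨⟨hy.1, hy.2.1⟩, hy.2.2⟩
    rw [hp₀] at this
    exact Finset.mem_singleton.mp this

/-- S ∩ π = the lines of π missing p₀. -/
lemma tangent_lines_iff (hq : Fintype.card K = q) (hq_odd : Odd q) (hS : S ⊆ pgLine K)
    (h2a : P2a K S q) {π p₀ : Submodule K (Fin 4 → K)} (hT : IsTangent K S q π)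
    (hp₀ : p₀ ∈ pgPoint K ∧ p₀ ≤ π ∧ (pencilS K S p₀ π).ncard = 0) :
    ∀ l, l ∈ pgLine K → l ≤ π → (l ∈ S ↔ ¬ p₀ ≤ l) := by
  classical
  obtain ⟨hπ, hq2⟩ := hT
  have h2 : 2 ≤ q := hq ▸ qge2
  have fwd : ∀ l, l ∈ pgLine K → l ≤ π → l ∈ S → ¬ p₀ ≤ l := by
    intro l hl hlπ hlS hple
    have : l ∈ pencilS K S p₀ π := ⟨hlS, hple, hlπ⟩
    have hne : (pencilS K S p₀ π).Nonempty := ⟨l, this⟩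
    rw [← Set.ncard_pos (Set.toFinite _)] at hne
    omega
  -- cardinality comparison
  have hsub : linesIn K S π ⊆ {l | l ∈ pgLine K ∧ l ≤ π ∧ ¬ p₀ ≤ l} := by
    rintro l ⟨hlS, hlπ⟩
    exact ⟨hS hlS, hlπ, fwd l (hS hlS) hlπ hlS⟩
  have hthru : {l | l ∈ pgLine K ∧ l ≤ π ∧ p₀ ≤ l}.ncard = q + 1 := by
    have hset : {l | l ∈ pgLine K ∧ l ≤ π ∧ p₀ ≤ l}
        = {l | l ∈ pgLine K ∧ p₀ ≤ l ∧ l ≤ π} := by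
      ext l; simp only [Set.mem_setOf_eq]; tauto
    rw [hset, lines_thru_plane hp₀.1 hπ hp₀.2.1, hq]
  have hbig : {l | l ∈ pgLine K ∧ l ≤ π ∧ ¬ p₀ ≤ l}.ncard = q ^ 2 := by
    have hdiff : {l | l ∈ pgLine K ∧ l ≤ π ∧ ¬ p₀ ≤ l}
        = {l | l ∈ pgLine K ∧ l ≤ π} \ {l | l ∈ pgLine K ∧ l ≤ π ∧ p₀ ≤ l} := by
      ext l
      simp only [Set.mem_diff, Set.mem_setOf_eq]
      tauto
    rw [hdiff, ncard_diff_pts (by intro l hl; exact ⟨hl.1, hl.2.1⟩), lines_in_plane_count hπ,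
      hthru, hq]
    have : (q+1) ≤ q^2 + q + 1 := by nlinarith
    omega
  have := Set.eq_of_subset_of_ncard_le hsub (by rw [hbig, hq2]) (Set.toFinite _)
  intro l hl hlπ
  constructor
  · intro hlS; exact fwd l hl hlπ hlS
  · intro hnle
    have : l ∈ linesIn K S π := by rw [this]; exact ⟨hl, hlπ, hnle⟩
    exact this.1

/-- points of a tangent plane other than p₀ have a full pencil -/
lemma tangent_pencil_q (hq : Fintype.card K = q) (hq_odd : Odd q) (hS : S ⊆ pgLine K)
    (h2a : P2a K S q) {π p₀ x : Submodule K (Fin 4 → K)} (hT : IsTangent K S q π)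
    (hp₀ : p₀ ∈ pgPoint K ∧ p₀ ≤ π ∧ (pencilS K S p₀ π).ncard = 0)
    (hx : x ∈ pgPoint K) (hxπ : x ≤ π) (hxne : x ≠ p₀) :
    (pencilS K S x π).ncard = q := by
  classical
  obtain ⟨hπ, hq2⟩ := hT
  rcases h2a π hπ hq2 x hx hxπ with h0 | h
  · exfalso
    -- x would be a second special point: but there's a line through x in π missing p₀
    have hline : (x ⊔ p₀) ∈ pgLine K := sup_points_line hx hp₀.1 hxne
    have hthru_eq : {l | l ∈ pgLine K ∧ x ≤ l ∧ l ≤ π ∧ p₀ ≤ l} = {x ⊔ p₀} := by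
      ext l
      simp only [Set.mem_setOf_eq, Set.mem_singleton_iff]
      constructor
      · rintro ⟨h1, h2', h3, h4⟩
        exact (eq_of_le_rank (sup_le h2' h4) (by rw [h1, hline])).symm
      · rintro rfl
        exact ⟨hline, le_sup_left, sup_le hxπ hp₀.2.1, le_sup_right⟩
    have hcount := lines_thru_plane hx hπ hxπ
    -- there are q+1 lines through x in π, only one passes through p₀, so q ≥ 2 miss p₀.
    have hsplit : {l | l ∈ pgLine K ∧ x ≤ l ∧ l ≤ π ∧ ¬ p₀ ≤ l}
        = {l | l ∈ pgLine K ∧ x ≤ l ∧ l ≤ π} \ {l | l ∈ pgLine K ∧ x ≤ l ∧ l ≤ π ∧ p₀ ≤ l} := by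
      ext l
      simp only [Set.mem_diff, Set.mem_setOf_eq]
      tauto
    have hmiss : {l | l ∈ pgLine K ∧ x ≤ l ∧ l ≤ π ∧ ¬ p₀ ≤ l}.ncard = Fintype.card K := by
      rw [hsplit, ncard_diff_pts (by intro l hl; exact ⟨hl.1, hl.2.1, hl.2.2.1⟩), hcount, hthru_eq,
        Set.ncard_singleton]
      omega
    have h2 : 2 ≤ Fintype.card K := qge2
    have : {l | l ∈ pgLine K ∧ x ≤ l ∧ l ≤ π ∧ ¬ p₀ ≤ l}.Nonempty := by
      rw [← Set.ncard_pos (Set.toFinite _), hmiss]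
      omega
    obtain ⟨l, hl1, hl2, hl3, hl4⟩ := this
    have hlS : l ∈ S := (tangent_lines_iff hq hq_odd hS h2a ⟨hπ, hq2⟩ hp₀ l hl1 hl3).mpr hl4
    have : l ∈ pencilS K S x π := ⟨hlS, hl2, hl3⟩
    have hne : (pencilS K S x π).Nonempty := ⟨l, this⟩
    rw [← Set.ncard_pos (Set.toFinite _)] at hne
    omega
  · exact h

end Aux19

namespace Aux19
open Module
open scoped Classical
set_option linter.unusedSectionVars false
set_option linter.unusedVariables false
set_option maxHeartbeats 1000000

variable {K : Type} [Field K] [Fintype K] {S : Set (Submodule K (Fin 4 → K))} {q : ℕ}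

lemma nonS_thru_black (hq : Fintype.card K = q) (hS : S ⊆ pgLine K)
    {x : Submodule K (Fin 4 → K)} (hx : IsBlack K S q x) :
    {l | l ∈ pgLine K ∧ x ≤ l ∧ l ∉ S}.ncard = q + 1 := by
  have hdiff : {l | l ∈ pgLine K ∧ x ≤ l ∧ l ∉ S}
      = {l | l ∈ pgLine K ∧ x ≤ l} \ linesThru K S x := by
    ext l
    simp only [Set.mem_diff, Set.mem_setOf_eq, linesThru]
    tauto
  rw [hdiff, ncard_diff_pts (by intro l hl; exact ⟨hS hl.1, hl.2⟩), lines_thru_pt hx.1,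
    hx.2, hq]
  have h2 : 2 ≤ q := hq ▸ qge2
  have e1 : q ^ 2 ≤ q ^ 2 + q + 1 := by omega
  omega

/-- KEY LEMMA: every black point x has a (tangent) plane σ containing exactly the
non-S lines through x. -/
lemma black_plane (hq : Fintype.card K = q) (hq_odd : Odd q) (hS : S ⊆ pgLine K)
    (h2 : P2 K S q) (h2a : P2a K S q) (h2b : P2b K S q)
    {x : Submodule K (Fin 4 → K)} (hx : IsBlack K S q x) :
    ∃ σ, IsTangent K S q σ ∧ x ≤ σ ∧
      (∀ l, l ∈ pgLine K → x ≤ l → (l ∉ S ↔ l ≤ σ)) := by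
  classical
  obtain ⟨r, hr, hr1⟩ := q_odd_facts hq hq_odd
  set NS := {l | l ∈ pgLine K ∧ x ≤ l ∧ l ∉ S} with hNS
  set P := {σ | σ ∈ pgPlane K ∧ x ≤ σ} with hP
  have hNScard : NS.toFinset.card = q + 1 := by
    rw [← Set.ncard_eq_toFinset_card']
    exact nonS_thru_black hq hS hx
  have hPcard : P.toFinset.card = q ^ 2 + q + 1 := by
    rw [← Set.ncard_eq_toFinset_card', hP, planes_thru_pt hx.1, hq]
  set c : Submodule K (Fin 4 → K) → ℕ := fun σ => (NS.toFinset.filter (fun l => l ≤ σ)).card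
    with hc
  -- (i) total incidence count
  have hsum1 : ∑ σ ∈ P.toFinset, c σ = (q + 1) * (q + 1) := by
    have h := dcount P.toFinset NS.toFinset (fun σ l => l ≤ σ)
    have rhs : ∀ l ∈ NS.toFinset,
        (P.toFinset.filter (fun σ => l ≤ σ)).card = q + 1 := by
      intro l hl
      rw [Set.mem_toFinset] at hl
      have hset : P.toFinset.filter (fun σ => l ≤ σ)
          = {σ | σ ∈ pgPlane K ∧ l ≤ σ}.toFinset := by
        ext σ
        simp only [Finset.mem_filter, Set.mem_toFinset, hP, Set.mem_setOf_eq]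
        constructor
        · rintro ⟨⟨h1, _⟩, h3⟩; exact ⟨h1, h3⟩
        · rintro ⟨h1, h3⟩; exact ⟨⟨h1, le_trans hl.2.1 h3⟩, h3⟩
      rw [hset, ← Set.ncard_eq_toFinset_card', planes_thru_line hl.1, hq]
    rw [h, Finset.sum_congr rfl rhs, Finset.sum_const, smul_eq_mul, hNScard]
  -- (ii) pencil complement
  have hcomp : ∀ σ ∈ P.toFinset, (pencilS K S x σ).ncard + c σ = q + 1 := by
    intro σ hσ
    rw [Set.mem_toFinset] at hσ
    have := pencil_partition hq hS hσ.1 hx.1 hσ.2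
    have hceq : c σ = {l | l ∈ pgLine K ∧ x ≤ l ∧ l ≤ σ ∧ l ∉ S}.ncard := by
      have hfs : NS.toFinset.filter (fun l => l ≤ σ)
          = {l | l ∈ pgLine K ∧ x ≤ l ∧ l ≤ σ ∧ l ∉ S}.toFinset := by
        ext l
        simp only [Finset.mem_filter, Set.mem_toFinset, hNS, Set.mem_setOf_eq]
        tauto
      show (NS.toFinset.filter (fun l => l ≤ σ)).card = _
      rw [hfs, ← Set.ncard_eq_toFinset_card']
    rw [hceq]
    exact this
  have hc1 : ∀ σ ∈ P.toFinset, 1 ≤ c σ := by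
    intro σ hσ
    have h1 := hcomp σ hσ
    rw [Set.mem_toFinset] at hσ
    have h2' := pencil_le_q hq hq_odd h2 h2a h2b hσ.1 hx.1 hσ.2
    omega
  have hcle : ∀ σ ∈ P.toFinset, c σ ≤ q + 1 := fun σ hσ => by have := hcomp σ hσ; omega
  -- (iv) pairs count
  have hsum2 : ∑ σ ∈ P.toFinset, (c σ * c σ - c σ) = (q + 1) * (q + 1) - (q + 1) := by
    have h := dcount P.toFinset NS.toFinset.offDiag
      (fun σ p => p.1 ≤ σ ∧ p.2 ≤ σ)
    have lhs : ∀ σ ∈ P.toFinset,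
        (NS.toFinset.offDiag.filter (fun p => p.1 ≤ σ ∧ p.2 ≤ σ)).card
          = c σ * c σ - c σ := by
      intro σ hσ
      have hset : NS.toFinset.offDiag.filter (fun p => p.1 ≤ σ ∧ p.2 ≤ σ)
          = (NS.toFinset.filter (fun l => l ≤ σ)).offDiag := by
        ext p
        simp only [Finset.mem_filter, Finset.mem_offDiag]
        tauto
      rw [hset, Finset.offDiag_card]
    have rhs : ∀ p ∈ NS.toFinset.offDiag,
        (P.toFinset.filter (fun σ => p.1 ≤ σ ∧ p.2 ≤ σ)).card = 1 := by
      rintro ⟨l, m⟩ hp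
      rw [Finset.mem_offDiag] at hp
      obtain ⟨hl, hm, hne⟩ := hp
      rw [Set.mem_toFinset] at hl hm
      have hplane : (l ⊔ m) ∈ pgPlane K :=
        lines_common_point_plane hl.1 hm.1 hne hx.1 hl.2.1 hm.2.1
      have hset : P.toFinset.filter (fun σ => l ≤ σ ∧ m ≤ σ) = {l ⊔ m} := by
        ext σ
        simp only [Finset.mem_filter, Set.mem_toFinset, hP, Set.mem_setOf_eq,
          Finset.mem_singleton]
        constructor
        · rintro ⟨⟨h1, _⟩, h3, h4⟩
          exact (eq_of_le_rank (sup_le h3 h4) (by rw [h1, hplane])).symm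
        · rintro rfl
          exact ⟨⟨hplane, le_trans hl.2.1 le_sup_left⟩, le_sup_left, le_sup_right⟩
      rw [hset, Finset.card_singleton]
    rw [Finset.sum_congr rfl lhs] at h
    rw [h, Finset.sum_congr rfl rhs, Finset.sum_const, smul_eq_mul, mul_one,
      Finset.offDiag_card, hNScard]
  -- (v) there is a plane with full c
  have hexists : ∃ σ ∈ P.toFinset, c σ = q + 1 := by
    by_contra hcon
    push_neg at hcon
    have hcq : ∀ σ ∈ P.toFinset, c σ ≤ q := by
      intro σ hσ
      have := hcle σ hσ
      have := hcon σ hσ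
      omega
    have hpt : ∀ σ ∈ P.toFinset, c σ * c σ - c σ + q ≤ q * c σ := by
      intro σ hσ
      have h1 := hc1 σ hσ
      have h2' := hcq σ hσ
      obtain ⟨e, he⟩ : ∃ e, c σ = e + 1 := ⟨c σ - 1, by omega⟩
      rw [he]
      have e1 : (e + 1) * (e + 1) - (e + 1) = (e + 1) * e := by
        have : (e + 1) * (e + 1) = (e + 1) * e + (e + 1) := by ring
        omega
      rw [e1]
      have e2 : (e + 1) * e ≤ q * e := Nat.mul_le_mul_right e (by omega)
      have e3 : q * (e + 1) = q * e + q := by ring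
      omega
    have hle := Finset.sum_le_sum hpt
    rw [Finset.sum_add_distrib, Finset.sum_const, smul_eq_mul, ← Finset.mul_sum] at hle
    rw [hsum1, hsum2, hPcard] at hle
    have e1 : (q + 1) * (q + 1) = q * q + 2 * q + 1 := by ring
    have e2 : q * ((q + 1) * (q + 1)) = q * q * q + 2 * (q * q) + q := by ring
    have e3 : (q ^ 2 + q + 1) * q = q * q * q + q * q + q := by ring
    have e4 : q * (q ^ 2 + q + 1) = q * q * q + q * q + q := by ring
    omega
  obtain ⟨σ₀, hσ₀P, hσ₀c⟩ := hexists
  have hσ₀P' := hσ₀P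
  rw [Set.mem_toFinset] at hσ₀P'
  have hpencil0 : (pencilS K S x σ₀).ncard = 0 := by
    have := hcomp σ₀ hσ₀P
    omega
  have htangent : IsTangent K S q σ₀ := by
    rcases h2 σ₀ hσ₀P'.1 with h | h
    · exfalso
      rcases h2b σ₀ hσ₀P'.1 h x hx.1 hσ₀P'.2 with h' | h' | h' <;> omega
    · exact ⟨hσ₀P'.1, h⟩
  have hNSsub : ∀ l ∈ NS.toFinset, l ≤ σ₀ := by
    have hfull : NS.toFinset.filter (fun l => l ≤ σ₀) = NS.toFinset := by
      apply Finset.eq_of_subset_of_card_le (Finset.filter_subset _ _)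
      rw [hNScard, ← hσ₀c]
    intro l hl
    rw [← hfull] at hl
    exact (Finset.mem_filter.mp hl).2
  refine ⟨σ₀, htangent, hσ₀P'.2, ?_⟩
  intro l hl hxl
  constructor
  · intro hlnS
    apply hNSsub
    rw [Set.mem_toFinset]
    exact ⟨hl, hxl, hlnS⟩
  · intro hlσ hlS
    have : l ∈ pencilS K S x σ₀ := ⟨hlS, hxl, hlσ⟩
    have hne : (pencilS K S x σ₀).Nonempty := ⟨l, this⟩
    rw [← Set.ncard_pos (Set.toFinite _)] at hne
    omega

/-- at a black point, every plane other than its special tangent plane has full pencil -/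
lemma black_other_plane (hq : Fintype.card K = q) (hq_odd : Odd q) (hS : S ⊆ pgLine K)
    {x σx σ' : Submodule K (Fin 4 → K)} (hx : IsBlack K S q x)
    (hσx : IsTangent K S q σx) (hxσx : x ≤ σx)
    (hiff : ∀ l, l ∈ pgLine K → x ≤ l → (l ∉ S ↔ l ≤ σx))
    (hσ' : σ' ∈ pgPlane K) (hxσ' : x ≤ σ') (hne : σ' ≠ σx) :
    (pencilS K S x σ').ncard = q := by
  have hpart := pencil_partition hq hS hσ' hx.1 hxσ'
  have hinf : (σ' ⊓ σx) ∈ pgLine K := planes_inf_line hσ' hσx.1 hne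
  have hxinf : x ≤ σ' ⊓ σx := le_inf hxσ' hxσx
  have hset : {l | l ∈ pgLine K ∧ x ≤ l ∧ l ≤ σ' ∧ l ∉ S} = {σ' ⊓ σx} := by
    ext l
    simp only [Set.mem_setOf_eq, Set.mem_singleton_iff]
    constructor
    · rintro ⟨h1, h2', h3, h4⟩
      have hlσx : l ≤ σx := (hiff l h1 h2').mp h4
      exact eq_of_le_rank (le_inf h3 hlσx) (by rw [h1, hinf])
    · rintro rfl
      refine ⟨hinf, hxinf, inf_le_left, ?_⟩
      rw [hiff _ hinf hxinf]
      exact inf_le_right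
  rw [hset, Set.ncard_singleton] at hpart
  omega

end Aux19

namespace Aux19
open Module
open scoped Classical
set_option linter.unusedSectionVars false
set_option linter.unusedVariables false
set_option maxHeartbeats 1000000

variable {K : Type} [Field K] [Fintype K] {S : Set (Submodule K (Fin 4 → K))} {q : ℕ}

lemma white_linesThru (hq : Fintype.card K = q) (h1 : P1 K S q)
    {p : Submodule K (Fin 4 → K)} (hp : p ∈ pgPoint K) (hnb : ¬ IsBlack K S q p) :
    (linesThru K S p).ncard = q * (q + 1) / 2 := by
  rcases h1.1 p hp with h | h
  · exact h
  · exact absurd ⟨hp, h⟩ hnb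

lemma secant_linesIn (h2 : P2 K S q) {σ : Submodule K (Fin 4 → K)} (hσ : σ ∈ pgPlane K)
    (hnt : ¬ IsTangent K S q σ) : (linesIn K S σ).ncard = q * (q + 1) / 2 := by
  rcases h2 σ hσ with h | h
  · exact h
  · exact absurd ⟨hσ, h⟩ hnt

/-- STAR: the number of black points on a line equals the number of tangent planes
through that line. -/
lemma star (hq : Fintype.card K = q) (hq_odd : Odd q) (hS : S ⊆ pgLine K)
    (h1 : P1 K S q) (h2 : P2 K S q)
    {ℓ : Submodule K (Fin 4 → K)} (hl : ℓ ∈ pgLine K) :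
    {y | IsBlack K S q y ∧ y ≤ ℓ}.ncard = {σ | IsTangent K S q σ ∧ ℓ ≤ σ}.ncard := by
  classical
  obtain ⟨r, hr, hr1⟩ := q_odd_facts hq hq_odd
  set A := q * (q + 1) / 2 with hAdef
  have hA : A = (2 * r + 1) * (r + 1) := by rw [hAdef, hr]; exact half_mul r
  set ptsF := (pts ℓ).toFinset with hptsF
  set plF := {σ | σ ∈ pgPlane K ∧ ℓ ≤ σ}.toFinset with hplF
  have hptsCard : ptsF.card = q + 1 := by
    rw [hptsF, ← Set.ncard_eq_toFinset_card', pts_line hl, hq]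
  have hplCard : plF.card = q + 1 := by
    rw [hplF, ← Set.ncard_eq_toFinset_card', planes_thru_line hl, hq]
  -- the double-counting identity
  have hdouble : ∑ x ∈ ptsF, (linesThru K S x).ncard
      = ∑ σ ∈ plF, (linesIn K S σ).ncard := by
    have hswap : ∑ x ∈ ptsF, ∑ σ ∈ plF, (pencilS K S x σ).ncard
        = ∑ σ ∈ plF, ∑ x ∈ ptsF, (pencilS K S x σ).ncard := Finset.sum_comm
    by_cases hlS : ℓ ∈ S
    · have E1 : ∀ x ∈ ptsF, ∑ σ ∈ plF, (pencilS K S x σ).ncard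
          = (linesThru K S x).ncard + Fintype.card K := by
        intro x hx
        rw [hptsF, Set.mem_toFinset] at hx
        exact sum_pencil_line_S hS hlS hx.1 hx.2
      have E2 : ∀ σ ∈ plF, ∑ x ∈ ptsF, (pencilS K S x σ).ncard
          = (linesIn K S σ).ncard + Fintype.card K := by
        intro σ hσ
        rw [hplF, Set.mem_toFinset] at hσ
        exact sum_pts_pencil_S hS hσ.1 hσ.2 hlS
      rw [Finset.sum_congr rfl E1, Finset.sum_congr rfl E2] at hswap
      rw [Finset.sum_add_distrib, Finset.sum_add_distrib, Finset.sum_const, Finset.sum_const,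
        smul_eq_mul, smul_eq_mul, hptsCard, hplCard] at hswap
      omega
    · have E1 : ∀ x ∈ ptsF, ∑ σ ∈ plF, (pencilS K S x σ).ncard
          = (linesThru K S x).ncard := by
        intro x hx
        rw [hptsF, Set.mem_toFinset] at hx
        exact sum_pencil_line_notS hS hl hlS hx.1 hx.2
      have E2 : ∀ σ ∈ plF, ∑ x ∈ ptsF, (pencilS K S x σ).ncard
          = (linesIn K S σ).ncard := by
        intro σ hσ
        rw [hplF, Set.mem_toFinset] at hσ
        exact sum_pts_pencil_notS hS hσ.1 hl hσ.2 hlS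
      rw [Finset.sum_congr rfl E1, Finset.sum_congr rfl E2] at hswap
      exact hswap
  -- evaluate the left side
  set k := {y | IsBlack K S q y ∧ y ≤ ℓ}.ncard with hk
  set τ := {σ | IsTangent K S q σ ∧ ℓ ≤ σ}.ncard with hτ
  have hkfil : ptsF.filter (fun y => IsBlack K S q y)
      = {y | IsBlack K S q y ∧ y ≤ ℓ}.toFinset := by
    ext y
    simp only [Finset.mem_filter, hptsF, Set.mem_toFinset]; simp only [pts, Set.mem_setOf_eq]
    constructor
    · rintro ⟨⟨h1', h2'⟩, h3⟩; exact ⟨h3, h2'⟩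
    · rintro ⟨h3, h2'⟩; exact ⟨⟨h3.1, h2'⟩, h3⟩
  have hkcard : (ptsF.filter (fun y => IsBlack K S q y)).card = k := by
    rw [hkfil, hk, ← Set.ncard_eq_toFinset_card']
  have hkle : k ≤ q + 1 := by
    have hple := pts_line hl
    rw [hq] at hple
    rw [hk, ← hple]
    apply Set.ncard_le_ncard _ (Set.toFinite _)
    rintro y ⟨hy1, hy2⟩
    exact ⟨hy1.1, hy2⟩
  have hleft : ∑ x ∈ ptsF, (linesThru K S x).ncard = k * q ^ 2 + (q + 1 - k) * A := by
    rw [← Finset.sum_filter_add_sum_filter_not ptsF (fun y => IsBlack K S q y)]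
    have e1 : ∑ x ∈ ptsF.filter (fun y => IsBlack K S q y), (linesThru K S x).ncard
        = k * q ^ 2 := by
      rw [Finset.sum_congr rfl (fun x hx => (Finset.mem_filter.mp hx).2.2), Finset.sum_const,
        smul_eq_mul, hkcard]
    have e2 : ∑ x ∈ ptsF.filter (fun y => ¬ IsBlack K S q y), (linesThru K S x).ncard
        = (q + 1 - k) * A := by
      have hval : ∀ x ∈ ptsF.filter (fun y => ¬ IsBlack K S q y),
          (linesThru K S x).ncard = A := by
        intro x hx
        have hx' := Finset.mem_filter.mp hx
        have hxp : x ∈ pts ℓ := by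
          have h' := hx'.1
          rwa [hptsF, Set.mem_toFinset] at h'
        exact white_linesThru hq h1 hxp.1 hx'.2
      rw [Finset.sum_congr rfl hval, Finset.sum_const, smul_eq_mul]
      congr 1
      have := Finset.card_filter_add_card_filter_not
        (s := ptsF) (p := fun y => IsBlack K S q y)
      omega
    omega
  -- evaluate the right side
  have hτfil : plF.filter (fun σ => IsTangent K S q σ)
      = {σ | IsTangent K S q σ ∧ ℓ ≤ σ}.toFinset := by
    ext σ
    simp only [Finset.mem_filter, hplF, Set.mem_toFinset, Set.mem_setOf_eq]
    constructor
    · rintro ⟨⟨h1', h2'⟩, h3⟩; exact ⟨h3, h2'⟩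
    · rintro ⟨h3, h2'⟩; exact ⟨⟨h3.1, h2'⟩, h3⟩
  have hτcard : (plF.filter (fun σ => IsTangent K S q σ)).card = τ := by
    rw [hτfil, hτ, ← Set.ncard_eq_toFinset_card']
  have hτle : τ ≤ q + 1 := by
    have hple := planes_thru_line hl
    rw [hq] at hple
    rw [hτ, ← hple]
    apply Set.ncard_le_ncard _ (Set.toFinite _)
    rintro σ ⟨hy1, hy2⟩
    exact ⟨hy1.1, hy2⟩
  have hright : ∑ σ ∈ plF, (linesIn K S σ).ncard = τ * q ^ 2 + (q + 1 - τ) * A := by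
    rw [← Finset.sum_filter_add_sum_filter_not plF (fun σ => IsTangent K S q σ)]
    have e1 : ∑ σ ∈ plF.filter (fun σ => IsTangent K S q σ), (linesIn K S σ).ncard
        = τ * q ^ 2 := by
      rw [Finset.sum_congr rfl (fun σ hσ => (Finset.mem_filter.mp hσ).2.2), Finset.sum_const,
        smul_eq_mul, hτcard]
    have e2 : ∑ σ ∈ plF.filter (fun σ => ¬ IsTangent K S q σ), (linesIn K S σ).ncard
        = (q + 1 - τ) * A := by
      have hval : ∀ σ ∈ plF.filter (fun σ => ¬ IsTangent K S q σ),
          (linesIn K S σ).ncard = A := by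
        intro σ hσ
        have hσ' := Finset.mem_filter.mp hσ
        have hσp : σ ∈ {σ | σ ∈ pgPlane K ∧ ℓ ≤ σ} := by
          have h' := hσ'.1
          rwa [hplF, Set.mem_toFinset] at h'
        exact secant_linesIn h2 hσp.1 hσ'.2
      rw [Finset.sum_congr rfl hval, Finset.sum_const, smul_eq_mul]
      congr 1
      have := Finset.card_filter_add_card_filter_not
        (s := plF) (p := fun σ => IsTangent K S q σ)
      omega
    omega
  -- conclude k = τ
  have heq : k * q ^ 2 + (q + 1 - k) * A = τ * q ^ 2 + (q + 1 - τ) * A := by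
    rw [← hleft, ← hright, hdouble]
  set B := (2 * r + 1) * r with hB
  have hq2AB : q ^ 2 = A + B := by
    rw [hA, hB, hr]; ring
  have transform : ∀ m, m ≤ q + 1 → m * q ^ 2 + (q + 1 - m) * A = (q + 1) * A + m * B := by
    intro m hm
    obtain ⟨d, hd⟩ : ∃ d, q + 1 = m + d := ⟨q + 1 - m, by omega⟩
    have hsub : q + 1 - m = d := by omega
    rw [hsub, hq2AB, hd]
    ring
  rw [transform k hkle, transform τ hτle] at heq
  have hBpos : 0 < B := by
    rw [hB]
    positivity
  have : k * B = τ * B := by omega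
  exact Nat.eq_of_mul_eq_mul_right hBpos this

end Aux19

namespace Aux19
open Module
open scoped Classical
set_option linter.unusedSectionVars false
set_option linter.unusedVariables false
set_option maxHeartbeats 1000000

variable {K : Type} [Field K] [Fintype K] {S : Set (Submodule K (Fin 4 → K))} {q : ℕ}

lemma pencil_zero_of_blackplane (hS : S ⊆ pgLine K)
    {y σy m : Submodule K (Fin 4 → K)}
    (hiff : ∀ l, l ∈ pgLine K → y ≤ l → (l ∉ S ↔ l ≤ σy)) :
    (pencilS K S y σy).ncard = 0 := by
  rw [Set.ncard_eq_zero (Set.toFinite _)]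
  rw [Set.eq_empty_iff_forall_notMem]
  rintro m ⟨hmS, hym, hmσ⟩
  exact (hiff m (hS hmS) hym).mpr hmσ hmS

/-- The special point of a tangent plane is black. -/
lemma sp_black (hq : Fintype.card K = q) (hq_odd : Odd q) (hS : S ⊆ pgLine K)
    (h1 : P1 K S q) (h2 : P2 K S q) (h2a : P2a K S q) (h2b : P2b K S q)
    {π p₀ : Submodule K (Fin 4 → K)} (hT : IsTangent K S q π)
    (hp₀ : p₀ ∈ pgPoint K ∧ p₀ ≤ π ∧ (pencilS K S p₀ π).ncard = 0) :
    IsBlack K S q p₀ := by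
  classical
  by_contra hwhite
  obtain ⟨r, hr, hr1⟩ := q_odd_facts hq hq_odd
  -- find a black point on a line of S inside π
  have hSπ : (linesIn K S π).Nonempty := by
    rw [← Set.ncard_pos (Set.toFinite _), hT.2]
    exact pow_pos (by omega : 0 < q) 2
  obtain ⟨ℓ, hℓS, hℓπ⟩ := hSπ
  have hℓL : ℓ ∈ pgLine K := hS hℓS
  have hblnonempty : {y | IsBlack K S q y ∧ y ≤ ℓ}.Nonempty := by
    rw [← Set.ncard_pos (Set.toFinite _), star hq hq_odd hS h1 h2 hℓL]
    rw [Set.ncard_pos (Set.toFinite _)]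
    exact ⟨π, hT, hℓπ⟩
  obtain ⟨x, hxB, hxℓ⟩ := hblnonempty
  have hxne : x ≠ p₀ := by
    intro h
    subst h
    exact (tangent_lines_iff hq hq_odd hS h2a hT hp₀ ℓ hℓL hℓπ).mp hℓS hxℓ
  set ℓ₀ := x ⊔ p₀ with hℓ₀def
  have hℓ₀ : ℓ₀ ∈ pgLine K := sup_points_line hxB.1 hp₀.1 hxne
  have hℓ₀π : ℓ₀ ≤ π := sup_le (le_trans hxℓ hℓπ) hp₀.2.1
  have hℓ₀S : ℓ₀ ∉ S := by
    intro h
    exact (tangent_lines_iff hq hq_odd hS h2a hT hp₀ ℓ₀ hℓ₀ hℓ₀π).mp h le_sup_right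
  set BL := {y | IsBlack K S q y ∧ y ≤ ℓ₀} with hBL
  set TG := {σ | IsTangent K S q σ ∧ ℓ₀ ≤ σ} with hTG
  have hstar : BL.ncard = TG.ncard := star hq hq_odd hS h1 h2 hℓ₀
  have hex : ∀ y ∈ BL, ∃ σ, IsTangent K S q σ ∧ ℓ₀ ≤ σ ∧ (pencilS K S y σ).ncard = 0 := by
    rintro y ⟨hyB, hyℓ₀⟩
    obtain ⟨σy, hσyT, hyσy, hiff⟩ := black_plane hq hq_odd hS h2 h2a h2b hyB
    exact ⟨σy, hσyT, (hiff ℓ₀ hℓ₀ hyℓ₀).mp hℓ₀S,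
      pencil_zero_of_blackplane hS (m := ⊥) hiff⟩
  set F : Submodule K (Fin 4 → K) → Submodule K (Fin 4 → K) :=
    fun y => if h : ∃ σ, IsTangent K S q σ ∧ ℓ₀ ≤ σ ∧ (pencilS K S y σ).ncard = 0
      then h.choose else ⊥ with hFdef
  have hF : ∀ y ∈ BL, IsTangent K S q (F y) ∧ ℓ₀ ≤ F y ∧ (pencilS K S y (F y)).ncard = 0 := by
    intro y hy
    have h := hex y hy
    simp only [hFdef, dif_pos h]
    exact h.choose_spec
  have hq3 : 3 ≤ q := by omega
  have hmaps : ∀ y ∈ BL, F y ∈ TG \ {π} := by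
    intro y hy
    obtain ⟨hT', hle', hpen'⟩ := hF y hy
    refine ⟨⟨hT', hle'⟩, ?_⟩
    simp only [Set.mem_singleton_iff]
    intro heq
    have hyne : y ≠ p₀ := by
      intro h
      rw [h] at hy
      exact hwhite hy.1
    have hyπ : y ≤ π := le_trans hy.2 hℓ₀π
    have := tangent_pencil_q hq hq_odd hS h2a hT hp₀ hy.1.1 hyπ hyne
    rw [heq] at hpen'
    omega
  have hinj : Set.InjOn F BL := by
    intro y hy y' hy' heq
    obtain ⟨hT1, hle1, hpen1⟩ := hF y hy
    obtain ⟨hT2, hle2, hpen2⟩ := hF y' hy'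
    obtain ⟨u, hu, huniq⟩ := tangent_special_point hq hq_odd hS h2a hT1
    have e1 : y = u := huniq y ⟨hy.1.1, le_trans hy.2 hle1, hpen1⟩
    have e2 : y' = u := by
      apply huniq y'
      rw [← heq] at hle2 hpen2
      exact ⟨hy'.1.1, le_trans hy'.2 hle2, hpen2⟩
    rw [e1, e2]
  have himg : F '' BL ⊆ TG \ {π} := by
    rintro σ ⟨y, hy, rfl⟩
    exact hmaps y hy
  have hcard1 : BL.ncard ≤ (TG \ {π}).ncard := by
    rw [← Set.ncard_image_of_injOn hinj]
    exact Set.ncard_le_ncard himg (Set.toFinite _)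
  have hπTG : π ∈ TG := ⟨hT, hℓ₀π⟩
  have hcard2 : (TG \ {π}).ncard = TG.ncard - 1 := by
    rw [Set.ncard_diff (by simpa using hπTG) (Set.toFinite _), Set.ncard_singleton]
  have hBLpos : 1 ≤ BL.ncard :=
    (Set.ncard_pos (Set.toFinite _)).mpr ⟨x, hxB, le_sup_left⟩
  omega

/-- A line not in S containing two distinct black points is entirely black. -/
lemma nonS_line_allblack (hq : Fintype.card K = q) (hq_odd : Odd q) (hS : S ⊆ pgLine K)
    (h1 : P1 K S q) (h2 : P2 K S q) (h2a : P2a K S q) (h2b : P2b K S q)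
    {ℓ : Submodule K (Fin 4 → K)} (hl : ℓ ∈ pgLine K) (hlS : ℓ ∉ S)
    {y₁ y₂ : Submodule K (Fin 4 → K)} (hy₁ : IsBlack K S q y₁) (hy₁ℓ : y₁ ≤ ℓ)
    (hy₂ : IsBlack K S q y₂) (hy₂ℓ : y₂ ≤ ℓ) (hne : y₁ ≠ y₂) :
    ∀ w, w ∈ pgPoint K → w ≤ ℓ → IsBlack K S q w := by
  classical
  obtain ⟨r, hr, hr1⟩ := q_odd_facts hq hq_odd
  by_contra hcon
  push_neg at hcon
  obtain ⟨w, hwpt, hwℓ, hwnb⟩ := hcon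
  -- Σ over planes through ℓ of pencil(w,·) = linesThru w = (2r+1)(r+1)
  have hsum := sum_pencil_line_notS hS hl hlS hwpt hwℓ
  rw [white_linesThru hq h1 hwpt hwnb] at hsum
  set plF := {σ | σ ∈ pgPlane K ∧ ℓ ≤ σ}.toFinset with hplF
  have hplCard : plF.card = q + 1 := by
    rw [hplF, ← Set.ncard_eq_toFinset_card', planes_thru_line hl, hq]
  -- each plane through ℓ is tangent (pencil q at w) or secant (pencil ≥ r at w)
  have hlow : ∀ σ ∈ plF, (if IsTangent K S q σ then q else r) ≤ (pencilS K S w σ).ncard := by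
    intro σ hσ
    rw [hplF, Set.mem_toFinset] at hσ
    obtain ⟨hσpl, hℓσ⟩ := hσ
    have hwσ : w ≤ σ := le_trans hwℓ hℓσ
    by_cases hTσ : IsTangent K S q σ
    · rw [if_pos hTσ]
      obtain ⟨u, hu, huniq⟩ := tangent_special_point hq hq_odd hS h2a hTσ
      have huB : IsBlack K S q u := sp_black hq hq_odd hS h1 h2 h2a h2b hTσ hu
      have hwne : w ≠ u := by
        intro h
        rw [h] at hwnb
        exact hwnb huB
      have := tangent_pencil_q hq hq_odd hS h2a hTσ hu hwpt hwσ hwne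
      omega
    · have hsec := secant_linesIn h2 hσpl hTσ
      rw [if_neg hTσ]
      rcases h2b σ hσpl hsec w hwpt hwσ with h' | h' | h' <;> omega
  have hsumlow := Finset.sum_le_sum hlow
  rw [hsum] at hsumlow
  -- split the lower bound sum by tangency; #tangents = #blacks ≥ 2
  have hτ : {σ | IsTangent K S q σ ∧ ℓ ≤ σ}.ncard
      = {y | IsBlack K S q y ∧ y ≤ ℓ}.ncard := (star hq hq_odd hS h1 h2 hl).symm
  have hk2 : 2 ≤ {y | IsBlack K S q y ∧ y ≤ ℓ}.ncard := by
    have hsub : {y₁, y₂} ⊆ {y | IsBlack K S q y ∧ y ≤ ℓ} := by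
      rintro y (rfl | rfl)
      · exact ⟨hy₁, hy₁ℓ⟩
      · exact ⟨hy₂, hy₂ℓ⟩
    have := Set.ncard_le_ncard hsub (Set.toFinite _)
    rwa [Set.ncard_pair hne] at this
  set τ := {σ | IsTangent K S q σ ∧ ℓ ≤ σ}.ncard with hτdef
  have hτfil : (plF.filter (fun σ => IsTangent K S q σ)).card = τ := by
    rw [hτdef, Set.ncard_eq_toFinset_card']
    congr 1
    ext σ
    simp only [Finset.mem_filter, hplF, Set.mem_toFinset, Set.mem_setOf_eq]
    constructor
    · rintro ⟨⟨h1', h2'⟩, h3⟩; exact ⟨h3, h2'⟩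
    · rintro ⟨h3, h2'⟩; exact ⟨⟨h3.1, h2'⟩, h3⟩
  have hτle : τ ≤ q + 1 := by
    rw [← hτfil, ← hplCard]
    exact Finset.card_filter_le _ _
  have hsplit : ∑ σ ∈ plF, (if IsTangent K S q σ then q else r)
      = τ * q + (q + 1 - τ) * r := by
    rw [← Finset.sum_filter_add_sum_filter_not plF (fun σ => IsTangent K S q σ)]
    have e1 : ∑ σ ∈ plF.filter (fun σ => IsTangent K S q σ),
        (if IsTangent K S q σ then q else r) = τ * q := by
      rw [Finset.sum_congr rfl (fun σ hσ => if_pos (Finset.mem_filter.mp hσ).2),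
        Finset.sum_const, smul_eq_mul, hτfil]
    have e2 : ∑ σ ∈ plF.filter (fun σ => ¬ IsTangent K S q σ),
        (if IsTangent K S q σ then q else r) = (q + 1 - τ) * r := by
      rw [Finset.sum_congr rfl (fun σ hσ => if_neg (Finset.mem_filter.mp hσ).2),
        Finset.sum_const, smul_eq_mul]
      congr 1
      have := Finset.card_filter_add_card_filter_not
        (s := plF) (p := fun σ => IsTangent K S q σ)
      omega
    omega
  rw [hsplit] at hsumlow
  -- now: τ*q + (q+1-τ)*r ≤ q(q+1)/2 = (2r+1)(r+1), with τ ≥ 2: contradiction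
  have hτ2 : 2 ≤ τ := by omega
  have hA : q * (q + 1) / 2 = (2 * r + 1) * (r + 1) := by rw [hr]; exact half_mul r
  rw [hA] at hsumlow
  obtain ⟨d, hd⟩ : ∃ d, q + 1 = τ + d := ⟨q + 1 - τ, by omega⟩
  have hsub : q + 1 - τ = d := by omega
  rw [hsub] at hsumlow
  obtain ⟨t, ht⟩ : ∃ t, τ = t + 2 := ⟨τ - 2, by omega⟩
  rw [ht] at hsumlow hd
  -- τ*q + d*r = (t+2)(2r+1) + d r ; t + d = 2r
  have htd : t + d = 2 * r := by omega
  have e3 : (t + 2) * q + d * r = t * (2 * r + 1) + d * r + (4 * r + 2) := by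
    rw [hr]; ring
  rw [e3] at hsumlow
  have e4 : t * (2 * r + 1) ≥ t * r := Nat.mul_le_mul_left t (by omega)
  have e5 : t * r + d * r = 2 * (r * r) := by
    have : (t + d) * r = t * r + d * r := by ring
    rw [← this, htd]; ring
  have e6 : (2 * r + 1) * (r + 1) = 2 * (r * r) + 3 * r + 1 := by ring
  -- combine
  have : 2 * (r * r) + 4 * r + 2 ≤ 2 * (r * r) + 3 * r + 1 := by
    calc 2 * (r * r) + 4 * r + 2 = t * r + d * r + (4 * r + 2) := by omega
    _ ≤ t * (2 * r + 1) + d * r + (4 * r + 2) := by omega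
    _ ≤ (2 * r + 1) * (r + 1) := hsumlow
    _ = 2 * (r * r) + 3 * r + 1 := e6
  omega

end Aux19

namespace Aux19
open Module
open scoped Classical
set_option linter.unusedSectionVars false
set_option linter.unusedVariables false
set_option maxHeartbeats 1000000

variable {K : Type} [Field K] [Fintype K] {S : Set (Submodule K (Fin 4 → K))} {q : ℕ}

/-- An S-line containing three distinct black points is entirely black. -/
lemma Sline_allblack (hq : Fintype.card K = q) (hq_odd : Odd q) (hS : S ⊆ pgLine K)
    (h1 : P1 K S q) (h2 : P2 K S q) (h2a : P2a K S q) (h2b : P2b K S q)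
    {ℓ : Submodule K (Fin 4 → K)} (hlS : ℓ ∈ S)
    {y₁ y₂ y₃ : Submodule K (Fin 4 → K)}
    (hy₁ : IsBlack K S q y₁) (hy₁ℓ : y₁ ≤ ℓ) (hy₂ : IsBlack K S q y₂) (hy₂ℓ : y₂ ≤ ℓ)
    (hy₃ : IsBlack K S q y₃) (hy₃ℓ : y₃ ≤ ℓ)
    (h12 : y₁ ≠ y₂) (h13 : y₁ ≠ y₃) (h23 : y₂ ≠ y₃) :
    ∀ w, w ∈ pgPoint K → w ≤ ℓ → IsBlack K S q w := by
  classical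
  obtain ⟨r, hr, hr1⟩ := q_odd_facts hq hq_odd
  have hl : ℓ ∈ pgLine K := hS hlS
  by_contra hcon
  push_neg at hcon
  obtain ⟨w, hwpt, hwℓ, hwnb⟩ := hcon
  have hsum := sum_pencil_line_S hS hlS hwpt hwℓ
  rw [white_linesThru hq h1 hwpt hwnb, hq] at hsum
  set plF := {σ | σ ∈ pgPlane K ∧ ℓ ≤ σ}.toFinset with hplF
  have hplCard : plF.card = q + 1 := by
    rw [hplF, ← Set.ncard_eq_toFinset_card', planes_thru_line hl, hq]
  have hlow : ∀ σ ∈ plF, (if IsTangent K S q σ then q else r) ≤ (pencilS K S w σ).ncard := by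
    intro σ hσ
    rw [hplF, Set.mem_toFinset] at hσ
    obtain ⟨hσpl, hℓσ⟩ := hσ
    have hwσ : w ≤ σ := le_trans hwℓ hℓσ
    by_cases hTσ : IsTangent K S q σ
    · rw [if_pos hTσ]
      obtain ⟨u, hu, huniq⟩ := tangent_special_point hq hq_odd hS h2a hTσ
      have huB : IsBlack K S q u := sp_black hq hq_odd hS h1 h2 h2a h2b hTσ hu
      have hwne : w ≠ u := by
        intro h
        rw [h] at hwnb
        exact hwnb huB
      have := tangent_pencil_q hq hq_odd hS h2a hTσ hu hwpt hwσ hwne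
      omega
    · have hsec := secant_linesIn h2 hσpl hTσ
      rw [if_neg hTσ]
      rcases h2b σ hσpl hsec w hwpt hwσ with h' | h' | h' <;> omega
  have hsumlow := Finset.sum_le_sum hlow
  rw [hsum] at hsumlow
  have hτeq : {σ | IsTangent K S q σ ∧ ℓ ≤ σ}.ncard
      = {y | IsBlack K S q y ∧ y ≤ ℓ}.ncard := (star hq hq_odd hS h1 h2 hl).symm
  have hk3 : 3 ≤ {y | IsBlack K S q y ∧ y ≤ ℓ}.ncard := by
    have hsub : {y₁, y₂, y₃} ⊆ {y | IsBlack K S q y ∧ y ≤ ℓ} := by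
      rintro y (rfl | rfl | rfl)
      · exact ⟨hy₁, hy₁ℓ⟩
      · exact ⟨hy₂, hy₂ℓ⟩
      · exact ⟨hy₃, hy₃ℓ⟩
    have h3 : ({y₁, y₂, y₃} : Set (Submodule K (Fin 4 → K))).ncard = 3 := by
      rw [Set.ncard_insert_of_notMem (by simp [h12, h13]) (Set.toFinite _),
        Set.ncard_pair h23]
    have := Set.ncard_le_ncard hsub (Set.toFinite _)
    omega
  set τ := {σ | IsTangent K S q σ ∧ ℓ ≤ σ}.ncard with hτdef
  have hτfil : (plF.filter (fun σ => IsTangent K S q σ)).card = τ := by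
    rw [hτdef, Set.ncard_eq_toFinset_card']
    congr 1
    ext σ
    simp only [Finset.mem_filter, hplF, Set.mem_toFinset, Set.mem_setOf_eq]
    constructor
    · rintro ⟨⟨h1', h2'⟩, h3⟩; exact ⟨h3, h2'⟩
    · rintro ⟨h3, h2'⟩; exact ⟨⟨h3.1, h2'⟩, h3⟩
  have hτle : τ ≤ q + 1 := by
    rw [← hτfil, ← hplCard]
    exact Finset.card_filter_le _ _
  have hsplit : ∑ σ ∈ plF, (if IsTangent K S q σ then q else r)
      = τ * q + (q + 1 - τ) * r := by
    rw [← Finset.sum_filter_add_sum_filter_not plF (fun σ => IsTangent K S q σ)]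
    have e1 : ∑ σ ∈ plF.filter (fun σ => IsTangent K S q σ),
        (if IsTangent K S q σ then q else r) = τ * q := by
      rw [Finset.sum_congr rfl (fun σ hσ => if_pos (Finset.mem_filter.mp hσ).2),
        Finset.sum_const, smul_eq_mul, hτfil]
    have e2 : ∑ σ ∈ plF.filter (fun σ => ¬ IsTangent K S q σ),
        (if IsTangent K S q σ then q else r) = (q + 1 - τ) * r := by
      rw [Finset.sum_congr rfl (fun σ hσ => if_neg (Finset.mem_filter.mp hσ).2),
        Finset.sum_const, smul_eq_mul]
      congr 1
      have := Finset.card_filter_add_card_filter_not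
        (s := plF) (p := fun σ => IsTangent K S q σ)
      omega
    omega
  rw [hsplit] at hsumlow
  have hτ3 : 3 ≤ τ := by omega
  have hA : q * (q + 1) / 2 = (2 * r + 1) * (r + 1) := by rw [hr]; exact half_mul r
  rw [hA] at hsumlow
  obtain ⟨d, hd⟩ : ∃ d, q + 1 = τ + d := ⟨q + 1 - τ, by omega⟩
  have hsub : q + 1 - τ = d := by omega
  rw [hsub] at hsumlow
  obtain ⟨t, ht⟩ : ∃ t, τ = t + 3 := ⟨τ - 3, by omega⟩
  rw [ht] at hsumlow hd
  have htd : t + d + 1 = 2 * r := by omega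
  have e3 : (t + 3) * q + d * r = t * (2 * r + 1) + d * r + (6 * r + 3) := by
    rw [hr]; ring
  rw [e3] at hsumlow
  have e4 : t * r ≤ t * (2 * r + 1) := Nat.mul_le_mul_left t (by omega)
  have e5 : t * r + d * r + r = 2 * (r * r) := by
    have h' : (t + d + 1) * r = t * r + d * r + r := by ring
    rw [← h', htd]; ring
  have e6 : (2 * r + 1) * (r + 1) + q = 2 * (r * r) + 5 * r + 2 := by rw [hr]; ring
  have : 2 * (r * r) + 5 * r + 3 ≤ 2 * (r * r) + 5 * r + 2 := by
    calc 2 * (r * r) + 5 * r + 3 = t * r + d * r + (6 * r + 3) := by omega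
    _ ≤ t * (2 * r + 1) + d * r + (6 * r + 3) := by omega
    _ ≤ (2 * r + 1) * (r + 1) + q := hsumlow
    _ = 2 * (r * r) + 5 * r + 2 := e6
  omega

/-- every plane through an entirely black S-line is tangent -/
lemma allblack_Sline_plane_tangent (hq : Fintype.card K = q) (hq_odd : Odd q)
    (hS : S ⊆ pgLine K) (h2 : P2 K S q) (h2a : P2a K S q) (h2b : P2b K S q)
    {ℓ : Submodule K (Fin 4 → K)} (hlS : ℓ ∈ S)
    (hall : ∀ y, y ∈ pgPoint K → y ≤ ℓ → IsBlack K S q y)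
    {σ : Submodule K (Fin 4 → K)} (hσ : σ ∈ pgPlane K) (hlσ : ℓ ≤ σ) :
    IsTangent K S q σ := by
  classical
  have hl : ℓ ∈ pgLine K := hS hlS
  have hsum := sum_pts_pencil_S hS hσ hlσ hlS
  have hval : ∀ x ∈ (pts ℓ).toFinset, (pencilS K S x σ).ncard = q := by
    intro x hx
    rw [Set.mem_toFinset] at hx
    obtain ⟨hxpt, hxℓ⟩ := hx
    have hxB := hall x hxpt hxℓ
    obtain ⟨σx, hσxT, hxσx, hiff⟩ := black_plane hq hq_odd hS h2 h2a h2b hxB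
    have hne : σ ≠ σx := by
      intro h
      subst h
      exact (hiff ℓ hl hxℓ).mpr hlσ hlS
    exact black_other_plane hq hq_odd hS hxB hσxT hxσx hiff hσ (le_trans hxℓ hlσ) hne
  rw [Finset.sum_congr rfl hval, Finset.sum_const, smul_eq_mul,
    ← Set.ncard_eq_toFinset_card', pts_line hl, hq] at hsum
  refine ⟨hσ, ?_⟩
  have e1 : (q + 1) * q = q ^ 2 + q := by ring
  omega

/-- a tangent plane cannot consist entirely of black points -/
lemma not_all_black (hq : Fintype.card K = q) (hq_odd : Odd q) (hS : S ⊆ pgLine K)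
    (h1 : P1 K S q) (h2 : P2 K S q) (h2a : P2a K S q) (h2b : P2b K S q)
    {π : Submodule K (Fin 4 → K)} (hT : IsTangent K S q π)
    (hall : ∀ y, y ∈ pgPoint K → y ≤ π → IsBlack K S q y) : False := by
  classical
  obtain ⟨r, hr, hr1⟩ := q_odd_facts hq hq_odd
  obtain ⟨w, hwpt, hwA⟩ := h1.2.1
  have hA : q * (q + 1) / 2 = (2 * r + 1) * (r + 1) := by rw [hr]; exact half_mul r
  have hwnb : ¬ IsBlack K S q w := by
    rintro ⟨_, hB⟩
    rw [hwA, hA, hr] at hB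
    have e1 : (2 * r + 1) ^ 2 = (2 * r + 1) * (2 * r + 1) := by ring
    rw [e1] at hB
    have := Nat.eq_of_mul_eq_mul_left (show 0 < 2 * r + 1 by omega) hB
    omega
  have hwπ : ¬ w ≤ π := fun h => hwnb (hall w hwpt h)
  have hsum := sum_pencil_pt hS hwpt
  rw [white_linesThru hq h1 hwpt hwnb, hq] at hsum
  -- image planes
  set f : Submodule K (Fin 4 → K) → Submodule K (Fin 4 → K) := fun ℓ => w ⊔ ℓ with hf
  have hinj : Set.InjOn f (linesIn K S π) := by
    have key : ∀ m : Submodule K (Fin 4 → K), m ∈ S → m ≤ π → m = f m ⊓ π := by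
      intro m hmS hmπ
      have hnle : ¬ w ≤ m := fun h => hwπ (le_trans h hmπ)
      have hplane : f m ∈ pgPlane K := sup_line_point_plane (hS hmS) hwpt hnle
      have hne : f m ≠ π := fun h => hwπ (h ▸ le_sup_left)
      exact line_le_plane_inf hplane hT.1 hne (hS hmS) le_sup_right hmπ
    rintro ℓ ⟨hℓS, hℓπ⟩ ℓ' ⟨hℓ'S, hℓ'π⟩ heq
    have h2' := key ℓ' hℓ'S hℓ'π
    rw [← heq] at h2'
    exact (key ℓ hℓS hℓπ).trans h2'.symm
  have hIcard : (f '' (linesIn K S π)).ncard = q ^ 2 := by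
    rw [Set.ncard_image_of_injOn hinj, hT.2]
  have hIsub : (f '' (linesIn K S π)).toFinset ⊆ {σ | σ ∈ pgPlane K ∧ w ≤ σ}.toFinset := by
    intro σ hσ
    rw [Set.mem_toFinset] at hσ ⊢
    obtain ⟨ℓ, ⟨hℓS, hℓπ⟩, rfl⟩ := hσ
    exact ⟨sup_line_point_plane (hS hℓS) hwpt (fun h => hwπ (le_trans h hℓπ)), le_sup_left⟩
  have hIval : ∀ σ ∈ (f '' (linesIn K S π)).toFinset, (pencilS K S w σ).ncard = q := by
    intro σ hσ
    rw [Set.mem_toFinset] at hσ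
    obtain ⟨ℓ, ⟨hℓS, hℓπ⟩, rfl⟩ := hσ
    have hTσ : IsTangent K S q (f ℓ) := by
      apply allblack_Sline_plane_tangent hq hq_odd hS h2 h2a h2b hℓS
      · intro y hy hyℓ
        exact hall y hy (le_trans hyℓ hℓπ)
      · exact sup_line_point_plane (hS hℓS) hwpt (fun h => hwπ (le_trans h hℓπ))
      · exact le_sup_right
    obtain ⟨u, hu, huniq⟩ := tangent_special_point hq hq_odd hS h2a hTσ
    have huB : IsBlack K S q u := sp_black hq hq_odd hS h1 h2 h2a h2b hTσ hu
    have hwne : w ≠ u := fun h => hwnb (h ▸ huB)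
    exact tangent_pencil_q hq hq_odd hS h2a hTσ hu hwpt le_sup_left hwne
  have hlower : q ^ 2 * q ≤ ∑ σ ∈ {σ | σ ∈ pgPlane K ∧ w ≤ σ}.toFinset,
      (pencilS K S w σ).ncard := by
    calc q ^ 2 * q = ∑ σ ∈ (f '' (linesIn K S π)).toFinset, (pencilS K S w σ).ncard := by
          rw [Finset.sum_congr rfl hIval, Finset.sum_const, smul_eq_mul,
            ← Set.ncard_eq_toFinset_card', hIcard]
    _ ≤ _ := Finset.sum_le_sum_of_subset hIsub
  rw [hsum, hA, hr] at hlower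
  have e1 : (2 * r + 1) ^ 2 * (2 * r + 1)
      = 8 * (r * r * r) + 12 * (r * r) + 6 * r + 1 := by ring
  have e2 : (2 * r + 1 + 1) * ((2 * r + 1) * (r + 1))
      = 4 * (r * r * r) + 10 * (r * r) + 8 * r + 2 := by ring
  rw [e1, e2] at hlower
  have e3 : r ≤ r * r := Nat.le_mul_of_pos_left r (by omega)
  have e4 : r * r ≤ r * r * r := Nat.le_mul_of_pos_right (r * r) (by omega)
  omega

end Aux19

namespace Aux19
open Module
open scoped Classical
set_option linter.unusedSectionVars false
set_option linter.unusedVariables false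
set_option maxHeartbeats 1000000

variable {K : Type} [Field K] [Fintype K] {S : Set (Submodule K (Fin 4 → K))} {q : ℕ}

lemma main (hq : Fintype.card K = q) (hq_odd : Odd q) (hS : S ⊆ pgLine K)
    (h1 : P1 K S q) (h2 : P2 K S q) (h2a : P2a K S q) (h2b : P2b K S q) :
    ∀ π, IsTangent K S q π →
      (∃ l ∈ pgLine K, l ≤ π ∧
        {p | IsBlack K S q p ∧ p ≤ π} = {p | p ∈ pgPoint K ∧ p ≤ l}) ∨
      (∃ l ∈ pgLine K, ∃ l' ∈ pgLine K, l ≠ l' ∧ l ≤ π ∧ l' ≤ π ∧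
        {p | IsBlack K S q p ∧ p ≤ π} =
          {p | p ∈ pgPoint K ∧ p ≤ l} ∪ {p | p ∈ pgPoint K ∧ p ≤ l'}) := by
  classical
  intro π hT
  obtain ⟨r, hr, hr1⟩ := q_odd_facts hq hq_odd
  obtain ⟨p₀, hp₀, hp₀uniq⟩ := tangent_special_point hq hq_odd hS h2a hT
  have hp₀B : IsBlack K S q p₀ := sp_black hq hq_odd hS h1 h2 h2a h2b hT hp₀
  have hπ : π ∈ pgPlane K := hT.1
  have hiffπ := tangent_lines_iff hq hq_odd hS h2a hT hp₀
  -- every line of S inside π carries a black point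
  have hblack_on : ∀ ℓ, ℓ ∈ S → ℓ ≤ π → ∃ x, IsBlack K S q x ∧ x ≤ ℓ := by
    intro ℓ hℓS hℓπ
    have h := star hq hq_odd hS h1 h2 (hS hℓS)
    have hne : {σ | IsTangent K S q σ ∧ ℓ ≤ σ}.Nonempty := ⟨π, hT, hℓπ⟩
    have hpos := (Set.ncard_pos (Set.toFinite _)).mpr hne
    rw [← h] at hpos
    exact (Set.ncard_pos (Set.toFinite _)).mp hpos
  have hSπne : ∃ ℓ, ℓ ∈ S ∧ ℓ ≤ π := by
    have : (linesIn K S π).Nonempty := by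
      rw [← Set.ncard_pos (Set.toFinite _), hT.2]
      exact pow_pos (by omega : 0 < q) 2
    obtain ⟨ℓ, hℓ⟩ := this
    exact ⟨ℓ, hℓ.1, hℓ.2⟩
  set Full := {ℓ | ℓ ∈ pgLine K ∧ ℓ ≤ π ∧ p₀ ≤ ℓ ∧
    ∃ y, IsBlack K S q y ∧ y ≤ ℓ ∧ y ≠ p₀} with hFull
  have claim_all : ∀ ℓ ∈ Full, ∀ y, y ∈ pgPoint K → y ≤ ℓ → IsBlack K S q y := by
    rintro ℓ ⟨hℓL, hℓπ, hp₀ℓ, y₀, hy₀B, hy₀ℓ, hy₀ne⟩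
    have hℓS : ℓ ∉ S := fun h => (hiffπ ℓ hℓL hℓπ).mp h hp₀ℓ
    exact nonS_line_allblack hq hq_odd hS h1 h2 h2a h2b hℓL hℓS hp₀B hp₀ℓ hy₀B hy₀ℓ
      (Ne.symm hy₀ne)
  have claim_mem : ∀ y, IsBlack K S q y → y ≤ π → y ≠ p₀ →
      (y ⊔ p₀) ∈ Full ∧ y ≤ y ⊔ p₀ := by
    intro y hyB hyπ hyne
    refine ⟨⟨sup_points_line hyB.1 hp₀.1 hyne, sup_le hyπ hp₀.2.1, le_sup_right,
      y, hyB, le_sup_left, hyne⟩, le_sup_left⟩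
  have claim_ex : ∃ ℓ₁, ℓ₁ ∈ Full := by
    obtain ⟨ℓ, hℓS, hℓπ⟩ := hSπne
    obtain ⟨x, hxB, hxℓ⟩ := hblack_on ℓ hℓS hℓπ
    have hxne : x ≠ p₀ := by
      intro h
      subst h
      exact (hiffπ ℓ (hS hℓS) hℓπ).mp hℓS hxℓ
    exact ⟨x ⊔ p₀, (claim_mem x hxB (le_trans hxℓ hℓπ) hxne).1⟩
  have claim_le2 : ∀ ℓa ∈ Full, ∀ ℓb ∈ Full, ∀ ℓc ∈ Full,
      ℓa = ℓb ∨ ℓa = ℓc ∨ ℓb = ℓc := by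
    intro ℓa hℓa ℓb hℓb ℓc hℓc
    by_contra hcon
    push_neg at hcon
    obtain ⟨hab, hac, hbc⟩ := hcon
    -- every S-line of π is entirely black
    have hSall : ∀ ℓ, ℓ ∈ S → ℓ ≤ π → ∀ y, y ∈ pgPoint K → y ≤ ℓ → IsBlack K S q y := by
      intro ℓ hℓS hℓπ
      have hℓL : ℓ ∈ pgLine K := hS hℓS
      have hℓnp₀ : ¬ p₀ ≤ ℓ := (hiffπ ℓ hℓL hℓπ).mp hℓS
      have mkpt : ∀ ℓi, ℓi ∈ Full → (ℓ ⊓ ℓi) ∈ pgPoint K ∧ IsBlack K S q (ℓ ⊓ ℓi) := by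
        intro ℓi hℓi
        have hne : ℓ ≠ ℓi := by
          intro h
          rw [h] at hℓnp₀
          exact hℓnp₀ hℓi.2.2.1
        have hpt := lines_in_plane_meet hℓL hℓi.1 hne hπ hℓπ hℓi.2.1
        exact ⟨hpt, claim_all ℓi hℓi _ hpt inf_le_right⟩
      have hdist : ∀ ℓi, ℓi ∈ Full → ∀ ℓj, ℓj ∈ Full → ℓi ≠ ℓj → ℓ ⊓ ℓi ≠ ℓ ⊓ ℓj := by
        intro ℓi hℓi ℓj hℓj hneij heq
        have hpti := (mkpt ℓi hℓi).1
        have hinf : ℓi ⊓ ℓj = p₀ :=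
          line_inf_point hℓi.1 hℓj.1 hneij hp₀.1 hℓi.2.2.1 hℓj.2.2.1
        have hle : ℓ ⊓ ℓi ≤ p₀ := by
          rw [← hinf]
          apply le_inf inf_le_right
          rw [heq]
          exact inf_le_right
        have : ℓ ⊓ ℓi = p₀ := point_le_point hpti hp₀.1 hle
        apply hℓnp₀
        rw [← this]
        exact inf_le_left
      obtain ⟨hpa, hBa⟩ := mkpt ℓa hℓa
      obtain ⟨hpb, hBb⟩ := mkpt ℓb hℓb
      obtain ⟨hpc, hBc⟩ := mkpt ℓc hℓc
      exact Sline_allblack hq hq_odd hS h1 h2 h2a h2b hℓS hBa inf_le_left hBb inf_le_left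
        hBc inf_le_left (hdist ℓa hℓa ℓb hℓb hab) (hdist ℓa hℓa ℓc hℓc hac)
        (hdist ℓb hℓb ℓc hℓc hbc)
    have hallπ : ∀ y, y ∈ pgPoint K → y ≤ π → IsBlack K S q y := by
      intro y hypt hyπ
      by_cases hy : y = p₀
      · subst hy; exact hp₀B
      · have hqval : (pencilS K S y π).ncard = q :=
          tangent_pencil_q hq hq_odd hS h2a hT hp₀ hypt hyπ hy
        have hne : (pencilS K S y π).Nonempty := by
          rw [← Set.ncard_pos (Set.toFinite _), hqval]
          omega
        obtain ⟨m, hmS, hym, hmπ⟩ := hne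
        exact hSall m hmS hmπ y hypt hym
    exact not_all_black hq hq_odd hS h1 h2 h2a h2b hT hallπ
  obtain ⟨ℓ₁, hℓ₁⟩ := claim_ex
  by_cases hcase : ∀ ℓ ∈ Full, ℓ = ℓ₁
  · left
    refine ⟨ℓ₁, hℓ₁.1, hℓ₁.2.1, ?_⟩
    ext y
    simp only [Set.mem_setOf_eq]
    constructor
    · rintro ⟨hyB, hyπ⟩
      refine ⟨hyB.1, ?_⟩
      by_cases hy : y = p₀
      · subst hy; exact hℓ₁.2.2.1
      · obtain ⟨hmem, hle⟩ := claim_mem y hyB hyπ hy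
        rw [hcase _ hmem] at hle
        exact hle
    · rintro ⟨hypt, hyle⟩
      exact ⟨claim_all ℓ₁ hℓ₁ y hypt hyle, le_trans hyle hℓ₁.2.1⟩
  · right
    push_neg at hcase
    obtain ⟨ℓ₂, hℓ₂, hne21⟩ := hcase
    refine ⟨ℓ₁, hℓ₁.1, ℓ₂, hℓ₂.1, fun h => hne21 h.symm, hℓ₁.2.1, hℓ₂.2.1, ?_⟩
    ext y
    simp only [Set.mem_setOf_eq, Set.mem_union]
    constructor
    · rintro ⟨hyB, hyπ⟩
      by_cases hy : y = p₀
      · subst hy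
        exact Or.inl ⟨hp₀.1, hℓ₁.2.2.1⟩
      · obtain ⟨hmem, hle⟩ := claim_mem y hyB hyπ hy
        rcases claim_le2 _ hmem ℓ₁ hℓ₁ ℓ₂ hℓ₂ with h | h | h
        · rw [h] at hle
          exact Or.inl ⟨hyB.1, hle⟩
        · rw [h] at hle
          exact Or.inr ⟨hyB.1, hle⟩
        · exact absurd h.symm hne21
    · rintro (⟨hypt, hyle⟩ | ⟨hypt, hyle⟩)
      · exact ⟨claim_all ℓ₁ hℓ₁ y hypt hyle, le_trans hyle hℓ₁.2.1⟩
      · exact ⟨claim_all ℓ₂ hℓ₂ y hypt hyle, le_trans hyle hℓ₂.2.1⟩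

end Aux19


/-- For every tangent plane `π`, the set of black points of `π`
is either the point set of a single line of `π` or the union of the point sets
of two distinct lines of `π`. -/
theorem stmt_19 (K : Type) [Field K] [Fintype K] (q : ℕ) (hq : Fintype.card K = q)
    (hq_odd : Odd q) (S : Set (Submodule K (Fin 4 → K))) (hS : S ⊆ pgLine K)
    (h1 : P1 K S q) (h2 : P2 K S q) (h2a : P2a K S q) (h2b : P2b K S q) :
    ∀ π, IsTangent K S q π →
      (∃ l ∈ pgLine K, l ≤ π ∧
        {p | IsBlack K S q p ∧ p ≤ π} = {p | p ∈ pgPoint K ∧ p ≤ l}) ∨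
      (∃ l ∈ pgLine K, ∃ l' ∈ pgLine K, l ≠ l' ∧ l ≤ π ∧ l' ≤ π ∧
        {p | IsBlack K S q p ∧ p ≤ π} =
          {p | p ∈ pgPoint K ∧ p ≤ l} ∪ {p | p ∈ pgPoint K ∧ p ≤ l'}) :=
  Aux19.main hq hq_odd hS h1 h2 h2a h2b
end
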